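/- arXiv:1103.1768 — 10 statements merged into one kernel-verified Lean document; each statement's English description precedes it below -/
import Mathlib

section
/- Let y₁,…,y_n ∈ ℝ^m and set S := (1/n) Σ_{i=1}^n y_i y_iᵀ. Then for every (L,D) ∈ Θ_G, the product of the multivariate Gaussian densities with mean 0 and covariance LDLᵀ evaluated at y₁,…,y_n times the prior kernel equals (2π)^{−nm/2} times the posterior kernel with updated parameters; explicitly, ∏_{i=1}^n [(2π)^{−m/2} det(LDLᵀ)^{−1/2} exp(−y_iᵀ(LDLᵀ)⁻¹y_i/2)] · π̃_{U,α}(L,D) = (2π)^{−nm/2} · π̃_{nS+U, (α₁+n,…,α_m+n)}(L,D). -/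
open Matrix

/-- conjugacy identity. For `(L, D) ∈ Θ_G`, with `Σ = L D Lᵀ`,
`S = (1/n) Σᵢ yᵢ yᵢᵀ` and prior kernel
`π̃_{U,α}(L,D) = exp(−(tr(Σ⁻¹U) + Σᵢ αᵢ log Dᵢᵢ)/2)`, one has
`∏ᵢ [(2π)^{−m/2} det(Σ)^{−1/2} exp(−yᵢᵀΣ⁻¹yᵢ/2)] ⬝ π̃_{U,α}(L,D)
  = (2π)^{−nm/2} ⬝ π̃_{nS+U, α+n}(L,D)`. -/
theorem stmt_2 {m n : ℕ} (hm : 0 < m) (hn : 0 < n)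
    (E : Finset (Fin m × Fin m))
    (hsymm : ∀ i j : Fin m, (i, j) ∈ E → (j, i) ∈ E)
    (hirr : ∀ i : Fin m, (i, i) ∉ E)
    (L : Matrix (Fin m) (Fin m) ℝ)
    (hlow : ∀ i j : Fin m, i < j → L i j = 0)
    (hdiag : ∀ i : Fin m, L i i = 1)
    (hLG : ∀ i j : Fin m, j < i → (i, j) ∉ E → L i j = 0)
    (d : Fin m → ℝ) (hd : ∀ i, 0 < d i)
    (U : Matrix (Fin m) (Fin m) ℝ) (hU : U.PosDef)
    (α : Fin m → ℝ)
    (y : Fin n → Fin m → ℝ) :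
    (∏ i : Fin n,
        ((2 * Real.pi) ^ (-(m : ℝ) / 2) *
          (L * Matrix.diagonal d * Lᵀ).det ^ (-(1 : ℝ) / 2) *
          Real.exp (-(y i ⬝ᵥ ((L * Matrix.diagonal d * Lᵀ)⁻¹ *ᵥ y i)) / 2))) *
      Real.exp (-(Matrix.trace ((L * Matrix.diagonal d * Lᵀ)⁻¹ * U) +
          ∑ i : Fin m, α i * Real.log (d i)) / 2)
    = (2 * Real.pi) ^ (-((n : ℝ) * (m : ℝ)) / 2) *
      Real.exp (-(Matrix.trace ((L * Matrix.diagonal d * Lᵀ)⁻¹ *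
            ((n : ℝ) • ((n : ℝ)⁻¹ • ∑ i : Fin n, vecMulVec (y i) (y i)) + U)) +
          ∑ i : Fin m, (α i + (n : ℝ)) * Real.log (d i)) / 2) := by
  have hP : 0 < ∏ i, d i := Finset.prod_pos (fun i _ => hd i)
  set A := (L * Matrix.diagonal d * Lᵀ)⁻¹ with hA
  have hdetL : L.det = 1 := by
    rw [Matrix.det_of_lowerTriangular L (fun i j h => hlow i j h)]
    simp [hdiag]
  have hdet : (L * Matrix.diagonal d * Lᵀ).det = ∏ i, d i := by
    rw [Matrix.det_mul, Matrix.det_mul, Matrix.det_transpose, hdetL,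
      Matrix.det_diagonal, one_mul, mul_one]
  have htr : ∀ v : Fin m → ℝ, v ⬝ᵥ (A *ᵥ v) = Matrix.trace (A * Matrix.vecMulVec v v) := by
    intro v
    simp only [Matrix.trace, Matrix.diag, Matrix.mul_apply, Matrix.vecMulVec_apply,
      dotProduct, Matrix.mulVec, Finset.mul_sum]
    exact Finset.sum_congr rfl fun i _ => Finset.sum_congr rfl fun j _ => by ring
  have hnne : (n : ℝ) ≠ 0 := Nat.cast_ne_zero.mpr hn.ne'
  have hsmul : (n : ℝ) • ((n : ℝ)⁻¹ • ∑ i : Fin n, Matrix.vecMulVec (y i) (y i))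
      = ∑ i : Fin n, Matrix.vecMulVec (y i) (y i) := by
    rw [smul_smul, mul_inv_cancel₀ hnne, one_smul]
  have htr2 : Matrix.trace (A * ((n : ℝ) • ((n : ℝ)⁻¹ •
        ∑ i : Fin n, Matrix.vecMulVec (y i) (y i)) + U))
      = (∑ i : Fin n, y i ⬝ᵥ (A *ᵥ y i)) + Matrix.trace (A * U) := by
    rw [hsmul, Matrix.mul_add, Matrix.trace_add, Finset.mul_sum, Matrix.trace_sum]
    simp [htr]
  have h2pi : (0:ℝ) < 2 * Real.pi := by positivity
  -- rewrite the product
  rw [Finset.prod_mul_distrib, Finset.prod_mul_distrib, Finset.prod_const,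
    Finset.prod_const, ← Real.exp_sum, hdet]
  simp only [Finset.card_univ, Fintype.card_fin]
  have hc : ((2 * Real.pi) ^ (-(m : ℝ) / 2)) ^ n
      = (2 * Real.pi) ^ (-((n : ℝ) * (m : ℝ)) / 2) := by
    rw [← Real.rpow_natCast ((2 * Real.pi) ^ (-(m : ℝ) / 2)) n,
      ← Real.rpow_mul h2pi.le]
    ring_nf
  have hb : ((∏ i, d i) ^ (-(1:ℝ) / 2)) ^ n
      = Real.exp (-((n : ℝ) * ∑ i, Real.log (d i)) / 2) := by
    rw [← Real.rpow_natCast ((∏ i, d i) ^ (-(1:ℝ) / 2)) n, ← Real.rpow_mul hP.le,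
      Real.rpow_def_of_pos hP, Real.log_prod (fun i _ => (hd i).ne')]
    ring_nf
  rw [hc, hb, htr2]
  rw [mul_assoc, mul_assoc, ← Real.exp_add, ← Real.exp_add]
  congr 1
  have : ∑ i : Fin m, (α i + (n : ℝ)) * Real.log (d i)
      = (∑ i, α i * Real.log (d i)) + (n : ℝ) * ∑ i, Real.log (d i) := by
    rw [Finset.mul_sum, ← Finset.sum_add_distrib]
    exact Finset.sum_congr rfl fun i _ => by ring
  rw [this]
  congr 1
  simp only [neg_div, Finset.sum_neg_distrib, ← Finset.sum_div]
  ring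
end

section
/- Let L be an m×m real unit lower-triangular matrix, D an m×m diagonal matrix with all D_{ii} > 0, U an m×m real symmetric matrix, and fix u, u′ > v. Then the mixed second partial derivative at (s,t) = (0,0) of the function h(s,t) := tr(((L + s·E_{uv} + t·E_{u′v}) D (L + s·E_{uv} + t·E_{u′v})ᵀ)⁻¹ U) equals 2 (L⁻¹ U (Lᵀ)⁻¹)_{vv} · ((LDLᵀ)⁻¹)_{uu′}. -/
open Matrix

lemma sb_mul_sb {m : ℕ} (X : Matrix (Fin m) (Fin m) ℝ) (i j k l : Fin m) :
    single i j (1:ℝ) * X * single k l 1 = X j k • single i l 1 := by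
  ext a b
  simp [Matrix.mul_apply, Matrix.single, ite_and, Finset.sum_ite_eq, Finset.sum_ite_eq',
    Matrix.smul_apply, mul_comm]
  split_ifs <;> simp

lemma trace_sb {m : ℕ} (W : Matrix (Fin m) (Fin m) ℝ) (i j : Fin m) :
    Matrix.trace (single i j (1:ℝ) * W) = W j i := by
  simp [Matrix.trace, Matrix.diag, Matrix.mul_apply, Matrix.single, ite_and,
    Finset.sum_ite_eq, Finset.sum_ite_eq']

lemma sb_transpose {m : ℕ} (i j : Fin m) :
    (single i j (1:ℝ))ᵀ = single j i 1 := by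
  ext a b; simp [Matrix.single, and_comm]

lemma deriv_quad (a b c : ℝ) : deriv (fun t : ℝ => a + b * t + c * t ^ 2) 0 = b := by
  have h : HasDerivAt (fun t : ℝ => a + b * t + c * t ^ 2) (0 + b * 1 + c * (2 * 0 ^ 1)) 0 :=
    ((hasDerivAt_const 0 a).add ((hasDerivAt_id 0).const_mul b)).add
      ((hasDerivAt_pow 2 0).const_mul c)
  simpa using h.deriv

lemma deriv_lin (a b : ℝ) : deriv (fun s : ℝ => a + b * s) 0 = b := by
  have h : HasDerivAt (fun s : ℝ => a + b * s) (0 + b * 1) 0 :=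
    (hasDerivAt_const 0 a).add ((hasDerivAt_id 0).const_mul b)
  simpa using h.deriv

lemma expand_trace {m : ℕ} (C Di A B W : Matrix (Fin m) (Fin m) ℝ) (s t : ℝ) :
    Matrix.trace ((C - s • A - t • B)ᵀ * Di * ((C - s • A - t • B) * W)) =
    (Matrix.trace (Cᵀ * (Di * (C * W)))
      - (Matrix.trace (Aᵀ * (Di * (C * W))) + Matrix.trace (Cᵀ * (Di * (A * W)))) * s
      + Matrix.trace (Aᵀ * (Di * (A * W))) * s ^ 2)
    + (-(Matrix.trace (Bᵀ * (Di * (C * W))) + Matrix.trace (Cᵀ * (Di * (B * W))))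
       + (Matrix.trace (Aᵀ * (Di * (B * W))) + Matrix.trace (Bᵀ * (Di * (A * W)))) * s) * t
    + Matrix.trace (Bᵀ * (Di * (B * W))) * t ^ 2 := by
  simp only [Matrix.transpose_sub, Matrix.transpose_smul, Matrix.sub_mul, Matrix.mul_sub,
    Matrix.smul_mul, Matrix.mul_smul, Matrix.trace_sub, Matrix.trace_smul, smul_eq_mul,
    smul_smul, Matrix.mul_assoc]
  ring

/-- the mixed second partial derivative at `(s,t) = (0,0)` of
`h(s,t) = tr(((L + sE_{uv} + tE_{u'v}) D (L + sE_{uv} + tE_{u'v})ᵀ)⁻¹ U)` equals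
`2 (L⁻¹ U (Lᵀ)⁻¹)_{vv} ((LDLᵀ)⁻¹)_{uu'}`. -/
theorem stmt_5 {m : ℕ} (hm : 0 < m) (L : Matrix (Fin m) (Fin m) ℝ)
    (hlow : ∀ i j : Fin m, i < j → L i j = 0)
    (hdiag : ∀ i : Fin m, L i i = 1)
    (d : Fin m → ℝ) (hd : ∀ i, 0 < d i)
    (U : Matrix (Fin m) (Fin m) ℝ) (hUsymm : U.IsSymm)
    (u u' v : Fin m) (hu : v < u) (hu' : v < u') :
    deriv (fun s : ℝ => deriv (fun t : ℝ =>
        Matrix.trace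
          (((L + s • Matrix.single u v (1 : ℝ) +
                t • Matrix.single u' v (1 : ℝ)) * Matrix.diagonal d *
              (L + s • Matrix.single u v (1 : ℝ) +
                t • Matrix.single u' v (1 : ℝ))ᵀ)⁻¹ * U)) 0) 0
      = 2 * ((L⁻¹ * U * (Lᵀ)⁻¹) v v) * ((L * Matrix.diagonal d * Lᵀ)⁻¹) u u' := by
  classical
  have hLtri : L.BlockTriangular OrderDual.toDual := fun i j h => hlow i j h
  have hLdet : L.det = 1 := by
    rw [Matrix.det_of_lowerTriangular L hLtri]; simp [hdiag]
  have hLunit : IsUnit L.det := by rw [hLdet]; exact isUnit_one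
  haveI : Invertible L := L.invertibleOfIsUnitDet hLunit
  set C := L⁻¹ with hC
  have hLC : L * C = 1 := Matrix.mul_nonsing_inv L hLunit
  have hCL : C * L = 1 := Matrix.nonsing_inv_mul L hLunit
  have hCtri : C.BlockTriangular OrderDual.toDual := by
    have h := Matrix.blockTriangular_inv_of_blockTriangular hLtri
    rw [← hC] at h; exact h
  have hCvu : C v u = 0 := hCtri (by simpa using hu)
  have hCvu' : C v u' = 0 := hCtri (by simpa using hu')
  set E := single u v (1 : ℝ) with hE
  set F := single u' v (1 : ℝ) with hF
  set Dinv := Matrix.diagonal (fun i => (d i)⁻¹) with hDinv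
  have hDD : Matrix.diagonal d * Dinv = 1 := by
    rw [hDinv, Matrix.diagonal_mul_diagonal]
    have h : (fun i => d i * (d i)⁻¹) = fun _ => (1:ℝ) :=
      funext fun i => mul_inv_cancel₀ (hd i).ne'
    rw [h, Matrix.diagonal_one]
  have hECE : E * C * E = 0 := by rw [hE, sb_mul_sb, hCvu, zero_smul]
  have hECF : E * C * F = 0 := by rw [hE, hF, sb_mul_sb, hCvu', zero_smul]
  have hFCE : F * C * E = 0 := by rw [hE, hF, sb_mul_sb, hCvu, zero_smul]
  have hFCF : F * C * F = 0 := by rw [hF, sb_mul_sb, hCvu', zero_smul]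
  set A := C * E with hA
  set B := C * F with hB
  have hinv : ∀ s t : ℝ,
      ((L + s • E + t • F) * Matrix.diagonal d * (L + s • E + t • F)ᵀ)⁻¹
        = (C - s • (A * C) - t • (B * C))ᵀ * Dinv * (C - s • (A * C) - t • (B * C)) := by
    intro s t
    set M := L + s • E + t • F with hM
    set P := C - s • (A * C) - t • (B * C) with hP
    have h1 : L * (A * C) = E * C := by
      rw [hA, ← Matrix.mul_assoc, ← Matrix.mul_assoc, hLC, Matrix.one_mul]
    have h2 : L * (B * C) = F * C := by
      rw [hB, ← Matrix.mul_assoc, ← Matrix.mul_assoc, hLC, Matrix.one_mul]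
    have h3 : E * (A * C) = 0 := by
      rw [hA, ← Matrix.mul_assoc, ← Matrix.mul_assoc, hECE, Matrix.zero_mul]
    have h4 : E * (B * C) = 0 := by
      rw [hB, ← Matrix.mul_assoc, ← Matrix.mul_assoc, hECF, Matrix.zero_mul]
    have h5 : F * (A * C) = 0 := by
      rw [hA, ← Matrix.mul_assoc, ← Matrix.mul_assoc, hFCE, Matrix.zero_mul]
    have h6 : F * (B * C) = 0 := by
      rw [hB, ← Matrix.mul_assoc, ← Matrix.mul_assoc, hFCF, Matrix.zero_mul]
    have hMP : M * P = 1 := by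
      have hexp : M * P = (L * C - s • (L * (A * C)) - t • (L * (B * C)))
          + (s • (E * C) - (s*s) • (E * (A * C)) - (s*t) • (E * (B * C)))
          + (t • (F * C) - (t*s) • (F * (A * C)) - (t*t) • (F * (B * C))) := by
        rw [hM, hP]
        simp only [Matrix.add_mul, Matrix.mul_sub, Matrix.smul_mul, Matrix.mul_smul, smul_smul,
          smul_add, smul_sub]
        module
      rw [hexp, h1, h2, h3, h4, h5, h6, hLC]
      simp only [smul_zero, sub_zero]
      module
    have hPM : P * M = 1 := mul_eq_one_comm.mp hMP
    have hMtPt : Mᵀ * Pᵀ = 1 := by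
      rw [← Matrix.transpose_mul, hPM, Matrix.transpose_one]
    refine Matrix.inv_eq_right_inv ?_
    calc M * Matrix.diagonal d * Mᵀ * (Pᵀ * Dinv * P)
        = M * (Matrix.diagonal d * ((Mᵀ * Pᵀ) * (Dinv * P))) := by
          simp only [Matrix.mul_assoc]
      _ = M * (Matrix.diagonal d * (Dinv * P)) := by rw [hMtPt, Matrix.one_mul]
      _ = M * (Matrix.diagonal d * Dinv * P) := by simp only [Matrix.mul_assoc]
      _ = M * P := by rw [hDD, Matrix.one_mul]
      _ = 1 := hMP
  have hfun : ∀ s t : ℝ,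
      Matrix.trace (((L + s • E + t • F) * Matrix.diagonal d * (L + s • E + t • F)ᵀ)⁻¹ * U)
      = (Matrix.trace (Cᵀ * (Dinv * (C * U)))
          - (Matrix.trace ((A*C)ᵀ * (Dinv * (C * U)))
             + Matrix.trace (Cᵀ * (Dinv * ((A*C) * U)))) * s
          + Matrix.trace ((A*C)ᵀ * (Dinv * ((A*C) * U))) * s ^ 2)
        + (-(Matrix.trace ((B*C)ᵀ * (Dinv * (C * U)))
             + Matrix.trace (Cᵀ * (Dinv * ((B*C) * U))))
           + (Matrix.trace ((A*C)ᵀ * (Dinv * ((B*C) * U)))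
              + Matrix.trace ((B*C)ᵀ * (Dinv * ((A*C) * U)))) * s) * t
        + Matrix.trace ((B*C)ᵀ * (Dinv * ((B*C) * U))) * t ^ 2 := by
    intro s t
    rw [hinv s t, Matrix.mul_assoc]
    exact expand_trace C Dinv (A*C) (B*C) U s t
  simp only [hfun, deriv_quad, deriv_lin]
  have htr : Matrix.trace (Cᵀ * (single v v (1:ℝ) * (C * U))) = (C * U * Cᵀ) v v := by
    rw [Matrix.trace_mul_comm, Matrix.mul_assoc]
    exact trace_sb (C * U * Cᵀ) v v
  have ht1 : Matrix.trace ((A*C)ᵀ * (Dinv * ((B*C) * U)))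
      = (Cᵀ * Dinv * C) u u' * ((C * U * Cᵀ) v v) := by
    have hmid : Eᵀ * (Cᵀ * Dinv * C) * F
        = (Cᵀ * Dinv * C) u u' • single v v (1:ℝ) := by
      rw [hE, hF, sb_transpose]; exact sb_mul_sb _ v u u' v
    have hre : (A*C)ᵀ * (Dinv * ((B*C) * U))
        = Cᵀ * ((Eᵀ * (Cᵀ * Dinv * C) * F) * (C * U)) := by
      rw [hA, hB]; simp only [Matrix.transpose_mul, Matrix.mul_assoc]
    rw [hre, hmid, Matrix.smul_mul, Matrix.mul_smul, Matrix.trace_smul, smul_eq_mul,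
      Matrix.mul_assoc, htr]
  have ht2 : Matrix.trace ((B*C)ᵀ * (Dinv * ((A*C) * U)))
      = (Cᵀ * Dinv * C) u' u * ((C * U * Cᵀ) v v) := by
    have hmid : Fᵀ * (Cᵀ * Dinv * C) * E
        = (Cᵀ * Dinv * C) u' u • single v v (1:ℝ) := by
      rw [hE, hF, sb_transpose]; exact sb_mul_sb _ v u' u v
    have hre : (B*C)ᵀ * (Dinv * ((A*C) * U))
        = Cᵀ * ((Fᵀ * (Cᵀ * Dinv * C) * E) * (C * U)) := by
      rw [hA, hB]; simp only [Matrix.transpose_mul, Matrix.mul_assoc]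
    rw [hre, hmid, Matrix.smul_mul, Matrix.mul_smul, Matrix.trace_smul, smul_eq_mul,
      Matrix.mul_assoc, htr]
  have hGsymm : (Cᵀ * Dinv * C)ᵀ = Cᵀ * Dinv * C := by
    simp only [Matrix.transpose_mul, Matrix.transpose_transpose, hDinv,
      Matrix.diagonal_transpose, Matrix.mul_assoc]
  have hGsym : (Cᵀ * Dinv * C) u' u = (Cᵀ * Dinv * C) u u' := by
    conv_lhs => rw [← hGsymm]
    rw [Matrix.transpose_apply]
  have hGinv : (L * Matrix.diagonal d * Lᵀ)⁻¹ = Cᵀ * Dinv * C := by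
    refine Matrix.inv_eq_right_inv ?_
    have hLtCt : Lᵀ * Cᵀ = 1 := by
      rw [← Matrix.transpose_mul, hCL, Matrix.transpose_one]
    calc L * Matrix.diagonal d * Lᵀ * (Cᵀ * Dinv * C)
        = L * (Matrix.diagonal d * ((Lᵀ * Cᵀ) * (Dinv * C))) := by
          simp only [Matrix.mul_assoc]
      _ = L * (Matrix.diagonal d * (Dinv * C)) := by rw [hLtCt, Matrix.one_mul]
      _ = L * (Matrix.diagonal d * Dinv * C) := by simp only [Matrix.mul_assoc]
      _ = L * C := by rw [hDD, Matrix.one_mul]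
      _ = 1 := hLC
  have hLt : (Lᵀ)⁻¹ = Cᵀ := by rw [hC, Matrix.transpose_nonsing_inv]
  rw [ht1, ht2, hGsym, hGinv, hLt]
  ring
end

section
/- Let L and L̃ be m×m real unit lower-triangular matrices that agree in every entry except possibly in the entries of column v strictly below the diagonal (i.e., L_{ij} = L̃_{ij} whenever j ≠ v or i ≤ v). Let D be an m×m diagonal matrix with all D_{ii} > 0 and U an m×m real symmetric matrix. Then for all u, u′ > v: (L⁻¹ U (Lᵀ)⁻¹)_{vv} · ((LDLᵀ)⁻¹)_{uu′} = (L̃⁻¹ U (L̃ᵀ)⁻¹)_{vv} · ((L̃DL̃ᵀ)⁻¹)_{uu′}; that is, this quantity does not depend on the below-diagonal entries of column v. -/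
open Matrix

/-- if the unit lower-triangular matrices `L` and `L'` agree in every entry
except possibly the below-diagonal entries of column `v`, then for all `u, u' > v` the
quantity `(L⁻¹ U (Lᵀ)⁻¹)_{vv} ((LDLᵀ)⁻¹)_{uu'}` is unchanged when `L` is replaced by `L'`. -/
theorem stmt_6 {m : ℕ} (hm : 0 < m) (L L' : Matrix (Fin m) (Fin m) ℝ)
    (hlow : ∀ i j : Fin m, i < j → L i j = 0)
    (hdiag : ∀ i : Fin m, L i i = 1)
    (hlow' : ∀ i j : Fin m, i < j → L' i j = 0)
    (hdiag' : ∀ i : Fin m, L' i i = 1)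
    (v : Fin m)
    (hagree : ∀ i j : Fin m, (j ≠ v ∨ i ≤ v) → L i j = L' i j)
    (d : Fin m → ℝ) (hd : ∀ i, 0 < d i)
    (U : Matrix (Fin m) (Fin m) ℝ) (hUsymm : U.IsSymm)
    (u u' : Fin m) (hu : v < u) (hu' : v < u') :
    (L⁻¹ * U * (Lᵀ)⁻¹) v v * ((L * Matrix.diagonal d * Lᵀ)⁻¹) u u'
      = (L'⁻¹ * U * (L'ᵀ)⁻¹) v v * ((L' * Matrix.diagonal d * L'ᵀ)⁻¹) u u' := by
  -- basic facts about L and L'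
  have hbt : L.BlockTriangular OrderDual.toDual := fun i j h => hlow i j h
  have hbt' : L'.BlockTriangular OrderDual.toDual := fun i j h => hlow' i j h
  have hdet : L.det = 1 := by
    rw [Matrix.det_of_lowerTriangular L hbt]; simp [hdiag]
  have hdet' : L'.det = 1 := by
    rw [Matrix.det_of_lowerTriangular L' hbt']; simp [hdiag']
  have hdetu : IsUnit L.det := by simp [hdet]
  have hdetu' : IsUnit L'.det := by simp [hdet']
  haveI : Invertible L := L.invertibleOfIsUnitDet hdetu
  have hinvbt := Matrix.blockTriangular_inv_of_blockTriangular hbt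
  have hinvlow : ∀ i j : Fin m, i < j → L⁻¹ i j = 0 := fun i j h => hinvbt h
  -- row v of the inverses agree
  have key : ∀ k, (L⁻¹ * L') v k = (1 : Matrix (Fin m) (Fin m) ℝ) v k := by
    intro k
    have h1 : (L⁻¹ * L') v k = (L⁻¹ * L) v k := by
      simp only [mul_apply]
      refine Finset.sum_congr rfl fun j _ => ?_
      by_cases hk : k = v
      · rcases le_or_gt j v with hj | hj
        · rw [hagree j k (Or.inr hj)]
        · rw [hinvlow v j hj, zero_mul, zero_mul]
      · rw [hagree j k (Or.inl hk)]
    rw [h1, Matrix.nonsing_inv_mul L hdetu]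
  have rowv : ∀ j, L⁻¹ v j = L'⁻¹ v j := by
    intro j
    have h1 : L⁻¹ v j = ((L⁻¹ * L') * L'⁻¹) v j := by
      rw [mul_assoc, Matrix.mul_nonsing_inv L' hdetu', mul_one]
    rw [h1, mul_apply]
    have h2 : ∀ k ∈ Finset.univ, (L⁻¹ * L') v k * L'⁻¹ k j
        = (1 : Matrix (Fin m) (Fin m) ℝ) v k * L'⁻¹ k j := fun k _ => by rw [key k]
    rw [Finset.sum_congr rfl h2, ← mul_apply, one_mul]
  -- columns w > v of the inverses agree
  have keyc : ∀ w : Fin m, v < w → ∀ k, (L' * L⁻¹) k w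
      = (1 : Matrix (Fin m) (Fin m) ℝ) k w := by
    intro w hw k
    have h1 : (L' * L⁻¹) k w = (L * L⁻¹) k w := by
      simp only [mul_apply]
      refine Finset.sum_congr rfl fun j _ => ?_
      by_cases hj : j = v
      · subst hj; rw [hinvlow j w hw, mul_zero, mul_zero]
      · rw [hagree k j (Or.inl hj)]
    rw [h1, Matrix.mul_nonsing_inv L hdetu]
  have colu : ∀ w : Fin m, v < w → ∀ k, L⁻¹ k w = L'⁻¹ k w := by
    intro w hw k
    have h1 : L⁻¹ k w = (L'⁻¹ * (L' * L⁻¹)) k w := by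
      rw [← mul_assoc, Matrix.nonsing_inv_mul L' hdetu', one_mul]
    rw [h1, mul_apply]
    have h2 : ∀ j ∈ Finset.univ, L'⁻¹ k j * (L' * L⁻¹) j w
        = L'⁻¹ k j * (1 : Matrix (Fin m) (Fin m) ℝ) j w := fun j _ => by rw [keyc w hw j]
    rw [Finset.sum_congr rfl h2, ← mul_apply, mul_one]
  -- first factor
  have f1 : (L⁻¹ * U * (Lᵀ)⁻¹) v v = (L'⁻¹ * U * (L'ᵀ)⁻¹) v v := by
    rw [← Matrix.transpose_nonsing_inv, ← Matrix.transpose_nonsing_inv]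
    simp only [mul_apply, transpose_apply]
    refine Finset.sum_congr rfl fun k _ => ?_
    rw [rowv k]
    congr 1
    exact Finset.sum_congr rfl fun j _ => by rw [rowv j]
  -- second factor
  have f2 : ((L * Matrix.diagonal d * Lᵀ)⁻¹) u u'
      = ((L' * Matrix.diagonal d * L'ᵀ)⁻¹) u u' := by
    rw [Matrix.mul_inv_rev, Matrix.mul_inv_rev, Matrix.mul_inv_rev, Matrix.mul_inv_rev,
      ← Matrix.transpose_nonsing_inv, ← Matrix.transpose_nonsing_inv]
    simp only [mul_apply, transpose_apply]
    refine Finset.sum_congr rfl fun j _ => ?_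
    rw [colu u hu j]
    congr 1
    exact Finset.sum_congr rfl fun k _ => by rw [colu u' hu' k]
  rw [f1, f2]
end

section
/- Fix v ∈ {1,…,m−1}, let F := {u : u > v, (u,v) ∈ E}, and fix L ∈ 𝓛_G, D diagonal with all D_{ii} > 0, and U symmetric positive definite. For x ∈ ℝ^F let L(x) ∈ 𝓛_G be the matrix obtained from L by replacing the entry L_{uv} by x_u for each u ∈ F, all other entries unchanged. Then there exist b ∈ ℝ^F and C ∈ ℝ, not depending on x, such that for all x ∈ ℝ^F: tr((L(x) D L(x)ᵀ)⁻¹ U) = Σ_{u∈F} Σ_{u′∈F} A_{uu′}(x_u − b_u)(x_{u′} − b_{u′}) + C, where A_{uu′} := (L⁻¹ U (Lᵀ)⁻¹)_{vv} · ((LDLᵀ)⁻¹)_{uu′} (a quantity that does not depend on the below-diagonal entries of column v of L). -/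
open Matrix

section Helpers

variable {n : Type*} [Fintype n] [DecidableEq n]

lemma vmv_mul (a : n → ℝ) (b : n → ℝ) (M : Matrix n n ℝ) :
    vecMulVec a b * M = vecMulVec a (b ᵥ* M) := by
  ext i j
  simp [vecMulVec_apply, Matrix.mul_apply, vecMul, dotProduct, Finset.mul_sum, mul_assoc]

lemma mul_vmv (M : Matrix n n ℝ) (a : n → ℝ) (b : n → ℝ) :
    M * vecMulVec a b = vecMulVec (M *ᵥ a) b := by
  ext i j
  simp only [vecMulVec_apply, Matrix.mul_apply, mulVec, dotProduct, Finset.sum_mul]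
  congr 1; ext k; ring

lemma trace_vmv (a b : n → ℝ) : Matrix.trace (vecMulVec a b) = a ⬝ᵥ b := by
  simp [Matrix.trace, vecMulVec_apply, dotProduct, Matrix.diag]

lemma vmv_mul_vmv (a b c e : n → ℝ) :
    vecMulVec a b * vecMulVec c e = (b ⬝ᵥ c) • vecMulVec a e := by
  ext i j
  simp only [vecMulVec_apply, Matrix.mul_apply, dotProduct, Finset.sum_mul, Matrix.smul_apply,
    smul_eq_mul]
  congr 1; ext k; ring

lemma transpose_vmv (a b : n → ℝ) : (vecMulVec a b)ᵀ = vecMulVec b a := by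
  ext i j; simp [vecMulVec_apply, mul_comm]

lemma sum_dite_subtype (p : n → Prop) [DecidablePred p] (g : Subtype p → ℝ) :
    ∑ i : n, (if h : p i then g ⟨i, h⟩ else 0) = ∑ u : Subtype p, g u := by
  classical
  have h1 : ∑ i : n, (if h : p i then g ⟨i, h⟩ else 0)
      = ∑ i ∈ Finset.univ.filter p, (if h : p i then g ⟨i, h⟩ else 0) := by
    refine (Finset.sum_subset (Finset.filter_subset _ _) ?_).symm
    intro i _ hi
    simp only [Finset.mem_filter, Finset.mem_univ, true_and] at hi
    rw [dif_neg hi]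
  have h2 := Finset.sum_subtype (p := p) (F := Subtype.fintype p) (Finset.univ.filter p)
    (fun x => by simp) (fun i => if h : p i then g ⟨i, h⟩ else 0)
  rw [h1, h2]
  refine Finset.sum_congr rfl fun u _ => ?_
  rw [dif_pos u.2]

end Helpers

section Tri

variable {m : ℕ}

lemma lt_isUnit_det (L : Matrix (Fin m) (Fin m) ℝ)
    (hlow : ∀ i j : Fin m, i < j → L i j = 0) (hdiag : ∀ i : Fin m, L i i = 1) :
    IsUnit L.det := by
  have ht : L.BlockTriangular OrderDual.toDual := fun i j h => hlow i j h
  rw [Matrix.det_of_lowerTriangular L ht]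
  simp [hdiag]

lemma inv_lowtri (L : Matrix (Fin m) (Fin m) ℝ)
    (hlow : ∀ i j : Fin m, i < j → L i j = 0) (hdiag : ∀ i : Fin m, L i i = 1) :
    ∀ i j : Fin m, i < j → L⁻¹ i j = 0 := by
  have ht : L.BlockTriangular OrderDual.toDual := fun i j h => hlow i j h
  have : Invertible L := L.invertibleOfIsUnitDet (lt_isUnit_det L hlow hdiag)
  have h2 := Matrix.blockTriangular_inv_of_blockTriangular ht
  exact fun i j h => h2 h

end Tri

/-- The matrix obtained from `L` by replacing, for each `u ∈ F = {u : u > v, (u,v) ∈ E}`,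
the entry `L u v` by `x u`; all other entries are unchanged. -/
noncomputable def replaceColumn {m : ℕ} (E : Finset (Fin m × Fin m)) (v : Fin m)
    (L : Matrix (Fin m) (Fin m) ℝ)
    (x : {u : Fin m // v < u ∧ (u, v) ∈ E} → ℝ) :
    Matrix (Fin m) (Fin m) ℝ :=
  Matrix.of fun i j =>
    if h : j = v ∧ v < i ∧ (i, v) ∈ E then x ⟨i, h.2⟩ else L i j

/-- with `F = {u : u > v, (u,v) ∈ E}` and `L(x)` the matrix obtained from
`L ∈ 𝓛_G` by replacing the free entries of column `v` by `x : F → ℝ`, there are `b : F → ℝ`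
and `C : ℝ`, independent of `x`, such that
`tr((L(x) D L(x)ᵀ)⁻¹ U) = Σ_{u,u'∈F} A_{uu'} (x_u − b_u)(x_{u'} − b_{u'}) + C`, where
`A_{uu'} = (L⁻¹ U (Lᵀ)⁻¹)_{vv} ((LDLᵀ)⁻¹)_{uu'}`. -/
theorem stmt_7 {m : ℕ} (hm : 0 < m) (E : Finset (Fin m × Fin m))
    (hsymm : ∀ i j : Fin m, (i, j) ∈ E → (j, i) ∈ E)
    (hirr : ∀ i : Fin m, (i, i) ∉ E)
    (v : Fin m)
    (L : Matrix (Fin m) (Fin m) ℝ)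
    (hlow : ∀ i j : Fin m, i < j → L i j = 0)
    (hdiag : ∀ i : Fin m, L i i = 1)
    (hLG : ∀ i j : Fin m, j < i → (i, j) ∉ E → L i j = 0)
    (d : Fin m → ℝ) (hd : ∀ i, 0 < d i)
    (U : Matrix (Fin m) (Fin m) ℝ) (hU : U.PosDef) :
    ∃ (b : {u : Fin m // v < u ∧ (u, v) ∈ E} → ℝ) (C : ℝ),
      ∀ x : {u : Fin m // v < u ∧ (u, v) ∈ E} → ℝ,
        Matrix.trace
            ((replaceColumn E v L x * Matrix.diagonal d * (replaceColumn E v L x)ᵀ)⁻¹ * U)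
          = (∑ u : {u : Fin m // v < u ∧ (u, v) ∈ E},
              ∑ u' : {u : Fin m // v < u ∧ (u, v) ∈ E},
                ((L⁻¹ * U * (Lᵀ)⁻¹) v v * ((L * Matrix.diagonal d * Lᵀ)⁻¹) u.1 u'.1) *
                  (x u - b u) * (x u' - b u')) + C := by
  classical
  have hLdet : IsUnit L.det := lt_isUnit_det L hlow hdiag
  have hLLi : L * L⁻¹ = 1 := Matrix.mul_nonsing_inv L hLdet
  have hLiL : L⁻¹ * L = 1 := Matrix.nonsing_inv_mul L hLdet
  have hLi_low : ∀ i j : Fin m, i < j → L⁻¹ i j = 0 := inv_lowtri L hlow hdiag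
  set Li : Matrix (Fin m) (Fin m) ℝ := L⁻¹ with hLi_def
  set D : Matrix (Fin m) (Fin m) ℝ := Matrix.diagonal d with hD_def
  set Di : Matrix (Fin m) (Fin m) ℝ := Matrix.diagonal (fun i => (d i)⁻¹) with hDi_def
  have hDDi : D * Di = 1 := by
    rw [hD_def, hDi_def, diagonal_mul_diagonal,
      show (fun i => d i * (d i)⁻¹) = fun _ => (1 : ℝ) from
        funext fun i => mul_inv_cancel₀ (hd i).ne', diagonal_one]
  have hDiD : Di * D = 1 := by
    rw [hD_def, hDi_def, diagonal_mul_diagonal,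
      show (fun i => (d i)⁻¹ * d i) = fun _ => (1 : ℝ) from
        funext fun i => inv_mul_cancel₀ (hd i).ne', diagonal_one]
  have hDiT : Diᵀ = Di := by rw [hDi_def, Matrix.diagonal_transpose]
  have hUsymm : Uᵀ = U := by
    have h := hU.isHermitian
    rwa [Matrix.IsHermitian, Matrix.conjTranspose_eq_transpose_of_trivial] at h
  have hLT : (Lᵀ)⁻¹ = Liᵀ := (Matrix.transpose_nonsing_inv L).symm
  -- r
  set r : Fin m → ℝ := fun j => Li v j with hr_def
  have hr_ne : r ≠ 0 := by
    intro h0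
    have h1 : (Li * L) v v = 1 := by rw [hLiL]; simp [Matrix.one_apply]
    rw [Matrix.mul_apply] at h1
    have hz : ∀ k, Li v k = 0 := fun k => congrFun h0 k
    rw [Finset.sum_eq_zero (fun k _ => by rw [hz k, zero_mul])] at h1
    exact one_ne_zero h1.symm
  -- M' := Liᵀ * Di * Li, symmetric
  have hM'symm : (Liᵀ * Di * Li)ᵀ = Liᵀ * Di * Li := by
    rw [Matrix.transpose_mul, Matrix.transpose_mul, Matrix.transpose_transpose, hDiT,
      Matrix.mul_assoc]
  -- P
  have hLTLiT : Lᵀ * Liᵀ = 1 := by rw [← Matrix.transpose_mul, hLiL, Matrix.transpose_one]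
  have hPval : (L * D * Lᵀ)⁻¹ = Liᵀ * Di * Li := by
    apply Matrix.inv_eq_right_inv
    calc L * D * Lᵀ * (Liᵀ * Di * Li)
        = L * (D * ((Lᵀ * Liᵀ) * Di)) * Li := by
          simp only [Matrix.mul_assoc]
      _ = L * (D * Di) * Li := by rw [hLTLiT, Matrix.one_mul]
      _ = L * Li := by rw [hDDi, Matrix.mul_one]
      _ = 1 := hLLi
  set P : Matrix (Fin m) (Fin m) ℝ := (L * D * Lᵀ)⁻¹ with hP_def
  have hPsymm : Pᵀ = P := by rw [hPval]; exact hM'symm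
  set α : ℝ := (Li * U * (Lᵀ)⁻¹) v v with hα_def
  have hαval : α = (Li * U * Liᵀ) v v := by rw [hα_def, hLT]
  -- α = r ⬝ᵥ (U *ᵥ r) > 0
  have hUs : ∀ a b, U a b = U b a := by
    intro a b
    have h := congrFun (congrFun hUsymm a) b
    simpa using h.symm
  have hα_eq : α = r ⬝ᵥ (U *ᵥ r) := by
    rw [hαval]
    simp only [Matrix.mul_apply, dotProduct, mulVec, Matrix.transpose_apply, hr_def]
    refine Finset.sum_congr rfl fun k _ => ?_
    rw [Finset.sum_mul, Finset.mul_sum]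
    refine Finset.sum_congr rfl fun j _ => ?_
    rw [hUs j k]
    ring
  have hα_pos : 0 < α := by
    rw [hα_eq]
    have := hU.dotProduct_mulVec_pos hr_ne
    simpa using this
  -- P posdef
  have hLi_inj : ∀ y : Fin m → ℝ, Li *ᵥ y = 0 → y = 0 := by
    intro y hy
    have : (L * Li) *ᵥ y = L *ᵥ (Li *ᵥ y) := (Matrix.mulVec_mulVec y L Li).symm
    rw [hLLi, Matrix.one_mulVec, hy, Matrix.mulVec_zero] at this
    exact this
  have hPpos : P.PosDef := by
    rw [Matrix.posDef_iff_dotProduct_mulVec]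
    constructor
    · show Pᴴ = P
      rw [Matrix.conjTranspose_eq_transpose_of_trivial, hPsymm]
    · intro y hy
      have hz : Li *ᵥ y ≠ 0 := fun h => hy (hLi_inj y h)
      have hform : star y ⬝ᵥ (P *ᵥ y) = (Li *ᵥ y) ⬝ᵥ (Di *ᵥ (Li *ᵥ y)) := by
        rw [hPval]
        rw [show (Liᵀ * Di * Li) *ᵥ y = Liᵀ *ᵥ (Di *ᵥ (Li *ᵥ y)) by
          rw [Matrix.mulVec_mulVec, Matrix.mulVec_mulVec]]
        rw [show (star y : Fin m → ℝ) = y from funext fun i => star_trivial _]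
        rw [Matrix.dotProduct_mulVec y Liᵀ, ← Matrix.mulVec_transpose Liᵀ y,
          Matrix.transpose_transpose]
      rw [hform]
      obtain ⟨i0, hi0⟩ := Function.ne_iff.mp hz
      refine Finset.sum_pos' (fun i _ => ?_) ⟨i0, Finset.mem_univ i0, ?_⟩
      · simp only [hDi_def, Matrix.mulVec_diagonal]
        have h1 : (0:ℝ) ≤ (d i)⁻¹ * ((Li *ᵥ y) i) ^ 2 :=
          mul_nonneg (inv_nonneg.mpr (hd i).le) (sq_nonneg _)
        calc (0:ℝ) ≤ (d i)⁻¹ * ((Li *ᵥ y) i) ^ 2 := h1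
          _ = (Li *ᵥ y) i * ((d i)⁻¹ * (Li *ᵥ y) i) := by ring
      · simp only [hDi_def, Matrix.mulVec_diagonal]
        have h2 : (0:ℝ) < ((Li *ᵥ y) i0) ^ 2 :=
          lt_of_le_of_ne (sq_nonneg _) (Ne.symm (pow_ne_zero 2 hi0))
        calc (0:ℝ) < (d i0)⁻¹ * ((Li *ᵥ y) i0) ^ 2 :=
              mul_pos (inv_pos.mpr (hd i0)) h2
          _ = (Li *ᵥ y) i0 * ((d i0)⁻¹ * (Li *ᵥ y) i0) := by ring
  -- Q
  set Q : Matrix {u : Fin m // v < u ∧ (u, v) ∈ E} {u : Fin m // v < u ∧ (u, v) ∈ E} ℝ :=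
    Matrix.of (fun u u' => P u.1 u'.1) with hQ_def
  have hQapp : ∀ u u', Q u u' = P u.1 u'.1 := fun u u' => rfl
  have hQsymm : ∀ u u', Q u u' = Q u' u := by
    intro u u'
    rw [hQapp, hQapp]
    exact congrFun (congrFun hPsymm.symm u.1) u'.1
  have hQpos : Q.PosDef := by
    rw [Matrix.posDef_iff_dotProduct_mulVec]
    constructor
    · show Qᴴ = Q
      rw [Matrix.conjTranspose_eq_transpose_of_trivial]
      ext u u'
      simp only [Matrix.transpose_apply]
      exact (hQsymm u u').symm
    · intro y hy
      set z : Fin m → ℝ := fun i => if h : v < i ∧ (i, v) ∈ E then y ⟨i, h⟩ else 0 with hz_def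
      have hz_ne : z ≠ 0 := by
        intro h0
        apply hy
        funext u
        have := congrFun h0 u.1
        rw [hz_def] at this
        simpa [dif_pos u.2] using this
      have hform : star y ⬝ᵥ (Q *ᵥ y) = star z ⬝ᵥ (P *ᵥ z) := by
        rw [show (star y : _ → ℝ) = y from funext fun i => star_trivial _,
          show (star z : _ → ℝ) = z from funext fun i => star_trivial _]
        simp only [dotProduct, mulVec]
        rw [show (∑ u, y u * ∑ j, Q u j * y j)
            = ∑ i : Fin m, (if h : v < i ∧ (i, v) ∈ E
                then y ⟨i, h⟩ * ∑ j, Q ⟨i, h⟩ j * y j else 0) from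
          (sum_dite_subtype (fun i => v < i ∧ (i, v) ∈ E)
            (fun u => y u * ∑ j, Q u j * y j)).symm]
        refine Finset.sum_congr rfl fun i _ => ?_
        by_cases h : v < i ∧ (i, v) ∈ E
        · rw [dif_pos h]
          have hz_i : z i = y ⟨i, h⟩ := by rw [hz_def]; simp [dif_pos h]
          rw [hz_i]
          congr 1
          rw [show (∑ j, Q ⟨i, h⟩ j * y j)
              = ∑ j : Fin m, (if h' : v < j ∧ (j, v) ∈ E
                  then Q ⟨i, h⟩ ⟨j, h'⟩ * y ⟨j, h'⟩ else 0) from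
            (sum_dite_subtype (fun j => v < j ∧ (j, v) ∈ E)
              (fun u' => Q ⟨i, h⟩ u' * y u')).symm]
          refine Finset.sum_congr rfl fun j _ => ?_
          by_cases h' : v < j ∧ (j, v) ∈ E
          · rw [dif_pos h']
            have hz_j : z j = y ⟨j, h'⟩ := by rw [hz_def]; simp [dif_pos h']
            rw [hz_j, hQapp]
          · rw [dif_neg h']
            have hz_j : z j = 0 := by rw [hz_def]; simp [dif_neg h']
            rw [hz_j, mul_zero]
        · rw [dif_neg h]
          have hz_i : z i = 0 := by rw [hz_def]; simp [dif_neg h]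
          rw [hz_i, zero_mul]
      rw [hform]
      exact hPpos.dotProduct_mulVec_pos hz_ne
  have hQdet : IsUnit Q.det := (Matrix.isUnit_iff_isUnit_det Q).mp hQpos.isUnit
  -- ℓ and β
  set ℓ : Fin m → ℝ := (r ᵥ* U) ᵥ* P with hℓ_def
  set β : {u : Fin m // v < u ∧ (u, v) ∈ E} → ℝ :=
    α⁻¹ • (Q⁻¹ *ᵥ (fun u => ℓ u.1)) with hβ_def
  have hβprop : ∀ u, α * (∑ u', Q u u' * β u') = ℓ u.1 := by
    intro u
    have h1 : Q *ᵥ β = α⁻¹ • (fun u => ℓ u.1) := by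
      rw [hβ_def, Matrix.mulVec_smul, Matrix.mulVec_mulVec,
        Matrix.mul_nonsing_inv Q hQdet, Matrix.one_mulVec]
    have h2 := congrFun h1 u
    simp only [Matrix.mulVec, dotProduct, Pi.smul_apply, smul_eq_mul] at h2
    rw [h2, ← mul_assoc, mul_inv_cancel₀ hα_pos.ne', one_mul]
  -- the answer
  refine ⟨fun u => L u.1 v + β u,
    Matrix.trace (P * U) - α * ∑ u, ∑ u', Q u u' * β u * β u', ?_⟩
  intro x
  -- the perturbation vector
  set c : Fin m → ℝ :=
    fun i => if h : v < i ∧ (i, v) ∈ E then x ⟨i, h⟩ - L i v else 0 with hc_def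
  have hrepl : replaceColumn E v L x = L + vecMulVec c (Pi.single v 1) := by
    ext i j
    simp only [replaceColumn, Matrix.of_apply, Matrix.add_apply, vecMulVec_apply, hc_def]
    by_cases hj : j = v
    · subst hj
      by_cases h : j < i ∧ (i, j) ∈ E
      · rw [dif_pos ⟨rfl, h⟩, dif_pos h, Pi.single_eq_same]
        ring
      · rw [dif_neg (fun hh => h hh.2), dif_neg h, Pi.single_eq_same]
        ring
    · rw [dif_neg (fun hh => hj hh.1), Pi.single_eq_of_ne hj, mul_zero, add_zero]
  have hwv : (Li *ᵥ c) v = 0 := by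
    simp only [mulVec, dotProduct]
    refine Finset.sum_eq_zero fun j _ => ?_
    by_cases hvj : v < j
    · rw [hLi_low v j hvj, zero_mul]
    · have hcj : c j = 0 := by rw [hc_def]; exact dif_neg (fun hh => hvj hh.1)
      rw [hcj, mul_zero]
  set w : Fin m → ℝ := Li *ᵥ c with hw_def
  have hsingle : (Pi.single v (1:ℝ)) ᵥ* Li = r := by
    funext j
    rw [hr_def]
    simp [Matrix.vecMul, single_dotProduct]
  have hN : (L + vecMulVec c (Pi.single v 1)) * (Li - vecMulVec w r) = 1 := by
    rw [Matrix.add_mul, Matrix.mul_sub, Matrix.mul_sub, hLLi]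
    rw [mul_vmv L w r]
    rw [show L *ᵥ w = c by rw [hw_def, Matrix.mulVec_mulVec, hLLi, Matrix.one_mulVec]]
    rw [vmv_mul c (Pi.single v 1) Li, hsingle]
    rw [vmv_mul_vmv c (Pi.single v 1) w r]
    rw [show Pi.single v (1:ℝ) ⬝ᵥ w = 0 by
      rw [single_dotProduct, one_mul]; exact hwv]
    rw [zero_smul, sub_zero, sub_add_cancel]
  have hNL : (Li - vecMulVec w r) * (L + vecMulVec c (Pi.single v 1)) = 1 :=
    mul_eq_one_comm.mp hN
  have hAinv : (replaceColumn E v L x * D * (replaceColumn E v L x)ᵀ)⁻¹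
      = (Li - vecMulVec w r)ᵀ * Di * (Li - vecMulVec w r) := by
    apply Matrix.inv_eq_right_inv
    rw [hrepl]
    have h1 : (L + vecMulVec c (Pi.single v 1))ᵀ * (Li - vecMulVec w r)ᵀ = 1 := by
      rw [← Matrix.transpose_mul, hNL, Matrix.transpose_one]
    calc (L + vecMulVec c (Pi.single v 1)) * D * (L + vecMulVec c (Pi.single v 1))ᵀ *
          ((Li - vecMulVec w r)ᵀ * Di * (Li - vecMulVec w r))
        = (L + vecMulVec c (Pi.single v 1)) * (D * (((L + vecMulVec c (Pi.single v 1))ᵀ *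
            (Li - vecMulVec w r)ᵀ) * Di)) * (Li - vecMulVec w r) := by
          simp only [Matrix.mul_assoc]
      _ = (L + vecMulVec c (Pi.single v 1)) * (Li - vecMulVec w r) := by
          rw [h1, Matrix.one_mul, hDDi, Matrix.mul_one]
      _ = 1 := hN
  rw [hAinv]
  -- scalar identifications
  have hs4 : r ⬝ᵥ (r ᵥ* U) = α := by
    rw [show r ᵥ* U = Uᵀ *ᵥ r from (Matrix.mulVec_transpose U r).symm, hUsymm]
    exact hα_eq.symm
  have hs1 : ((Liᵀ * Di) *ᵥ w) ⬝ᵥ (r ᵥ* U) = c ⬝ᵥ ℓ := by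
    rw [hw_def, Matrix.mulVec_mulVec]
    rw [show Liᵀ * Di * Li = P from hPval.symm]
    rw [dotProduct_comm, Matrix.dotProduct_mulVec, dotProduct_comm, ← hℓ_def]
  have hs2 : r ⬝ᵥ ((w ᵥ* Di) ᵥ* (Li * U)) = c ⬝ᵥ ℓ := by
    rw [Matrix.vecMul_vecMul]
    rw [dotProduct_comm, ← Matrix.dotProduct_mulVec]
    rw [hw_def, dotProduct_comm, Matrix.dotProduct_mulVec]
    rw [show ((Di * (Li * U)) *ᵥ r) ᵥ* Li = ℓ by
      rw [← Matrix.mulVec_transpose Li, Matrix.mulVec_mulVec, hℓ_def,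
        Matrix.vecMul_vecMul, ← Matrix.mulVec_transpose (U * P) r,
        Matrix.transpose_mul, hPsymm, hUsymm]
      congr 1
      rw [hPval]
      simp only [Matrix.mul_assoc]]
    exact dotProduct_comm _ _
  have hs3 : (w ᵥ* Di) ⬝ᵥ w = c ⬝ᵥ (P *ᵥ c) := by
    nth_rewrite 2 [hw_def]
    rw [Matrix.dotProduct_mulVec, Matrix.vecMul_vecMul, hw_def,
      ← Matrix.mulVec_transpose (Di * Li), Matrix.mulVec_mulVec,
      Matrix.transpose_mul, hDiT]
    rw [show Liᵀ * Di * Li = P from hPval.symm]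
    exact dotProduct_comm _ _
  -- trace expansion
  have hTexp : Matrix.trace ((Li - vecMulVec w r)ᵀ * Di * (Li - vecMulVec w r) * U)
      = Matrix.trace (P * U) - c ⬝ᵥ ℓ - c ⬝ᵥ ℓ + (c ⬝ᵥ (P *ᵥ c)) * α := by
    rw [Matrix.transpose_sub, transpose_vmv]
    rw [Matrix.mul_assoc ((Liᵀ - vecMulVec r w) * Di) (Li - vecMulVec w r) U]
    rw [Matrix.sub_mul Liᵀ (vecMulVec r w) Di]
    rw [Matrix.sub_mul Li (vecMulVec w r) U]
    rw [Matrix.sub_mul (Liᵀ * Di) (vecMulVec r w * Di) (Li * U - vecMulVec w r * U)]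
    rw [Matrix.mul_sub (Liᵀ * Di) (Li * U) (vecMulVec w r * U)]
    rw [Matrix.mul_sub (vecMulVec r w * Di) (Li * U) (vecMulVec w r * U)]
    rw [Matrix.trace_sub, Matrix.trace_sub, Matrix.trace_sub]
    rw [show (Liᵀ * Di) * (Li * U) = P * U by rw [hPval]; simp only [Matrix.mul_assoc]]
    rw [vmv_mul w r U, mul_vmv (Liᵀ * Di) w (r ᵥ* U), trace_vmv, hs1]
    rw [vmv_mul r w Di, vmv_mul r (w ᵥ* Di) (Li * U), trace_vmv, hs2]
    rw [vmv_mul_vmv r (w ᵥ* Di) w (r ᵥ* U), Matrix.trace_smul, trace_vmv,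
      hs3, hs4, smul_eq_mul]
    ring
  rw [hTexp]
  -- reduction of the dot products to sums over the subtype
  have hsum1 : c ⬝ᵥ ℓ = ∑ u : {u : Fin m // v < u ∧ (u, v) ∈ E}, (x u - L u.1 v) * ℓ u.1 := by
    rw [show c ⬝ᵥ ℓ = ∑ i : Fin m, c i * ℓ i from rfl]
    rw [← sum_dite_subtype (fun i => v < i ∧ (i, v) ∈ E)
      (fun u => (x u - L u.1 v) * ℓ u.1)]
    refine Finset.sum_congr rfl fun i _ => ?_
    by_cases h : v < i ∧ (i, v) ∈ E
    · rw [dif_pos h, hc_def]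
      simp [dif_pos h]
    · rw [dif_neg h, hc_def]
      simp [dif_neg h]
  have hmvP : ∀ k : Fin m, (P *ᵥ c) k
      = ∑ u' : {u : Fin m // v < u ∧ (u, v) ∈ E}, P k u'.1 * (x u' - L u'.1 v) := by
    intro k
    rw [show (P *ᵥ c) k = ∑ j : Fin m, P k j * c j from rfl]
    rw [← sum_dite_subtype (fun j => v < j ∧ (j, v) ∈ E)
      (fun u' => P k u'.1 * (x u' - L u'.1 v))]
    refine Finset.sum_congr rfl fun j _ => ?_
    by_cases h : v < j ∧ (j, v) ∈ E
    · rw [dif_pos h, hc_def]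
      simp [dif_pos h]
    · rw [dif_neg h, hc_def]
      simp [dif_neg h]
  have hsum2 : c ⬝ᵥ (P *ᵥ c)
      = ∑ u : {u : Fin m // v < u ∧ (u, v) ∈ E},
          ∑ u' : {u : Fin m // v < u ∧ (u, v) ∈ E},
            Q u u' * (x u - L u.1 v) * (x u' - L u'.1 v) := by
    rw [show c ⬝ᵥ (P *ᵥ c) = ∑ i : Fin m, c i * (P *ᵥ c) i from rfl]
    rw [← sum_dite_subtype (fun i => v < i ∧ (i, v) ∈ E)
      (fun u => ∑ u' : {u : Fin m // v < u ∧ (u, v) ∈ E},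
        Q u u' * (x u - L u.1 v) * (x u' - L u'.1 v))]
    refine Finset.sum_congr rfl fun i _ => ?_
    by_cases h : v < i ∧ (i, v) ∈ E
    · rw [dif_pos h]
      have hci : c i = x ⟨i, h⟩ - L i v := by rw [hc_def]; simp [dif_pos h]
      rw [hci, hmvP i, Finset.mul_sum]
      refine Finset.sum_congr rfl fun u' _ => ?_
      rw [hQapp]
      ring
    · have hci : c i = 0 := by rw [hc_def]; simp [dif_neg h]
      rw [dif_neg h, hci, zero_mul]
  rw [hsum1, hsum2]
  -- final quadratic algebra over the subtype sums
  have swap : (∑ u : {u : Fin m // v < u ∧ (u, v) ∈ E},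
      ∑ u' : {u : Fin m // v < u ∧ (u, v) ∈ E},
        α * (Q u u' * (β u * (x u' - L u'.1 v))))
      = ∑ u : {u : Fin m // v < u ∧ (u, v) ∈ E}, (x u - L u.1 v) * ℓ u.1 := by
    rw [Finset.sum_comm]
    refine Finset.sum_congr rfl fun u' _ => ?_
    rw [← hβprop u', Finset.mul_sum, Finset.mul_sum]
    refine Finset.sum_congr rfl fun u _ => ?_
    rw [hQsymm u u']
    ring
  have cross : (∑ u : {u : Fin m // v < u ∧ (u, v) ∈ E},
      ∑ u' : {u : Fin m // v < u ∧ (u, v) ∈ E},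
        α * (Q u u' * ((x u - L u.1 v) * β u')))
      = ∑ u : {u : Fin m // v < u ∧ (u, v) ∈ E}, (x u - L u.1 v) * ℓ u.1 := by
    refine Finset.sum_congr rfl fun u _ => ?_
    rw [← hβprop u, Finset.mul_sum, Finset.mul_sum]
    refine Finset.sum_congr rfl fun u' _ => ?_
    ring
  have expand : ∀ u u' : {u : Fin m // v < u ∧ (u, v) ∈ E},
      (α * P u.1 u'.1) * (x u - (L u.1 v + β u)) * (x u' - (L u'.1 v + β u'))
      = α * (Q u u' * ((x u - L u.1 v) * (x u' - L u'.1 v)))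
        - α * (Q u u' * ((x u - L u.1 v) * β u'))
        - α * (Q u u' * (β u * (x u' - L u'.1 v)))
        + α * (Q u u' * (β u * β u')) := by
    intro u u'
    rw [hQapp]
    ring
  calc Matrix.trace (P * U)
        - (∑ u : {u : Fin m // v < u ∧ (u, v) ∈ E}, (x u - L u.1 v) * ℓ u.1)
        - (∑ u : {u : Fin m // v < u ∧ (u, v) ∈ E}, (x u - L u.1 v) * ℓ u.1)
        + (∑ u : {u : Fin m // v < u ∧ (u, v) ∈ E},
            ∑ u' : {u : Fin m // v < u ∧ (u, v) ∈ E},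
              Q u u' * (x u - L u.1 v) * (x u' - L u'.1 v)) * α
      = (∑ u : {u : Fin m // v < u ∧ (u, v) ∈ E},
          ∑ u' : {u : Fin m // v < u ∧ (u, v) ∈ E},
            (α * (Q u u' * ((x u - L u.1 v) * (x u' - L u'.1 v)))
              - α * (Q u u' * ((x u - L u.1 v) * β u'))
              - α * (Q u u' * (β u * (x u' - L u'.1 v)))
              + α * (Q u u' * (β u * β u'))))
        + (Matrix.trace (P * U) - α * ∑ u, ∑ u', Q u u' * β u * β u') := by
        simp only [Finset.sum_add_distrib, Finset.sum_sub_distrib]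
        rw [swap, cross]
        rw [show (∑ u : {u : Fin m // v < u ∧ (u, v) ∈ E},
            ∑ u' : {u : Fin m // v < u ∧ (u, v) ∈ E},
              α * (Q u u' * ((x u - L u.1 v) * (x u' - L u'.1 v))))
            = (∑ u : {u : Fin m // v < u ∧ (u, v) ∈ E},
                ∑ u' : {u : Fin m // v < u ∧ (u, v) ∈ E},
                  Q u u' * (x u - L u.1 v) * (x u' - L u'.1 v)) * α by
          rw [Finset.sum_mul]
          refine Finset.sum_congr rfl fun u _ => ?_
          rw [Finset.sum_mul]
          exact Finset.sum_congr rfl fun u' _ => by ring]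
        rw [show (∑ u : {u : Fin m // v < u ∧ (u, v) ∈ E},
            ∑ u' : {u : Fin m // v < u ∧ (u, v) ∈ E},
              α * (Q u u' * (β u * β u')))
            = α * ∑ u, ∑ u', Q u u' * β u * β u' by
          rw [Finset.mul_sum]
          refine Finset.sum_congr rfl fun u _ => ?_
          rw [Finset.mul_sum]
          exact Finset.sum_congr rfl fun u' _ => by ring]
        ring
    _ = (∑ u : {u : Fin m // v < u ∧ (u, v) ∈ E},
          ∑ u' : {u : Fin m // v < u ∧ (u, v) ∈ E},
            (α * P u.1 u'.1) * (x u - (L u.1 v + β u)) * (x u' - (L u'.1 v + β u')))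
        + (Matrix.trace (P * U) - α * ∑ u, ∑ u', Q u u' * β u * β u') := by
        congr 1
        refine Finset.sum_congr rfl fun u _ => ?_
        refine Finset.sum_congr rfl fun u' _ => ?_
        rw [expand u u']
end

section
/- The map Φ from ℝ^{E^≺} to ℝ^{E^≺} defined as follows is a bijection: given free entries x = (x_{ij})_{(i,j)∈E^≺}, let L(x) ∈ 𝓛_G be the unit lower-triangular matrix with L(x)_{ij} = x_{ij} for (i,j) ∈ E^≺ and L(x)_{ij} = 0 for all other i > j, and set Φ(x) := ((L(x)⁻¹)_{ij})_{(i,j)∈E^≺}. -/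
open Matrix

/-- The unit lower-triangular matrix in `𝓛_G` whose free entries (the entries `(i,j)` with
`(i,j) ∈ E` and `j < i`) are given by `x`; all other off-diagonal entries are `0`. -/
noncomputable def lowerOfCoords {m : ℕ} (E : Finset (Fin m × Fin m))
    (x : {p : Fin m × Fin m // p ∈ E ∧ p.2 < p.1} → ℝ) :
    Matrix (Fin m) (Fin m) ℝ :=
  Matrix.of fun i j =>
    if i = j then 1
    else if h : (i, j) ∈ E ∧ j < i then x ⟨(i, j), h⟩ else 0


open Matrix Finset

namespace Stmt8Aux

variable {m : ℕ} (E : Finset (Fin m × Fin m))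

lemma lc_diag (x) (i : Fin m) : lowerOfCoords E x i i = 1 := by
  simp [lowerOfCoords]

lemma lc_upper (x) {i j : Fin m} (h : i < j) : lowerOfCoords E x i j = 0 := by
  have h1 : i ≠ j := ne_of_lt h
  have h2 : ¬ ((i, j) ∈ E ∧ j < i) := by rintro ⟨-, h3⟩; exact absurd (h.trans h3) (lt_irrefl i)
  simp [lowerOfCoords, h1, h2]

lemma lc_det (x) : (lowerOfCoords E x).det = 1 := by
  rw [Matrix.det_of_lowerTriangular (lowerOfCoords E x)
    (by intro i j hij; exact lc_upper E x hij)]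
  simp [lc_diag]

lemma lc_mul_inv (x) : lowerOfCoords E x * (lowerOfCoords E x)⁻¹ = 1 :=
  Matrix.mul_nonsing_inv _ (by rw [lc_det]; exact isUnit_one)

lemma inv_rec (x) (i j : Fin m) :
    (lowerOfCoords E x)⁻¹ i j =
      (if i = j then (1:ℝ) else 0) -
        ∑ k ∈ Finset.univ.erase i, lowerOfCoords E x i k * (lowerOfCoords E x)⁻¹ k j := by
  have h := congrFun (congrFun (lc_mul_inv E x) i) j
  rw [Matrix.mul_apply] at h
  rw [← Finset.add_sum_erase Finset.univ _ (Finset.mem_univ i)] at h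
  rw [lc_diag, one_mul] at h
  have h1 : (1 : Matrix (Fin m) (Fin m) ℝ) i j = if i = j then 1 else 0 := Matrix.one_apply
  rw [h1] at h
  linarith

lemma inv_upper_aux (x) : ∀ (n : ℕ) (i j : Fin m), (i : ℕ) < n → i < j →
    (lowerOfCoords E x)⁻¹ i j = 0 := by
  intro n
  induction n with
  | zero => intro i j h _; omega
  | succ n ih =>
    intro i j hin hij
    rw [inv_rec, if_neg (ne_of_lt hij), Finset.sum_eq_zero, sub_zero]
    intro k hk
    have hkne : k ≠ i := (Finset.mem_erase.mp hk).1
    rcases lt_or_gt_of_ne hkne with h | h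
    · rw [ih k j (by have := Fin.lt_def.mp h; omega) (h.trans hij), mul_zero]
    · rw [lc_upper E x h, zero_mul]

lemma inv_upper (x) {i j : Fin m} (h : i < j) : (lowerOfCoords E x)⁻¹ i j = 0 :=
  inv_upper_aux E x ((i:ℕ)+1) i j (Nat.lt_succ_self _) h

lemma inv_diag (x) (i : Fin m) : (lowerOfCoords E x)⁻¹ i i = 1 := by
  rw [inv_rec, if_pos rfl, Finset.sum_eq_zero, sub_zero]
  intro k hk
  have hkne : k ≠ i := (Finset.mem_erase.mp hk).1
  rcases lt_or_gt_of_ne hkne with h | h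
  · rw [inv_upper E x h, mul_zero]
  · rw [lc_upper E x h, zero_mul]

lemma lc_entry (x) {i j : Fin m} (h : (i, j) ∈ E ∧ j < i) :
    lowerOfCoords E x i j = x ⟨(i, j), h⟩ := by
  have h1 : i ≠ j := (ne_of_lt h.2).symm
  simp [lowerOfCoords, h1, h]

lemma inv_agree (x y) (g : ℕ)
    (hxy : ∀ q : {p : Fin m × Fin m // p ∈ E ∧ p.2 < p.1},
      ((q.1.1 : ℕ) - (q.1.2 : ℕ)) < g → x q = y q) :
    ∀ (n : ℕ) (a b : Fin m), (a : ℕ) < n → ((a : ℕ) - (b : ℕ)) < g →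
      (lowerOfCoords E x)⁻¹ a b = (lowerOfCoords E y)⁻¹ a b := by
  intro n
  induction n with
  | zero => intro a b h _; omega
  | succ n ih =>
    intro a b han hg
    rw [inv_rec, inv_rec]
    congr 1
    apply Finset.sum_congr rfl
    intro k hk
    have hkne : k ≠ a := (Finset.mem_erase.mp hk).1
    rcases lt_or_gt_of_ne hkne with h | h
    · -- k < a
      rcases lt_or_ge k b with hkb | hbk
      · rw [inv_upper E x hkb, inv_upper E y hkb, mul_zero, mul_zero]
      · have hka : (k:ℕ) < (a:ℕ) := Fin.lt_def.mp h
        have hbk' : (b:ℕ) ≤ (k:ℕ) := Fin.le_def.mp hbk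
        have hL : lowerOfCoords E x a k = lowerOfCoords E y a k := by
          by_cases hE : ((a, k) ∈ E ∧ k < a)
          · rw [lc_entry E x hE, lc_entry E y hE]
            exact hxy _ (by simp only []; omega)
          · have h1 : a ≠ k := fun hh => hkne hh.symm
            simp [lowerOfCoords, h1, hE]
        rw [hL, ih k b (by omega) (by omega)]
    · rw [lc_upper E x h, lc_upper E y h, zero_mul, zero_mul]

/-- The key "triangularity" property of the map. -/
lemma key (x y) (q : {p : Fin m × Fin m // p ∈ E ∧ p.2 < p.1})
    (hxy : ∀ r : {p : Fin m × Fin m // p ∈ E ∧ p.2 < p.1},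
      ((r.1.1 : ℕ) - (r.1.2 : ℕ)) < ((q.1.1 : ℕ) - (q.1.2 : ℕ)) → x r = y r) :
    (lowerOfCoords E x)⁻¹ q.1.1 q.1.2 + x q = (lowerOfCoords E y)⁻¹ q.1.1 q.1.2 + y q := by
  obtain ⟨⟨a, b⟩, hq⟩ := q
  simp only at hxy ⊢
  have hba : b < a := hq.2
  have hne : b ≠ a := ne_of_lt hba
  have hbmem : b ∈ Finset.univ.erase a := Finset.mem_erase.mpr ⟨hne, Finset.mem_univ b⟩
  have hsplit : ∀ z, ∑ k ∈ Finset.univ.erase a, lowerOfCoords E z a k * (lowerOfCoords E z)⁻¹ k b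
      = z ⟨(a,b), hq⟩ + ∑ k ∈ (Finset.univ.erase a).erase b,
          lowerOfCoords E z a k * (lowerOfCoords E z)⁻¹ k b := by
    intro z
    rw [← Finset.add_sum_erase _ _ hbmem, lc_entry E z hq, inv_diag, mul_one]
  have hrest : ∑ k ∈ (Finset.univ.erase a).erase b,
        lowerOfCoords E x a k * (lowerOfCoords E x)⁻¹ k b
      = ∑ k ∈ (Finset.univ.erase a).erase b,
        lowerOfCoords E y a k * (lowerOfCoords E y)⁻¹ k b := by
    apply Finset.sum_congr rfl
    intro k hk
    have hkb : k ≠ b := (Finset.mem_erase.mp hk).1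
    have hka : k ≠ a := (Finset.mem_erase.mp (Finset.mem_erase.mp hk).2).1
    rcases lt_or_gt_of_ne hka with h | h
    · rcases lt_or_gt_of_ne hkb with hkb' | hkb'
      · rw [inv_upper E x hkb', inv_upper E y hkb', mul_zero, mul_zero]
      · have hka' : (k:ℕ) < (a:ℕ) := Fin.lt_def.mp h
        have hbk' : (b:ℕ) < (k:ℕ) := Fin.lt_def.mp hkb'
        have hL : lowerOfCoords E x a k = lowerOfCoords E y a k := by
          by_cases hE : ((a, k) ∈ E ∧ k < a)
          · rw [lc_entry E x hE, lc_entry E y hE]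
            exact hxy _ (by simp only []; omega)
          · have h1 : a ≠ k := fun hh => hka hh.symm
            simp [lowerOfCoords, h1, hE]
        rw [hL, inv_agree E x y _ hxy ((k:ℕ)+1) k b (Nat.lt_succ_self _) (by omega)]
    · rw [lc_upper E x h, lc_upper E y h, zero_mul, zero_mul]
  rw [inv_rec, inv_rec, if_neg (ne_of_lt hba).symm, hsplit x, hsplit y, hrest]
  ring

end Stmt8Aux

/-- the map sending the free entries `x = (x_{ij})_{(i,j)∈E^≺}` of
`L(x) ∈ 𝓛_G` to the corresponding entries `((L(x)⁻¹)_{ij})_{(i,j)∈E^≺}` of the inverse is a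
bijection of `ℝ^{E^≺}`. -/
theorem stmt_8 {m : ℕ} (hm : 0 < m) (E : Finset (Fin m × Fin m))
    (hsymm : ∀ i j : Fin m, (i, j) ∈ E → (j, i) ∈ E)
    (hirr : ∀ i : Fin m, (i, i) ∉ E) :
    Function.Bijective
      (fun x : {p : Fin m × Fin m // p ∈ E ∧ p.2 < p.1} → ℝ =>
        fun q : {p : Fin m × Fin m // p ∈ E ∧ p.2 < p.1} =>
          (lowerOfCoords E x)⁻¹ q.1.1 q.1.2) := by
  set T := {p : Fin m × Fin m // p ∈ E ∧ p.2 < p.1}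
  set Fm : (T → ℝ) → (T → ℝ) :=
    fun x q => (lowerOfCoords E x)⁻¹ q.1.1 q.1.2 with hFm
  have key : ∀ (x y : T → ℝ) (q : T),
      (∀ r : T, ((r.1.1 : ℕ) - (r.1.2 : ℕ)) < ((q.1.1 : ℕ) - (q.1.2 : ℕ)) → x r = y r) →
      Fm x q + x q = Fm y q + y q := fun x y q h => Stmt8Aux.key E x y q h
  constructor
  · -- injectivity
    intro x y hxy
    have main : ∀ (n : ℕ) (q : T), ((q.1.1 : ℕ) - (q.1.2 : ℕ)) < n → x q = y q := by
      intro n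
      induction n with
      | zero => intro q h; omega
      | succ n ih =>
        intro q hq
        have h1 := key x y q (fun r hr => ih r (by omega))
        have h2 : Fm x q = Fm y q := congrFun hxy q
        rw [h2] at h1
        linarith
    funext q
    exact main (((q.1.1 : ℕ) - (q.1.2 : ℕ)) + 1) q (Nat.lt_succ_self _)
  · -- surjectivity
    intro z
    let u : ℕ → (T → ℝ) := fun n =>
      Nat.rec (fun _ => 0) (fun _ prev => fun q => Fm prev q + prev q - z q) n
    have hu : ∀ n, u (n + 1) = fun q => Fm (u n) q + u n q - z q := fun n => rfl
    have stab : ∀ (n : ℕ) (q : T), ((q.1.1 : ℕ) - (q.1.2 : ℕ)) < n → u n q = u (n + 1) q := by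
      intro n
      induction n with
      | zero => intro q h; omega
      | succ n ih =>
        intro q hq
        rw [hu n, hu (n + 1)]
        have := key (u n) (u (n + 1)) q (fun r hr => ih r (by omega))
        simp only []
        linarith
    have hall : ∀ q : T, ((q.1.1 : ℕ) - (q.1.2 : ℕ)) < m := by
      intro q
      have := q.1.1.isLt
      omega
    refine ⟨u m, ?_⟩
    funext q
    have h1 : u m q = u (m + 1) q := stab m q (hall q)
    rw [hu] at h1
    simp only [] at h1 ⊢
    linarith
end

section
/- Fix ψ, d₁, d₂ > 0 and define Θ_{ψ,d₁,d₂} := {(L,D) ∈ Θ_G : |L_{ij}| ≤ ψ for all i > j with (i,j) ∈ E, and d₁ ≤ D_{ii} ≤ d₂ for all i}. Let Ũ be an m×m real symmetric positive definite matrix and α̃ ∈ ℝ^m with α̃_i > 2 for all i. Then there exists δ > 0 such that for every (L,D) ∈ Θ_{ψ,d₁,d₂} and every i = 1,…,m: f_IG(D_{ii} | α̃_i/2 − 1, (L⁻¹ Ũ (Lᵀ)⁻¹)_{ii}/2) > δ. -/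
open Matrix

lemma aux_posdef_conj' {n : ℕ} {A : Matrix (Fin n) (Fin n) ℝ} (hA : A.PosDef)
    {B : Matrix (Fin n) (Fin n) ℝ} (hB : IsUnit B) : (Bᴴ * A * B).PosDef := by
  refine PosDef.of_dotProduct_mulVec_pos ?_ ?_
  · exact isHermitian_conjTranspose_mul_mul B hA.1
  · intro x hx
    have hBx : B *ᵥ x ≠ 0 := by
      intro h
      exact hx (Matrix.mulVec_injective_iff_isUnit.2 hB (by simp [h]))
    have := hA.dotProduct_mulVec_pos hBx
    simpa only [star_mulVec, dotProduct_mulVec, vecMul_vecMul] using this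

lemma aux_posdef_conj {n : ℕ} {A : Matrix (Fin n) (Fin n) ℝ} (hA : A.PosDef)
    {B : Matrix (Fin n) (Fin n) ℝ} (hB : IsUnit B) : (B * A * Bᵀ).PosDef := by
  have h1 : IsUnit Bᵀ := by
    rw [Matrix.isUnit_iff_isUnit_det, Matrix.det_transpose, ← Matrix.isUnit_iff_isUnit_det]
    exact hB
  have := aux_posdef_conj' hA h1
  rwa [show (Bᵀ)ᴴ = B by rw [conjTranspose_eq_transpose_of_trivial, transpose_transpose]] at this

lemma aux_posdef_diag {n : ℕ} {A : Matrix (Fin n) (Fin n) ℝ} (hA : A.PosDef) (i : Fin n) :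
    0 < A i i := by
  have h := hA.dotProduct_mulVec_pos (x := Pi.single i 1) (by simp [Pi.single_eq_same, Function.ne_iff])
  simpa [single_dotProduct, mulVec_single] using h

/-- on the compact set `Θ_{ψ,d₁,d₂}` of pairs `(L,D) ∈ Θ_G` with
`|L_{ij}| ≤ ψ` (for `i > j`, `(i,j) ∈ E`) and `d₁ ≤ D_{ii} ≤ d₂`, the inverse-gamma
densities `f_IG(D_{ii} | α̃ᵢ/2 − 1, (L⁻¹ Ũ (Lᵀ)⁻¹)_{ii}/2)` are uniformly bounded below
by some `δ > 0`. Here `f_IG(d | a, λ) = λ^a Γ(a)⁻¹ d^{−a−1} e^{−λ/d}`. -/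
theorem stmt_10 {m : ℕ} (hm : 0 < m) (E : Finset (Fin m × Fin m))
    (hsymm : ∀ i j : Fin m, (i, j) ∈ E → (j, i) ∈ E)
    (hirr : ∀ i : Fin m, (i, i) ∉ E)
    (ψ d₁ d₂ : ℝ) (hψ : 0 < ψ) (hd₁ : 0 < d₁) (hd₂ : 0 < d₂)
    (Ut : Matrix (Fin m) (Fin m) ℝ) (hUt : Ut.PosDef)
    (αt : Fin m → ℝ) (hαt : ∀ i, 2 < αt i) :
    ∃ δ : ℝ, 0 < δ ∧
      ∀ (L : Matrix (Fin m) (Fin m) ℝ) (d : Fin m → ℝ),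
        (∀ i j : Fin m, i < j → L i j = 0) →
        (∀ i : Fin m, L i i = 1) →
        (∀ i j : Fin m, j < i → (i, j) ∉ E → L i j = 0) →
        (∀ i j : Fin m, j < i → (i, j) ∈ E → |L i j| ≤ ψ) →
        (∀ i : Fin m, d₁ ≤ d i ∧ d i ≤ d₂) →
        ∀ i : Fin m,
          δ < ((L⁻¹ * Ut * (Lᵀ)⁻¹) i i / 2) ^ (αt i / 2 - 1) /
              Real.Gamma (αt i / 2 - 1) *
              (d i) ^ (-(αt i / 2 - 1) - 1) *
              Real.exp (-((L⁻¹ * Ut * (Lᵀ)⁻¹) i i / 2) / d i) := by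
  classical
  haveI : Nonempty (Fin m) := ⟨⟨0, hm⟩⟩
  -- handle the vacuous case d₂ < d₁
  rcases lt_or_ge d₂ d₁ with hdd | hdd
  · refine ⟨1, one_pos, fun L d _ _ _ _ hd i => ?_⟩
    exact absurd ((hd i).1.trans (hd i).2) (not_le.2 hdd)
  set C : Fin m → Fin m → Set ℝ := fun i j =>
    if i = j then {1} else if j < i ∧ (i, j) ∈ E then Set.Icc (-ψ) ψ else {0} with hC
  set S : Set (Matrix (Fin m) (Fin m) ℝ × (Fin m → ℝ)) :=
    (Set.univ.pi fun i => Set.univ.pi fun j => C i j) ×ˢ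
      (Set.univ.pi fun _ : Fin m => Set.Icc d₁ d₂) with hS
  have hScompact : IsCompact S := by
    refine IsCompact.prod (isCompact_univ_pi fun i => isCompact_univ_pi fun j => ?_)
      (isCompact_univ_pi fun _ => isCompact_Icc)
    by_cases h1 : i = j
    · simp [hC, h1]
    · by_cases h2 : j < i ∧ (i, j) ∈ E
      · simp [hC, h1, h2]; exact isCompact_Icc
      · simp only [hC, if_neg h1, if_neg h2]; exact isCompact_singleton
  -- basic facts about points of S
  have hL0 : ∀ p ∈ S, ∀ i j : Fin m, i < j → p.1 i j = 0 := by
    intro p hp i j hij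
    have := hp.1 i (Set.mem_univ i) j (Set.mem_univ j)
    rw [hC] at this
    simp only [if_neg hij.ne, if_neg (fun h : j < i ∧ _ => absurd h.1 (asymm hij))] at this
    simpa using this
  have hL1 : ∀ p ∈ S, ∀ i : Fin m, p.1 i i = 1 := by
    intro p hp i
    have := hp.1 i (Set.mem_univ i) i (Set.mem_univ i)
    rw [hC] at this
    simpa using this
  have hdet : ∀ p ∈ S, p.1.det = 1 := by
    intro p hp
    have htri : p.1.BlockTriangular OrderDual.toDual := by
      intro i j hij
      exact hL0 p hp i j hij
    rw [Matrix.det_of_lowerTriangular p.1 htri]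
    simp [hL1 p hp]
  have hdpos : ∀ p ∈ S, ∀ i : Fin m, 0 < p.2 i := by
    intro p hp i
    exact lt_of_lt_of_le hd₁ (hp.2 i (Set.mem_univ i)).1
  have hMpos : ∀ p ∈ S, ∀ i : Fin m, 0 < (p.1⁻¹ * Ut * (p.1ᵀ)⁻¹) i i := by
    intro p hp i
    have hu : IsUnit p.1 := by
      apply Matrix.isUnit_iff_isUnit_det _ |>.2
      rw [hdet p hp]; exact isUnit_one
    have hinvu : IsUnit p.1⁻¹ := by
      rw [Matrix.isUnit_iff_isUnit_det, Matrix.det_nonsing_inv, hdet p hp]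
      simp
    have hT : (p.1ᵀ)⁻¹ = (p.1⁻¹)ᵀ := (Matrix.transpose_nonsing_inv p.1).symm
    rw [hT]
    exact aux_posdef_diag (aux_posdef_conj hUt hinvu) i
  -- positivity of the density on S
  have hapos : ∀ i : Fin m, 0 < αt i / 2 - 1 := fun i => by linarith [hαt i]
  set f : Fin m → (Matrix (Fin m) (Fin m) ℝ × (Fin m → ℝ)) → ℝ := fun i p =>
    ((p.1⁻¹ * Ut * (p.1ᵀ)⁻¹) i i / 2) ^ (αt i / 2 - 1) / Real.Gamma (αt i / 2 - 1) *
      (p.2 i) ^ (-(αt i / 2 - 1) - 1) *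
      Real.exp (-((p.1⁻¹ * Ut * (p.1ᵀ)⁻¹) i i / 2) / p.2 i) with hf
  have hfpos : ∀ i : Fin m, ∀ p ∈ S, 0 < f i p := by
    intro i p hp
    have h1 := hMpos p hp i
    have h2 := hdpos p hp i
    exact mul_pos (mul_pos (div_pos (Real.rpow_pos_of_pos (by linarith) _)
      (Real.Gamma_pos_of_pos (hapos i))) (Real.rpow_pos_of_pos h2 _)) (Real.exp_pos _)
  -- continuity on S
  have hdetcont : ContinuousOn (fun p : Matrix (Fin m) (Fin m) ℝ × (Fin m → ℝ) =>
      (p.1.det)⁻¹) S := by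
    refine ContinuousOn.inv₀ ((continuous_fst.matrix_det).continuousOn) ?_
    intro p hp; rw [hdet p hp]; exact one_ne_zero
  have hinvcont : ContinuousOn (fun p : Matrix (Fin m) (Fin m) ℝ × (Fin m → ℝ) =>
      p.1⁻¹) S := by
    have : (fun p : Matrix (Fin m) (Fin m) ℝ × (Fin m → ℝ) => p.1⁻¹)
        = fun p => (p.1.det)⁻¹ • p.1.adjugate := by
      funext p; rw [Matrix.inv_def, Ring.inverse_eq_inv']
    rw [this]
    exact hdetcont.smul (continuous_fst.matrix_adjugate).continuousOn
  have hinvTcont : ContinuousOn (fun p : Matrix (Fin m) (Fin m) ℝ × (Fin m → ℝ) =>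
      (p.1ᵀ)⁻¹) S := by
    have : (fun p : Matrix (Fin m) (Fin m) ℝ × (Fin m → ℝ) => (p.1ᵀ)⁻¹)
        = fun p => (p.1⁻¹)ᵀ := by
      funext p; rw [Matrix.transpose_nonsing_inv]
    rw [this]
    exact (continuous_id.matrix_transpose).comp_continuousOn hinvcont
  have hMcont : ∀ i : Fin m, ContinuousOn (fun p : Matrix (Fin m) (Fin m) ℝ × (Fin m → ℝ) =>
      (p.1⁻¹ * Ut * (p.1ᵀ)⁻¹) i i) S := by
    intro i
    have h1 : ContinuousOn (fun p : Matrix (Fin m) (Fin m) ℝ × (Fin m → ℝ) =>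
        p.1⁻¹ * Ut * (p.1ᵀ)⁻¹) S := (hinvcont.mul continuousOn_const).mul hinvTcont
    have h2 : Continuous (fun M : Matrix (Fin m) (Fin m) ℝ => M i i) :=
      continuous_id.matrix_elem i i
    exact h2.comp_continuousOn h1
  have hdcont : ∀ i : Fin m, Continuous (fun p : Matrix (Fin m) (Fin m) ℝ × (Fin m → ℝ) =>
      p.2 i) := fun i => (continuous_apply i).comp continuous_snd
  have hfcont : ∀ i : Fin m, ContinuousOn (f i) S := by
    intro i
    have h1 : ContinuousOn (fun p : Matrix (Fin m) (Fin m) ℝ × (Fin m → ℝ) =>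
        ((p.1⁻¹ * Ut * (p.1ᵀ)⁻¹) i i / 2) ^ (αt i / 2 - 1)) S := by
      refine ((hMcont i).div_const 2).rpow_const ?_
      intro p hp; exact Or.inl (ne_of_gt (by linarith [hMpos p hp i]))
    have h2 : ContinuousOn (fun p : Matrix (Fin m) (Fin m) ℝ × (Fin m → ℝ) =>
        (p.2 i) ^ (-(αt i / 2 - 1) - 1)) S := by
      refine ((hdcont i).continuousOn).rpow_const ?_
      intro p hp; exact Or.inl (ne_of_gt (hdpos p hp i))
    have h3 : ContinuousOn (fun p : Matrix (Fin m) (Fin m) ℝ × (Fin m → ℝ) =>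
        Real.exp (-((p.1⁻¹ * Ut * (p.1ᵀ)⁻¹) i i / 2) / p.2 i)) S := by
      refine Real.continuous_exp.comp_continuousOn ?_
      refine ContinuousOn.div (((hMcont i).div_const 2).neg) ((hdcont i).continuousOn) ?_
      intro p hp; exact ne_of_gt (hdpos p hp i)
    exact ((h1.div_const _).mul h2).mul h3
  -- S is nonempty
  have hSne : S.Nonempty := by
    refine ⟨⟨(1 : Matrix (Fin m) (Fin m) ℝ), fun _ => d₁⟩, ?_, ?_⟩
    · intro i _
      intro j _
      rw [hC]
      by_cases h1 : i = j
      · simp [h1, Matrix.one_apply]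
      · by_cases h2 : j < i ∧ (i, j) ∈ E
        · simp only [if_neg h1, if_pos h2]
          rw [Matrix.one_apply_ne h1]
          exact ⟨by linarith, le_of_lt hψ⟩
        · simp only [if_neg h1, if_neg h2]
          rw [Matrix.one_apply_ne h1]
          exact rfl
    · intro i _
      exact ⟨le_refl _, hdd⟩
  -- extract minima
  have key : ∀ i : Fin m, ∃ δ : ℝ, 0 < δ ∧ ∀ p ∈ S, δ < f i p := by
    intro i
    obtain ⟨p₀, hp₀, hmin⟩ := hScompact.exists_isMinOn hSne (hfcont i)
    refine ⟨f i p₀ / 2, by linarith [hfpos i p₀ hp₀], fun p hp => ?_⟩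
    have := hmin hp
    have h0 := hfpos i p₀ hp₀
    calc f i p₀ / 2 < f i p₀ := by linarith
    _ ≤ f i p := this
  choose δf hδfpos hδf using key
  refine ⟨Finset.univ.inf' Finset.univ_nonempty δf, ?_, ?_⟩
  · rw [Finset.lt_inf'_iff]
    exact fun i _ => hδfpos i
  · intro L d h1 h2 h3 h4 h5 i
    have hmem : (L, d) ∈ S := by
      constructor
      · intro a _ b _
        rw [hC]
        rcases lt_trichotomy a b with hab | hab | hab
        · have hnot : ¬ (b < a ∧ (a, b) ∈ E) := fun h => absurd h.1 (asymm hab)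
          simp only [if_neg hab.ne, if_neg hnot]
          rw [h1 a b hab]; exact rfl
        · subst hab
          simp only [if_pos rfl]
          rw [h2 a]; exact rfl
        · by_cases hE : (a, b) ∈ E
          · simp only [if_neg hab.ne', if_pos (And.intro hab hE)]
            exact abs_le.1 (h4 a b hab hE)
          · have hnot : ¬ (b < a ∧ (a, b) ∈ E) := fun h => absurd h.2 hE
            simp only [if_neg hab.ne', if_neg hnot]
            rw [h3 a b hab hE]; exact rfl

      · intro j _
        exact ⟨(h5 j).1, (h5 j).2⟩
    calc Finset.univ.inf' Finset.univ_nonempty δf ≤ δf i := Finset.inf'_le _ (Finset.mem_univ i)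
    _ < f i (L, d) := hδf i (L, d) hmem
end

section
/- Let G = (V,E) be a homogeneous graph on V = {1,…,m}. Then there exists a bijection σ : {1,…,m} → {1,…,m} such that, writing G_σ for the graph with edge set E_σ := {(σ(i),σ(j)) : (i,j) ∈ E}, the following two properties hold: (1) for every m×m real positive definite matrix Σ written as Σ = LDLᵀ with L unit lower-triangular and D diagonal with positive diagonal entries, one has [Σ_{ij} = 0 for all i ≠ j with (i,j) ∉ E_σ] if and only if L ∈ 𝓛_{G_σ}; (2) for every m×m real unit lower-triangular matrix L, one has L ∈ 𝓛_{G_σ} if and only if L⁻¹ ∈ 𝓛_{G_σ}. -/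
open Matrix

section Aux

variable {m : ℕ}

lemma udet (L : Matrix (Fin m) (Fin m) ℝ)
    (hlow : ∀ i j, i < j → L i j = 0) (hdiag : ∀ i, L i i = 1) :
    IsUnit L.det := by
  have hBT : L.BlockTriangular OrderDual.toDual := fun i j h => hlow i j h
  rw [Matrix.det_of_lowerTriangular L hBT]
  simp [hdiag]

lemma sigma_apply (L : Matrix (Fin m) (Fin m) ℝ) (d : Fin m → ℝ) (i j : Fin m) :
    (L * Matrix.diagonal d * Lᵀ) i j = ∑ k, L i k * d k * L j k := by
  rw [Matrix.mul_apply]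
  refine Finset.sum_congr rfl fun k _ => ?_
  rw [Matrix.mul_diagonal, Matrix.transpose_apply]

lemma chol_zero (e : Fin m → Fin m → Prop)
    (hA : ∀ i j k : Fin m, k < j → j < i → e i k → e j k → e i j)
    (L : Matrix (Fin m) (Fin m) ℝ) (d : Fin m → ℝ)
    (hlow : ∀ i j, i < j → L i j = 0)
    (hL : ∀ i j, j < i → ¬ e i j → L i j = 0)
    {i j : Fin m} (hji : j < i) (hij : ¬ e i j) :
    ∑ k, L i k * d k * L j k = 0 := by
  apply Finset.sum_eq_zero
  intro k _
  rcases lt_trichotomy k j with hk | rfl | hk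
  · by_cases h1 : e i k
    · by_cases h2 : e j k
      · exact absurd (hA i j k hk hji h1 h2) hij
      · rw [hL j k hk h2]; ring
    · rw [hL i k (hk.trans hji) h1]; ring
  · rw [hL i k hji hij]; ring
  · rw [hlow j k hk]; ring

lemma chol_rev (e : Fin m → Fin m → Prop)
    (hA : ∀ i j k : Fin m, k < j → j < i → e i k → e j k → e i j)
    (L : Matrix (Fin m) (Fin m) ℝ) (d : Fin m → ℝ)
    (hlow : ∀ i j, i < j → L i j = 0) (hdiag : ∀ i, L i i = 1)
    (hd : ∀ i, 0 < d i)
    (hS : ∀ i j, j < i → ¬ e i j → ∑ k, L i k * d k * L j k = 0) :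
    ∀ i j, j < i → ¬ e i j → L i j = 0 := by
  suffices H : ∀ n : ℕ, ∀ j : Fin m, (j : ℕ) < n → ∀ i, j < i → ¬ e i j → L i j = 0 by
    intro i j hji hij
    exact H m j j.isLt i hji hij
  intro n
  induction n with
  | zero => intro j hj; omega
  | succ n IH =>
    intro j hj i hji hij
    have hs := hS i j hji hij
    have hsum : ∑ k, L i k * d k * L j k = L i j * d j := by
      rw [Finset.sum_eq_single_of_mem j (Finset.mem_univ j)]
      · rw [hdiag j]; ring
      · intro k _ hkj
        rcases lt_or_gt_of_ne hkj with hk | hk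
        · by_cases h1 : e i k
          · by_cases h2 : e j k
            · exact absurd (hA i j k hk hji h1 h2) hij
            · rw [IH k (by omega) j hk h2]; ring
          · rw [IH k (by omega) i (hk.trans hji) h1]; ring
        · rw [hlow j k hk]; ring
    rw [hsum] at hs
    have := (hd j).ne'
    exact by
      rcases mul_eq_zero.mp hs with h | h
      · exact h
      · exact absurd h this

lemma unit_lower_facts (L : Matrix (Fin m) (Fin m) ℝ)
    (hlow : ∀ i j, i < j → L i j = 0) (hdiag : ∀ i, L i i = 1) :
    L⁻¹ * L = 1 ∧ (∀ i j, i < j → L⁻¹ i j = 0) ∧ (∀ i, L⁻¹ i i = 1) := by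
  have hu := udet L hlow hdiag
  have hBT : L.BlockTriangular OrderDual.toDual := fun i j h => hlow i j h
  haveI := L.invertibleOfIsUnitDet hu
  have hinv : L⁻¹.BlockTriangular OrderDual.toDual :=
    Matrix.blockTriangular_inv_of_blockTriangular hBT
  have hmul : L⁻¹ * L = 1 := Matrix.nonsing_inv_mul L hu
  refine ⟨hmul, fun i j h => hinv h, fun i => ?_⟩
  have h1 : (L⁻¹ * L) i i = 1 := by rw [hmul]; simp
  rw [Matrix.mul_apply] at h1
  rw [Finset.sum_eq_single_of_mem i (Finset.mem_univ i)] at h1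
  · rw [hdiag i, mul_one] at h1; exact h1
  · intro k _ hki
    rcases lt_or_gt_of_ne hki with hk | hk
    · rw [hlow k i hk]; ring
    · rw [hinv (show OrderDual.toDual k < OrderDual.toDual i from hk)]; ring

lemma inv_pattern (e : Fin m → Fin m → Prop)
    (hB : ∀ i j k : Fin m, k < j → j < i → e i j → e j k → e i k)
    (L : Matrix (Fin m) (Fin m) ℝ)
    (hlow : ∀ i j, i < j → L i j = 0) (hdiag : ∀ i, L i i = 1)
    (hL : ∀ i j, j < i → ¬ e i j → L i j = 0) :
    ∀ i j, j < i → ¬ e i j → L⁻¹ i j = 0 := by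
  obtain ⟨hmul, hilow, hidiag⟩ := unit_lower_facts L hlow hdiag
  suffices H : ∀ n : ℕ, ∀ i j : Fin m, (i : ℕ) - (j : ℕ) < n → j < i → ¬ e i j → L⁻¹ i j = 0 by
    intro i j hji hij
    exact H ((i : ℕ) - j + 1) i j (by omega) hji hij
  intro n
  induction n with
  | zero => intro i j hij; omega
  | succ n IH =>
    intro i j hn hji hij
    have h0 : (L⁻¹ * L) i j = 0 := by rw [hmul]; exact Matrix.one_apply_ne hji.ne'
    rw [Matrix.mul_apply] at h0
    rw [Finset.sum_eq_single_of_mem j (Finset.mem_univ j)] at h0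
    · rw [hdiag j, mul_one] at h0; exact h0
    · intro k _ hkj
      rcases lt_or_gt_of_ne hkj with hk | hk
      · rw [hlow k j hk]; ring
      · rcases lt_trichotomy k i with hki | rfl | hki
        · by_cases h1 : e i k
          · by_cases h2 : e k j
            · exact absurd (hB i k j hk hki h1 h2) hij
            · rw [hL k j hk h2]; ring
          · rw [IH i k (by have := hn; have h3 : (j:ℕ) < k := hk; omega) hki h1]; ring
        · rw [hL k j hk hij]; ring
        · rw [hilow i k hki]; ring

end Aux

/-- for a homogeneous graph `G = (V,E)` on `{1,…,m}` there is a relabelling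
`σ` of the vertices such that, for the relabelled graph `G_σ` (with `(i,j)` an edge of `G_σ`
iff `(σ⁻¹ i, σ⁻¹ j) ∈ E`): (1) a positive definite `Σ = L D Lᵀ` (modified Cholesky
decomposition) satisfies the zero pattern of `G_σ` iff `L ∈ 𝓛_{G_σ}`; and (2) a unit
lower-triangular `L` lies in `𝓛_{G_σ}` iff `L⁻¹` does. -/
theorem stmt_11 {m : ℕ} (hm : 0 < m) (E : Finset (Fin m × Fin m))
    (hsymm : ∀ i j : Fin m, (i, j) ∈ E → (j, i) ∈ E)
    (hirr : ∀ i : Fin m, (i, i) ∉ E)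
    (hhom : ∀ i j : Fin m, (i, j) ∈ E →
      (({j} ∪ {u : Fin m | (u, j) ∈ E} : Set (Fin m)) ⊆
          ({i} ∪ {u : Fin m | (u, i) ∈ E} : Set (Fin m))) ∨
      (({i} ∪ {u : Fin m | (u, i) ∈ E} : Set (Fin m)) ⊆
          ({j} ∪ {u : Fin m | (u, j) ∈ E} : Set (Fin m)))) :
    ∃ σ : Equiv.Perm (Fin m),
      (∀ (L : Matrix (Fin m) (Fin m) ℝ) (d : Fin m → ℝ),
        (∀ i j : Fin m, i < j → L i j = 0) →
        (∀ i : Fin m, L i i = 1) →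
        (∀ i : Fin m, 0 < d i) →
        ((∀ i j : Fin m, i ≠ j → (σ.symm i, σ.symm j) ∉ E →
            (L * Matrix.diagonal d * Lᵀ) i j = 0) ↔
          (∀ i j : Fin m, j < i → (σ.symm i, σ.symm j) ∉ E → L i j = 0))) ∧
      (∀ L : Matrix (Fin m) (Fin m) ℝ,
        (∀ i j : Fin m, i < j → L i j = 0) →
        (∀ i : Fin m, L i i = 1) →
        ((∀ i j : Fin m, j < i → (σ.symm i, σ.symm j) ∉ E → L i j = 0) ↔
          (∀ i j : Fin m, j < i → (σ.symm i, σ.symm j) ∉ E → L⁻¹ i j = 0))) := by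
  classical
  set N : Fin m → Finset (Fin m) :=
    fun v => Finset.univ.filter (fun u => u = v ∨ (u, v) ∈ E) with hN
  set f : Fin m → ℕ := fun v => (N v).card with hf
  set τ : Equiv.Perm (Fin m) := Tuple.sort f with hτ
  have hmono : Monotone (f ∘ τ) := Tuple.monotone_sort f
  have hNmem : ∀ u v : Fin m, u ∈ N v ↔ (u = v ∨ (u, v) ∈ E) := by
    intro u v; simp [hN]
  have hclN : ∀ u v : Fin m,
      u ∈ ({v} ∪ {w : Fin m | (w, v) ∈ E} : Set (Fin m)) ↔ u ∈ N v := by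
    intro u v; simp [hNmem]
  have hnest : ∀ a b : Fin m, (a, b) ∈ E → N a ⊆ N b ∨ N b ⊆ N a := by
    intro a b hab
    rcases hhom a b hab with h | h
    · exact Or.inr fun u hu => (hclN u a).mp (h ((hclN u b).mpr hu))
    · exact Or.inl fun u hu => (hclN u b).mp (h ((hclN u a).mpr hu))
  have hkey : ∀ i j : Fin m, j ≤ i → (τ i, τ j) ∈ E → N (τ j) ⊆ N (τ i) := by
    intro i j hji he
    rcases hnest (τ i) (τ j) he with h | h
    · have hc : (N (τ j)).card ≤ (N (τ i)).card := hmono hji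
      intro u hu; rwa [Finset.eq_of_subset_of_card_le h hc]
    · exact h
  have hA : ∀ i j k : Fin m, k < j → j < i →
      (τ i, τ k) ∈ E → (τ j, τ k) ∈ E → (τ i, τ j) ∈ E := by
    intro i j k hkj hji h1 h2
    have h3 : τ j ∈ N (τ i) :=
      hkey i k (hkj.trans hji).le h1 ((hNmem _ _).mpr (Or.inr h2))
    rcases (hNmem _ _).mp h3 with h4 | h4
    · exact absurd (τ.injective h4) hji.ne
    · exact hsymm _ _ h4
  have hB : ∀ i j k : Fin m, k < j → j < i →
      (τ i, τ j) ∈ E → (τ j, τ k) ∈ E → (τ i, τ k) ∈ E := by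
    intro i j k hkj hji h1 h2
    have h3 : τ k ∈ N (τ i) :=
      hkey i j hji.le h1 ((hNmem _ _).mpr (Or.inr (hsymm _ _ h2)))
    rcases (hNmem _ _).mp h3 with h4 | h4
    · exact absurd (τ.injective h4) (hkj.trans hji).ne
    · exact hsymm _ _ h4
  refine ⟨τ.symm, ?_, ?_⟩
  · intro L d hlow hdiag hd
    simp only [Equiv.symm_symm]
    constructor
    · intro hS
      apply chol_rev (fun i j => (τ i, τ j) ∈ E) hA L d hlow hdiag hd
      intro i j hji hij
      rw [← sigma_apply]
      exact hS i j hji.ne' hij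
    · intro hLp i j hne hij
      rw [sigma_apply]
      rcases hne.lt_or_gt with h | h
      · have hij' : (τ j, τ i) ∉ E := fun hc => hij (hsymm _ _ hc)
        have h0 := chol_zero (fun i j => (τ i, τ j) ∈ E) hA L d hlow hLp h hij'
        calc ∑ k, L i k * d k * L j k = ∑ k, L j k * d k * L i k :=
              Finset.sum_congr rfl fun k _ => by ring
          _ = 0 := h0
      · exact chol_zero (fun i j => (τ i, τ j) ∈ E) hA L d hlow hLp h hij
  · intro L hlow hdiag
    simp only [Equiv.symm_symm]
    constructor
    · exact fun h i j hji hij =>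
        inv_pattern (fun i j => (τ i, τ j) ∈ E) hB L hlow hdiag h i j hji hij
    · intro h i j hji hij
      obtain ⟨hmul, hilow, hidiag⟩ := unit_lower_facts L hlow hdiag
      have hu := udet L hlow hdiag
      have h5 := inv_pattern (fun i j => (τ i, τ j) ∈ E) hB L⁻¹ hilow hidiag h i j hji hij
      rwa [Matrix.nonsing_inv_nonsing_inv L hu] at h5
end

section
/- Let L be an m×m real unit lower-triangular matrix, D an m×m diagonal matrix with all D_{ii} > 0, and Σ := LDLᵀ. Fix i ∈ {1,…,m} and a nonempty subset A ⊆ {1,…,i−1}, and suppose that (L⁻¹)_{ij} = 0 for every j < i with j ∉ A. Then, with Σ_{A,A} := (Σ_{kl})_{k,l∈A} (which is invertible) and Σ_{A,i} := (Σ_{ki})_{k∈A}: (a) the row vector ((L⁻¹)_{ik})_{k∈A} equals −((Σ_{A,A})⁻¹ Σ_{A,i})ᵀ; and (b) D_{ii} = Σ_{ii} − Σ_{A,i}ᵀ (Σ_{A,A})⁻¹ Σ_{A,i}. -/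
open Matrix

/-- let `Σ = L D Lᵀ` with `L` unit lower-triangular and `D` diagonal positive.
Fix `i` and a nonempty `A ⊆ {1,…,i−1}`, and assume `(L⁻¹)_{ij} = 0` for every `j < i` with
`j ∉ A`. Then `Σ_{A,A}` is invertible, the row `((L⁻¹)_{ik})_{k∈A}` equals
`−((Σ_{A,A})⁻¹ Σ_{A,i})ᵀ`, and `D_{ii} = Σ_{ii} − Σ_{A,i}ᵀ (Σ_{A,A})⁻¹ Σ_{A,i}`. -/
theorem stmt_12 {m : ℕ} (hm : 0 < m) (L : Matrix (Fin m) (Fin m) ℝ)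
    (hlow : ∀ i j : Fin m, i < j → L i j = 0)
    (hdiag : ∀ i : Fin m, L i i = 1)
    (d : Fin m → ℝ) (hd : ∀ i, 0 < d i)
    (i : Fin m) (A : Finset (Fin m)) (hA : A.Nonempty) (hAi : ∀ j ∈ A, j < i)
    (hzero : ∀ j : Fin m, j < i → j ∉ A → L⁻¹ i j = 0) :
    IsUnit (Matrix.of fun k l : A =>
        (L * Matrix.diagonal d * Lᵀ) (k : Fin m) (l : Fin m)).det ∧
    (∀ k : A,
      L⁻¹ i (k : Fin m) =
        -(((Matrix.of fun k l : A =>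
              (L * Matrix.diagonal d * Lᵀ) (k : Fin m) (l : Fin m))⁻¹ *ᵥ
            fun k : A => (L * Matrix.diagonal d * Lᵀ) (k : Fin m) i) k)) ∧
    d i = (L * Matrix.diagonal d * Lᵀ) i i -
      (fun k : A => (L * Matrix.diagonal d * Lᵀ) (k : Fin m) i) ⬝ᵥ
        ((Matrix.of fun k l : A =>
            (L * Matrix.diagonal d * Lᵀ) (k : Fin m) (l : Fin m))⁻¹ *ᵥ
          fun k : A => (L * Matrix.diagonal d * Lᵀ) (k : Fin m) i) := by
  classical
  set Sg : Matrix (Fin m) (Fin m) ℝ := L * Matrix.diagonal d * Lᵀ with hSg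
  -- L is lower triangular
  have hLtri : L.BlockTriangular OrderDual.toDual := by
    intro a b hab
    exact hlow a b hab
  have hdetL : L.det = 1 := by
    rw [Matrix.det_of_lowerTriangular L hLtri]
    simp [hdiag]
  have hLunit : IsUnit L.det := by rw [hdetL]; exact isUnit_one
  haveI : Invertible L := L.invertibleOfIsUnitDet hLunit
  have hMtri : (L⁻¹).BlockTriangular OrderDual.toDual :=
    Matrix.blockTriangular_inv_of_blockTriangular hLtri
  have hMupper : ∀ a b : Fin m, a < b → L⁻¹ a b = 0 := fun a b hab => hMtri hab
  -- Sg is symmetric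
  have hsymm : ∀ a b : Fin m, Sg a b = Sg b a := by
    have : Sgᵀ = Sg := by
      rw [hSg]
      rw [Matrix.transpose_mul, Matrix.transpose_mul, Matrix.transpose_transpose,
        Matrix.diagonal_transpose, Matrix.mul_assoc]
    intro a b
    conv_rhs => rw [← this]
    rfl
  -- Sg is positive definite
  have hSgpos : Sg.PosDef := by
    rw [Matrix.posDef_iff_dotProduct_mulVec]
    constructor
    · show Sgᴴ = Sg
      ext a b
      simp only [Matrix.conjTranspose_apply, star_trivial]
      exact hsymm b a
    · intro x hx
      set z : Fin m → ℝ := Lᵀ *ᵥ x with hz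
      have hzne : z ≠ 0 := by
        intro h
        apply hx
        haveI : Invertible Lᵀ := Lᵀ.invertibleOfIsUnitDet (Matrix.isUnit_det_transpose L hLunit)
        have hinj := Matrix.mulVec_injective_of_invertible Lᵀ
        exact hinj (by simpa [hz] using h)
      have key : dotProduct (star x) (Sg *ᵥ x) = ∑ j, z j * (d j * z j) := by
        rw [hSg, star_trivial, ← Matrix.mulVec_mulVec, ← Matrix.mulVec_mulVec,
          Matrix.dotProduct_mulVec, ← Matrix.mulVec_transpose, ← hz]
        simp [dotProduct, Matrix.mulVec_diagonal]
      rw [key]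
      obtain ⟨j0, hj0⟩ := Function.ne_iff.mp hzne
      apply Finset.sum_pos'
      · intro j _
        nlinarith [(hd j).le, mul_self_nonneg (z j)]
      · exact ⟨j0, Finset.mem_univ _, by nlinarith [hd j0, mul_self_pos.mpr hj0]⟩
  -- the principal submatrix is positive definite
  set S : Matrix A A ℝ := Matrix.of fun k l : A => Sg (k : Fin m) (l : Fin m) with hS
  have hSpos : S.PosDef := by
    rw [Matrix.posDef_iff_dotProduct_mulVec]
    constructor
    · show Sᴴ = S
      ext a b
      simp only [Matrix.conjTranspose_apply, star_trivial, hS, Matrix.of_apply]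
      exact hsymm b a
    · intro x hx
      set y : Fin m → ℝ := fun j => if h : j ∈ A then x ⟨j, h⟩ else 0 with hy
      have hyne : y ≠ 0 := by
        intro h
        apply hx
        funext a
        have := congrFun h (a : Fin m)
        simpa [hy, a.2] using this
      have key : dotProduct (star x) (S *ᵥ x) = dotProduct (star y) (Sg *ᵥ y) := by
        simp only [star_trivial, Matrix.mulVec, dotProduct, Matrix.of_apply]
        rw [(Finset.sum_subset (Finset.subset_univ A)
          (fun j _ hj => by simp [hy, hj])).symm, ← Finset.sum_attach A
          (fun j => y j * ∑ k, Sg j k * y k), Finset.univ_eq_attach]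
        apply Finset.sum_congr rfl
        intro a _
        have hya : y (a : Fin m) = x a := by simp [hy, a.2]
        rw [hya]
        congr 1
        rw [show (∑ k : Fin m, Sg (a : Fin m) k * y k) = ∑ k ∈ A, Sg (a : Fin m) k * y k from
          (Finset.sum_subset (Finset.subset_univ A) (fun k _ hk => by simp [hy, hk])).symm,
          ← Finset.sum_attach A (fun k => Sg (a : Fin m) k * y k)]
        apply Finset.sum_congr rfl
        intro b _
        simp [hS, hy, b.2]
      rw [key]
      exact hSgpos.dotProduct_mulVec_pos hyne
  have hSdet : IsUnit S.det := hSpos.det_pos.ne'.isUnit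
  -- key identity: L⁻¹ * Sg = diagonal d * Lᵀ
  have hkey : L⁻¹ * Sg = Matrix.diagonal d * Lᵀ := by
    rw [hSg, ← Matrix.mul_assoc, ← Matrix.mul_assoc, Matrix.nonsing_inv_mul L hLunit,
      Matrix.one_mul]
  have hiA : i ∉ A := fun h => absurd (hAi i h) (lt_irrefl i)
  -- row equation, summed over insert i A
  have hrow : ∀ j : Fin m, L⁻¹ i i * Sg i j + ∑ k ∈ A, L⁻¹ i k * Sg k j = d i * L j i := by
    intro j
    have h1 : (L⁻¹ * Sg) i j = d i * L j i := by
      rw [hkey]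
      simp [Matrix.mul_apply, Matrix.diagonal, Matrix.mulVec]
    rw [Matrix.mul_apply] at h1
    have h2 : ∑ k ∈ insert i A, L⁻¹ i k * Sg k j = ∑ k, L⁻¹ i k * Sg k j := by
      apply Finset.sum_subset (Finset.subset_univ _)
      intro k _ hk
      simp only [Finset.mem_insert, not_or] at hk
      rcases lt_trichotomy k i with hki | hki | hki
      · rw [hzero k hki hk.2, zero_mul]
      · exact absurd hki hk.1
      · rw [hMupper i k hki, zero_mul]
    rw [Finset.sum_insert hiA] at h2
    rw [h2]
    exact h1
  -- diagonal entry of L⁻¹ is 1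
  have hMii : L⁻¹ i i = 1 := by
    have h1 : (L⁻¹ * L) i i = 1 := by rw [Matrix.nonsing_inv_mul L hLunit]; simp
    rw [Matrix.mul_apply] at h1
    rw [← h1]
    symm
    rw [Fintype.sum_eq_single i]
    · rw [hdiag, mul_one]
    · intro k hk
      rcases lt_trichotomy k i with hki | hki | hki
      · rw [hlow k i hki, mul_zero]
      · exact absurd hki hk
      · rw [hMupper i k hki, zero_mul]
  set v : A → ℝ := fun k => L⁻¹ i (k : Fin m) with hv
  set b : A → ℝ := fun k => Sg (k : Fin m) i with hb
  -- the normal equations: S *ᵥ v = -b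
  have hSv : S *ᵥ v = -b := by
    funext a
    have h0 : L⁻¹ i i * Sg i (a : Fin m) + ∑ k ∈ A, L⁻¹ i k * Sg k (a : Fin m)
        = d i * L (a : Fin m) i := hrow a
    rw [hlow (a : Fin m) i (hAi _ a.2), mul_zero, hMii, one_mul] at h0
    have hsum : (S *ᵥ v) a = ∑ k ∈ A, L⁻¹ i k * Sg k (a : Fin m) := by
      rw [← Finset.sum_attach A fun k => L⁻¹ i k * Sg k (a : Fin m)]
      show ∑ k : A, S a k * v k = _
      rw [Finset.univ_eq_attach]
      apply Finset.sum_congr rfl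
      intro k _
      simp only [hS, hv, Matrix.of_apply]
      rw [hsymm (a : Fin m) (k : Fin m), mul_comm]
    rw [hsum]
    have : ∑ k ∈ A, L⁻¹ i k * Sg k (a : Fin m) = -Sg i (a : Fin m) := by linarith
    rw [this]
    simp only [Pi.neg_apply, hb]
    rw [hsymm (a : Fin m) i]
  have hvb : v = -(S⁻¹ *ᵥ b) := by
    have : S⁻¹ *ᵥ (S *ᵥ v) = v := by
      rw [Matrix.mulVec_mulVec, Matrix.nonsing_inv_mul S hSdet, Matrix.one_mulVec]
    rw [← this, hSv, Matrix.mulVec_neg]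
  refine ⟨hSdet, fun k => congrFun hvb k, ?_⟩
  -- part (b)
  have h0 : L⁻¹ i i * Sg i i + ∑ k ∈ A, L⁻¹ i k * Sg k i = d i * L i i := hrow i
  rw [hMii, one_mul, hdiag, mul_one] at h0
  have hsum : ∑ k ∈ A, L⁻¹ i k * Sg k i = v ⬝ᵥ b := by
    rw [← Finset.sum_attach A fun k => L⁻¹ i k * Sg k i]
    show _ = ∑ k : A, v k * b k
    rw [Finset.univ_eq_attach]
  rw [hsum] at h0
  rw [hvb, neg_dotProduct, dotProduct_comm] at h0
  show d i = Sg i i - b ⬝ᵥ (S⁻¹ *ᵥ b)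
  linarith
end

section
/- Let L ∈ 𝓛_G, D an m×m diagonal matrix with all D_{ii} > 0, Σ := LDLᵀ, and U an m×m real symmetric positive definite matrix. Suppose that for every i, (L⁻¹)_{ij} = 0 for all j < i with j ∉ N^≺(i). For each i with N^≺(i) ≠ ∅, write Σ^{≺i} := (Σ_{kl})_{k,l∈N^≺(i)}, Σ^≺_{·i} := (Σ_{ki})_{k∈N^≺(i)}, U^{≺i} := (U_{kl})_{k,l∈N^≺(i)}, U^≺_{·i} := (U_{ki})_{k∈N^≺(i)}, β^Σ_i := (Σ^{≺i})⁻¹Σ^≺_{·i}, β^U_i := (U^{≺i})⁻¹U^≺_{·i}. Then tr(Σ⁻¹U) = Σ_{i=1}^m (1/D_{ii}) [ (β^Σ_i − β^U_i)ᵀ U^{≺i} (β^Σ_i − β^U_i) + U_{ii} − (U^≺_{·i})ᵀ (U^{≺i})⁻¹ U^≺_{·i} ], where for indices i with N^≺(i) = ∅ the summand is read as U_{ii}/D_{ii}. -/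
open Matrix

/-- Splitting a full sum into the subtype sum (all other terms vanish). -/
lemma sum_subtype_of_vanish {n : Type*} [Fintype n] (P : n → Prop) [DecidablePred P]
    (g : n → ℝ) (h0 : ∀ j, ¬ P j → g j = 0) :
    ∑ j, g j = ∑ k : Subtype P, g ↑k := by
  classical
  rw [← Finset.sum_filter_of_ne (p := P) (fun x _ hx => by_contra fun hP => hx (h0 x hP))]
  exact Finset.sum_subtype _ (by simp) g

/-- Splitting a full sum into a distinguished term plus the subtype sum. -/
lemma sum_split {n : Type*} [Fintype n] [DecidableEq n] (P : n → Prop) [DecidablePred P]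
    (i : n) (hPi : ¬ P i) (g : n → ℝ) (h0 : ∀ j, j ≠ i → ¬ P j → g j = 0) :
    ∑ j, g j = g i + ∑ k : Subtype P, g ↑k := by
  classical
  have h1 : ∀ j, g j = (if j = i then g i else 0) + (if P j then g j else 0) := by
    intro j
    by_cases h1 : j = i
    · subst h1; simp [hPi]
    · by_cases h2 : P j <;> simp [h1, h2, h0 j h1]
  rw [Finset.sum_congr rfl fun j _ => h1 j, Finset.sum_add_distrib]
  congr 1
  · simp
  · rw [← Finset.sum_filter]
    exact Finset.sum_subtype _ (by simp) g

/-- A principal submatrix (along a subtype inclusion) of a positive definite matrix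
is positive definite. -/
lemma posDef_submatrix_subtype {n : Type*} [Fintype n] [DecidableEq n]
    (P : n → Prop) [DecidablePred P] {M : Matrix n n ℝ} (hM : M.PosDef) :
    (M.submatrix (fun k : Subtype P => (k : n)) (fun k : Subtype P => (k : n))).PosDef := by
  classical
  refine Matrix.PosDef.of_dotProduct_mulVec_pos (hM.1.submatrix _) fun x hx => ?_
  set y : n → ℝ := fun j => if h : P j then x ⟨j, h⟩ else 0 with hy
  have hsum : ∀ f : n → ℝ, ∑ j, y j * f j = ∑ k : Subtype P, x k * f ↑k := by
    intro f
    rw [sum_subtype_of_vanish P (fun j => y j * f j)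
      (fun j hj => by simp [hy, hj])]
    refine Finset.sum_congr rfl fun k _ => ?_
    simp [hy, k.2]
  have hyk : ∀ k : Subtype P, y ↑k = x k := fun k => by simp [hy, k.2]
  have hyne : y ≠ 0 := by
    intro h
    apply hx
    funext k
    have := congrFun h ↑k
    rw [hyk] at this
    simpa using this
  have key : star x ⬝ᵥ ((M.submatrix (fun k : Subtype P => (k : n))
      (fun k : Subtype P => (k : n))) *ᵥ x) = star y ⬝ᵥ (M *ᵥ y) := by
    simp only [star_trivial, dotProduct, mulVec, submatrix_apply]
    rw [hsum fun j => ∑ j', M j j' * y j']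
    refine Finset.sum_congr rfl fun k _ => ?_
    congr 1
    rw [Finset.sum_congr rfl fun j _ => mul_comm (M (↑k) j) (y j), hsum fun j => M ↑k j]
    exact Finset.sum_congr rfl fun k' _ => mul_comm _ _
  rw [key]
  exact hM.dotProduct_mulVec_pos hyne

/-- The principal submatrix `M^{≺i}` of `M` on the index set `N^≺(i) = {j : (i,j) ∈ E, j < i}`. -/
noncomputable def predSub {m : ℕ} (E : Finset (Fin m × Fin m))
    (M : Matrix (Fin m) (Fin m) ℝ) (i : Fin m) :
    Matrix {j : Fin m // (i, j) ∈ E ∧ j < i} {j : Fin m // (i, j) ∈ E ∧ j < i} ℝ :=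
  Matrix.of fun k l => M (k : Fin m) (l : Fin m)

/-- The column `M^≺_{·i} = (M_{ki})_{k ∈ N^≺(i)}`. -/
noncomputable def predCol {m : ℕ} (E : Finset (Fin m × Fin m))
    (M : Matrix (Fin m) (Fin m) ℝ) (i : Fin m) :
    {j : Fin m // (i, j) ∈ E ∧ j < i} → ℝ :=
  fun k => M (k : Fin m) i

/-- with `Σ = L D Lᵀ`, `L ∈ 𝓛_G`, `(L⁻¹)_{ij} = 0` for `j < i`, `j ∉ N^≺(i)`,
`β^Σ_i = (Σ^{≺i})⁻¹ Σ^≺_{·i}` and `β^U_i = (U^{≺i})⁻¹ U^≺_{·i}`: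
`tr(Σ⁻¹U) = Σᵢ (1/Dᵢᵢ)[(β^Σ_i − β^U_i)ᵀ U^{≺i} (β^Σ_i − β^U_i) + Uᵢᵢ − (U^≺_{·i})ᵀ(U^{≺i})⁻¹U^≺_{·i}]`
(when `N^≺(i) = ∅` all the sub-vector terms vanish, so the summand reads `Uᵢᵢ/Dᵢᵢ`). -/
theorem stmt_13 {m : ℕ} (hm : 0 < m) (E : Finset (Fin m × Fin m))
    (hsymm : ∀ i j : Fin m, (i, j) ∈ E → (j, i) ∈ E)
    (hirr : ∀ i : Fin m, (i, i) ∉ E)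
    (L : Matrix (Fin m) (Fin m) ℝ)
    (hlow : ∀ i j : Fin m, i < j → L i j = 0)
    (hdiag : ∀ i : Fin m, L i i = 1)
    (hLG : ∀ i j : Fin m, j < i → (i, j) ∉ E → L i j = 0)
    (hinv : ∀ i j : Fin m, j < i → (i, j) ∉ E → L⁻¹ i j = 0)
    (d : Fin m → ℝ) (hd : ∀ i, 0 < d i)
    (U : Matrix (Fin m) (Fin m) ℝ) (hU : U.PosDef) :
    Matrix.trace ((L * Matrix.diagonal d * Lᵀ)⁻¹ * U)
      = ∑ i : Fin m, (1 / d i) *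
          ((((predSub E (L * Matrix.diagonal d * Lᵀ) i)⁻¹ *ᵥ
                predCol E (L * Matrix.diagonal d * Lᵀ) i) -
              ((predSub E U i)⁻¹ *ᵥ predCol E U i)) ⬝ᵥ
            (predSub E U i *ᵥ
              (((predSub E (L * Matrix.diagonal d * Lᵀ) i)⁻¹ *ᵥ
                  predCol E (L * Matrix.diagonal d * Lᵀ) i) -
                ((predSub E U i)⁻¹ *ᵥ predCol E U i)))
            + U i i - predCol E U i ⬝ᵥ ((predSub E U i)⁻¹ *ᵥ predCol E U i)) := by
  classical
  set S := L * Matrix.diagonal d * Lᵀ with hS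
  -- facts about L
  have hLtri : L.BlockTriangular OrderDual.toDual := fun i j h => hlow i j h
  have hLdet : L.det = 1 := by
    rw [Matrix.det_of_lowerTriangular L hLtri]
    simp [hdiag]
  have hLunit : IsUnit L.det := by rw [hLdet]; exact isUnit_one
  haveI : Invertible L := L.invertibleOfIsUnitDet hLunit
  have hLinvTri : L⁻¹.BlockTriangular OrderDual.toDual :=
    Matrix.blockTriangular_inv_of_blockTriangular hLtri
  have hLinvUp : ∀ i j : Fin m, i < j → L⁻¹ i j = 0 := fun i j h => hLinvTri h
  have hLinvDiag : ∀ i : Fin m, L⁻¹ i i = 1 := by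
    intro i
    have h1 := congrFun (congrFun (Matrix.nonsing_inv_mul L hLunit) i) i
    rw [Matrix.mul_apply, Matrix.one_apply_eq] at h1
    have h2 : (∑ k, L⁻¹ i k * L k i) = L⁻¹ i i * L i i := by
      refine Finset.sum_eq_single i (fun b _ hb => ?_) (by simp)
      rcases lt_or_gt_of_ne hb with h | h
      · rw [hlow b i h, mul_zero]
      · rw [hLinvUp i b h, zero_mul]
    rw [h2, hdiag, mul_one] at h1
    exact h1
  -- facts about S
  have hST : Sᵀ = S := by
    rw [hS]
    simp [Matrix.transpose_mul, Matrix.mul_assoc]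
  have hSsym : ∀ a b : Fin m, S a b = S b a := fun a b =>
    congrFun (congrFun hST b) a
  have hSpos : S.PosDef := by
    refine Matrix.PosDef.of_dotProduct_mulVec_pos ?_ ?_
    · show Sᴴ = S
      ext a b
      simp [Matrix.conjTranspose_apply, hSsym a b]
    · intro x hx
      have hdetLT : IsUnit (Lᵀ).det := by rwa [Matrix.det_transpose]
      have hxL : Lᵀ *ᵥ x ≠ 0 := by
        intro h
        apply hx
        have h1 : (Lᵀ)⁻¹ *ᵥ (Lᵀ *ᵥ x) = x := by
          rw [Matrix.mulVec_mulVec, Matrix.nonsing_inv_mul _ hdetLT, Matrix.one_mulVec]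
        rw [h, Matrix.mulVec_zero] at h1
        exact h1.symm
      have hquad : star x ⬝ᵥ (S *ᵥ x)
          = star (Lᵀ *ᵥ x) ⬝ᵥ (Matrix.diagonal d *ᵥ (Lᵀ *ᵥ x)) := by
        simp only [star_trivial, hS]
        rw [← Matrix.mulVec_mulVec, ← Matrix.mulVec_mulVec, Matrix.dotProduct_mulVec,
          ← Matrix.mulVec_transpose]
      rw [hquad]
      exact (Matrix.posDef_diagonal_iff.mpr hd).dotProduct_mulVec_pos hxL
  have hSdet : IsUnit S.det := isUnit_iff_ne_zero.mpr hSpos.det_pos.ne'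
  have hLS : L⁻¹ * S = Matrix.diagonal d * Lᵀ := by
    rw [hS, ← Matrix.mul_assoc, ← Matrix.mul_assoc, Matrix.nonsing_inv_mul L hLunit,
      Matrix.one_mul]
  have hrow : ∀ i j : Fin m, j < i → (∑ k, L⁻¹ i k * S k j) = 0 := by
    intro i j hji
    have h1 := congrFun (congrFun hLS i) j
    have h2 : (L⁻¹ * S) i j = ∑ k, L⁻¹ i k * S k j := Matrix.mul_apply
    rw [← h2, h1, Matrix.diagonal_mul, Matrix.transpose_apply, hlow j i hji, mul_zero]
  -- trace reduction
  have hdinv : (Matrix.diagonal d)⁻¹ = Matrix.diagonal fun i => (d i)⁻¹ := by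
    apply Matrix.inv_eq_right_inv
    rw [Matrix.diagonal_mul_diagonal]
    have h9 : (fun i => d i * (d i)⁻¹) = fun _ => (1:ℝ) :=
      funext fun i => mul_inv_cancel₀ (hd i).ne'
    rw [h9, Matrix.diagonal_one]
  have hSinv : S⁻¹ = (L⁻¹)ᵀ * Matrix.diagonal (fun i => (d i)⁻¹) * L⁻¹ := by
    rw [hS, Matrix.mul_inv_rev, Matrix.mul_inv_rev, ← Matrix.transpose_nonsing_inv,
      hdinv, ← Matrix.mul_assoc]
  have htrace : Matrix.trace (S⁻¹ * U)
      = ∑ i, (d i)⁻¹ * (L⁻¹ * U * (L⁻¹)ᵀ) i i := by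
    rw [hSinv, Matrix.mul_assoc ((L⁻¹)ᵀ), Matrix.mul_assoc ((L⁻¹)ᵀ), Matrix.trace_mul_comm]
    have : Matrix.diagonal (fun i => (d i)⁻¹) * L⁻¹ * U * (L⁻¹)ᵀ
        = Matrix.diagonal (fun i => (d i)⁻¹) * (L⁻¹ * U * (L⁻¹)ᵀ) := by
      rw [Matrix.mul_assoc, Matrix.mul_assoc, Matrix.mul_assoc]
    rw [this]
    simp [Matrix.trace, Matrix.diag, Matrix.diagonal_mul]
  rw [htrace]
  refine Finset.sum_congr rfl fun i _ => ?_
  set P : Fin m → Prop := fun j => (i, j) ∈ E ∧ j < i with hP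
  have hPi : ¬ P i := fun h => hirr i h.1
  have hw0 : ∀ j, j ≠ i → ¬ P j → L⁻¹ i j = 0 := by
    intro j hne hPj
    rcases lt_or_gt_of_ne hne with h | h
    · exact hinv i j h fun hE => hPj ⟨hE, h⟩
    · exact hLinvUp i j h
  have hsplit : ∀ f : Fin m → ℝ,
      (∑ j, L⁻¹ i j * f j) = f i + ∑ k : Subtype P, L⁻¹ i ↑k * f ↑k := by
    intro f
    rw [sum_split P i hPi (fun j => L⁻¹ i j * f j)
      (fun j h1 h2 => by show L⁻¹ i j * f j = 0; rw [hw0 j h1 h2, zero_mul]),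
      hLinvDiag i, one_mul]
  -- the submatrices
  have hApredEq : predSub E S i
      = S.submatrix (fun k : Subtype P => (k : Fin m)) (fun k : Subtype P => (k : Fin m)) := rfl
  have hBpredEq : predSub E U i
      = U.submatrix (fun k : Subtype P => (k : Fin m)) (fun k : Subtype P => (k : Fin m)) := rfl
  have hApos : (predSub E S i).PosDef := by
    rw [hApredEq]; exact posDef_submatrix_subtype P hSpos
  have hBpos : (predSub E U i).PosDef := by
    rw [hBpredEq]; exact posDef_submatrix_subtype P hU
  have hAdet : IsUnit (predSub E S i).det := isUnit_iff_ne_zero.mpr hApos.det_pos.ne'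
  have hBdet : IsUnit (predSub E U i).det := isUnit_iff_ne_zero.mpr hBpos.det_pos.ne'
  set A := predSub E S i with hA
  set B := predSub E U i with hB
  set a := predCol E S i with ha
  set bb := predCol E U i with hbb
  set bS := A⁻¹ *ᵥ a with hbS
  set bU := B⁻¹ *ᵥ bb with hbU
  -- the key linear relation
  have hAv : ∀ j : Subtype P, (∑ k : Subtype P, L⁻¹ i ↑k * S ↑k ↑j) = -S ↑j i := by
    intro j
    have h1 := hrow i ↑j j.2.2
    rw [hsplit (fun k => S k ↑j)] at h1
    have h2 : (∑ k : Subtype P, L⁻¹ i ↑k * S ↑k ↑j) = -S i ↑j := by linarith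
    rw [h2, hSsym i ↑j]
  have hvec : A *ᵥ (fun k : Subtype P => L⁻¹ i ↑k) = -a := by
    funext j
    show ∑ k : Subtype P, A j k * L⁻¹ i ↑k = -(a j)
    have h3 : ∀ k : Subtype P, A j k * L⁻¹ i ↑k = L⁻¹ i ↑k * S ↑k ↑j := by
      intro k
      show S ↑j ↑k * L⁻¹ i ↑k = _
      rw [hSsym ↑j ↑k, mul_comm]
    rw [Finset.sum_congr rfl fun k _ => h3 k, hAv j]
    rfl
  have hbSv : ∀ k : Subtype P, L⁻¹ i ↑k = -(bS k) := by
    have hvec2 : a = -(A *ᵥ fun k : Subtype P => L⁻¹ i ↑k) := by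
      rw [hvec, neg_neg]
    have h1 : bS = -(fun k : Subtype P => L⁻¹ i ↑k) := by
      rw [hbS, hvec2, Matrix.mulVec_neg, Matrix.mulVec_mulVec,
        Matrix.nonsing_inv_mul A hAdet, Matrix.one_mulVec]
    intro k
    have h2 : bS k = -(L⁻¹ i ↑k) := congrFun h1 k
    rw [h2, neg_neg]
  have hBbU : B *ᵥ bU = bb := by
    rw [hbU, Matrix.mulVec_mulVec, Matrix.mul_nonsing_inv B hBdet, Matrix.one_mulVec]
  have hUsym : ∀ p q : Fin m, U p q = U q p := by
    intro p q
    have h1 := congrFun (congrFun hU.1 p) q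
    simpa using h1.symm
  have hBT : Bᵀ = B := by
    ext j k
    exact hUsym ↑k ↑j
  -- expansion of the quadratic form
  have hWi : (L⁻¹ * U * (L⁻¹)ᵀ) i i
      = (U i i + ∑ k : Subtype P, L⁻¹ i ↑k * U ↑k i)
        + ∑ j : Subtype P, L⁻¹ i ↑j *
            (U i ↑j + ∑ k : Subtype P, L⁻¹ i ↑k * U ↑k ↑j) := by
    rw [Matrix.mul_apply]
    have h1 : ∀ j, (L⁻¹ * U) i j * (L⁻¹)ᵀ j i = L⁻¹ i j * (L⁻¹ * U) i j := fun j => by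
      rw [Matrix.transpose_apply, mul_comm]
    rw [Finset.sum_congr rfl fun j _ => h1 j, hsplit fun j => (L⁻¹ * U) i j]
    congr 1
    · rw [Matrix.mul_apply, hsplit fun k => U k i]
    · refine Finset.sum_congr rfl fun j _ => ?_
      rw [Matrix.mul_apply, hsplit fun k => U k ↑j]
  have e1 : ∀ k : Subtype P, U ↑k i = bb k := fun k => rfl
  have e2 : ∀ k : Subtype P, U i ↑k = bb k := fun k => hUsym i ↑k
  have e3 : ∀ j k : Subtype P, U ↑k ↑j = B j k := fun j k => hUsym ↑k ↑j
  have keyL : (L⁻¹ * U * (L⁻¹)ᵀ) i i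
      = U i i - 2 * (bS ⬝ᵥ bb) + bS ⬝ᵥ (B *ᵥ bS) := by
    rw [hWi]
    simp only [hbSv, e1, e2, e3]
    simp only [dotProduct, Matrix.mulVec]
    simp only [neg_mul, neg_neg, mul_neg, mul_add, Finset.sum_add_distrib,
      Finset.sum_neg_distrib, Finset.mul_sum]
    ring_nf
    congr 1
    · congr 1
      rw [Finset.sum_mul]
    · exact Finset.sum_congr rfl fun x _ => Finset.sum_congr rfl fun y _ => by ring
  have keyR : (bS - bU) ⬝ᵥ (B *ᵥ (bS - bU)) + U i i - bb ⬝ᵥ bU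
      = U i i - 2 * (bS ⬝ᵥ bb) + bS ⬝ᵥ (B *ᵥ bS) := by
    have f1 : bS ⬝ᵥ (B *ᵥ bU) = bS ⬝ᵥ bb := by rw [hBbU]
    have f2 : bU ⬝ᵥ (B *ᵥ bS) = bb ⬝ᵥ bS := by
      rw [Matrix.dotProduct_mulVec, ← Matrix.mulVec_transpose, hBT, hBbU]
    have f3 : bU ⬝ᵥ (B *ᵥ bU) = bb ⬝ᵥ bU := by
      rw [Matrix.dotProduct_mulVec, ← Matrix.mulVec_transpose, hBT, hBbU]
    have f4 : bb ⬝ᵥ bS = bS ⬝ᵥ bb := dotProduct_comm _ _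
    rw [Matrix.mulVec_sub, sub_dotProduct, dotProduct_sub,
      dotProduct_sub, f1, f2, f3, f4]
    ring
  rw [keyL, keyR, one_div]
end

section
/- Suppose that L⁻¹ ∈ 𝓛_G for every L ∈ 𝓛_G, that U is an m×m real symmetric positive definite matrix, and that α ∈ ℝ^m satisfies α_i > |N^≺(i)| + 2 for all i, so that z_G(U,α) := ∫_{Θ_G} π̃_{U,α}(L,D) dL dD < ∞; let P_{U,α} be the probability measure on the coordinate space ℝ^{E^≺} × (0,∞)^m (identified with Θ_G) with density π̃_{U,α}/z_G(U,α) with respect to Lebesgue measure. Then for every i, the random variables (L,D) ↦ D_{ii} and (L,D) ↦ ((LDLᵀ)_{kl})_{1≤k,l≤i−1} are independent under P_{U,α}. -/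
open Matrix MeasureTheory ENNReal

/-- The unnormalized density `π̃_{U,α}` as a function of the free coordinates, extended by
`0` off the positive orthant for the diagonal coordinates. -/
noncomputable def covKernel {m : ℕ} (E : Finset (Fin m × Fin m))
    (U : Matrix (Fin m) (Fin m) ℝ) (α : Fin m → ℝ)
    (p : ({q : Fin m × Fin m // q ∈ E ∧ q.2 < q.1} → ℝ) × (Fin m → ℝ)) : ℝ :=
  if ∀ i, 0 < p.2 i then
    Real.exp (-(Matrix.trace
        ((lowerOfCoords E p.1 * Matrix.diagonal p.2 * (lowerOfCoords E p.1)ᵀ)⁻¹ * U) +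
      ∑ i : Fin m, α i * Real.log (p.2 i)) / 2)
  else 0

/-- The probability measure `P_{U,α}` on the coordinate space `ℝ^{E^≺} × ℝ^m` (identified
with `Θ_G`) with density `π̃_{U,α} / z_G(U,α)` with respect to Lebesgue measure. -/
noncomputable def covPrior {m : ℕ} (E : Finset (Fin m × Fin m))
    (U : Matrix (Fin m) (Fin m) ℝ) (α : Fin m → ℝ) :
    Measure (({q : Fin m × Fin m // q ∈ E ∧ q.2 < q.1} → ℝ) × (Fin m → ℝ)) :=
  MeasureTheory.volume.withDensity fun p =>
    ENNReal.ofReal (covKernel E U α p /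
      (∫⁻ q, ENNReal.ofReal (covKernel E U α q)).toReal)

namespace Stmt16

variable {m : ℕ}

/-- Powers of a strictly lower triangular matrix vanish above a shifted diagonal. -/
lemma strictLower_pow (N : Matrix (Fin m) (Fin m) ℝ)
    (hN : ∀ k c : Fin m, ¬ c < k → N k c = 0) :
    ∀ (t : ℕ) (k l : Fin m), (k : ℕ) < (l : ℕ) + t → (N ^ t) k l = 0 := by
  intro t
  induction t with
  | zero =>
    intro k l hkl
    simp only [pow_zero]
    exact Matrix.one_apply_ne (by rintro rfl; omega)
  | succ t ih =>
    intro k l hkl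
    rw [pow_succ', Matrix.mul_apply]
    refine Finset.sum_eq_zero fun c _ => ?_
    by_cases hck : c < k
    · rw [ih c l (by have := hck; omega), mul_zero]
    · rw [hN k c hck, zero_mul]

lemma strictLower_pow_zero (N : Matrix (Fin m) (Fin m) ℝ)
    (hN : ∀ k c : Fin m, ¬ c < k → N k c = 0) {t : ℕ} (ht : m ≤ t) : N ^ t = 0 := by
  ext k l
  exact strictLower_pow N hN t k l (by have := k.isLt; omega)

/-- rows-dependence for powers of strictly lower triangular matrices -/
lemma pow_row_dep (N N' : Matrix (Fin m) (Fin m) ℝ)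
    (hN : ∀ k c : Fin m, ¬ c < k → N k c = 0)
    (hN' : ∀ k c : Fin m, ¬ c < k → N' k c = 0)
    (K : ℕ) (hag : ∀ k l : Fin m, (k : ℕ) ≤ K → N k l = N' k l) :
    ∀ (t : ℕ) (k l : Fin m), (k : ℕ) ≤ K → (N ^ t) k l = (N' ^ t) k l := by
  intro t
  induction t with
  | zero => intro k l _; simp
  | succ t ih =>
    intro k l hk
    rw [pow_succ', pow_succ', Matrix.mul_apply, Matrix.mul_apply]
    refine Finset.sum_congr rfl fun c _ => ?_
    by_cases hck : c < k
    · rw [hag k c hk, ih c l (by have := hck; omega)]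
    · rw [hN k c hck, hN' k c hck, zero_mul, zero_mul]

/-- gap-dependence for powers (exponent ≥ 2) of strictly lower triangular matrices -/
lemma pow_gap_dep (N N' : Matrix (Fin m) (Fin m) ℝ)
    (hN : ∀ k c : Fin m, ¬ c < k → N k c = 0)
    (hN' : ∀ k c : Fin m, ¬ c < k → N' k c = 0)
    (g : ℕ) (hag : ∀ k l : Fin m, (k : ℕ) < (l : ℕ) + g → N k l = N' k l) :
    ∀ (t : ℕ) (i j : Fin m), (i : ℕ) ≤ (j : ℕ) + g → (N ^ (t + 2)) i j = (N' ^ (t + 2)) i j := by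
  intro t
  induction t with
  | zero =>
    intro i j hij
    show (N ^ 2) i j = (N' ^ 2) i j
    rw [pow_two, pow_two, Matrix.mul_apply, Matrix.mul_apply]
    refine Finset.sum_congr rfl fun c _ => ?_
    by_cases hci : c < i
    · by_cases hjc : j < c
      · rw [hag i c (by omega), hag c j (by omega)]
      · rw [hN c j (by omega), hN' c j (by omega), mul_zero, mul_zero]
    · rw [hN i c hci, hN' i c hci, zero_mul, zero_mul]
  | succ t ih =>
    intro i j hij
    have hpow : ∀ P : Matrix (Fin m) (Fin m) ℝ, P ^ (t + 1 + 2) = P * P ^ (t + 2) := by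
      intro P
      rw [show t + 1 + 2 = (t + 2) + 1 by ring]
      exact pow_succ' P (t + 2)
    rw [hpow, hpow, Matrix.mul_apply, Matrix.mul_apply]
    refine Finset.sum_congr rfl fun c _ => ?_
    by_cases hci : c < i
    · by_cases hjc : j < c
      · rw [hag i c (by omega), ih c j (by omega)]
      · rw [strictLower_pow N hN _ c j (by omega), strictLower_pow N' hN' _ c j (by omega),
          mul_zero, mul_zero]
    · rw [hN i c hci, hN' i c hci, zero_mul, zero_mul]

section ULT

variable (L : Matrix (Fin m) (Fin m) ℝ)

/-- The geometric-series inverse of a unit lower triangular matrix. -/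
noncomputable def geomInv : Matrix (Fin m) (Fin m) ℝ :=
  ∑ t ∈ Finset.range (m + 2), (-(L - 1)) ^ t

variable (h1 : ∀ i j : Fin m, i < j → L i j = 0) (h2 : ∀ i : Fin m, L i i = 1)

include h1 h2

lemma negN_strict : ∀ k c : Fin m, ¬ c < k → (-(L - 1)) k c = 0 := by
  intro k c hc
  rcases eq_or_lt_of_le (not_lt.mp hc) with h | h
  · cases h
    simp [Matrix.neg_apply, Matrix.sub_apply, h2 k]
  · simp [Matrix.neg_apply, Matrix.sub_apply, h1 k c h, Matrix.one_apply_ne (ne_of_lt h)]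

lemma mul_geomInv : L * geomInv L = 1 := by
  have hc : Commute (-(L - 1) - 1) (geomInv L) :=
    Commute.sum_right _ _ _ fun t _ => ((Commute.refl _).pow_right t).sub_left (Commute.one_left _)
  have hz : (-(L - 1)) ^ (m + 2) = 0 :=
    strictLower_pow_zero _ (negN_strict L h1 h2) (by omega)
  have key : (-(L - 1) - 1) * geomInv L = -1 := by
    rw [hc.eq]
    unfold geomInv
    rw [geom_sum_mul, hz, zero_sub]
  have hL : L = -(-(L - 1) - 1) := by noncomm_ring
  calc L * geomInv L = -((-(L - 1) - 1) * geomInv L) := by rw [hL]; noncomm_ring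
    _ = 1 := by rw [key, neg_neg]

lemma ult_isUnit_det : IsUnit L.det :=
  Matrix.isUnit_det_of_right_inverse (mul_geomInv L h1 h2)

lemma inv_eq_geomInv : L⁻¹ = geomInv L :=
  Matrix.inv_eq_right_inv (mul_geomInv L h1 h2)

lemma ult_inv_eq_one_of_le : ∀ i j : Fin m, i ≤ j →
    L⁻¹ i j = (1 : Matrix (Fin m) (Fin m) ℝ) i j := by
  intro i j hij
  rw [inv_eq_geomInv L h1 h2]
  unfold geomInv
  rw [Matrix.sum_apply]
  rw [Finset.sum_eq_single_of_mem 0 (by simp)]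
  · simp
  · intro t _ ht
    exact strictLower_pow _ (negN_strict L h1 h2) t i j
      (by have : 1 ≤ t := Nat.one_le_iff_ne_zero.mpr ht; have := Fin.le_iff_val_le_val.mp hij; omega)

lemma ult_inv_upper : ∀ i j : Fin m, i < j → L⁻¹ i j = 0 := by
  intro i j hij
  rw [ult_inv_eq_one_of_le L h1 h2 i j (le_of_lt hij)]
  exact Matrix.one_apply_ne (ne_of_lt hij)

lemma ult_inv_diag : ∀ i : Fin m, L⁻¹ i i = 1 := by
  intro i
  rw [ult_inv_eq_one_of_le L h1 h2 i i le_rfl]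
  simp

end ULT

lemma inv_row_dep (L M : Matrix (Fin m) (Fin m) ℝ)
    (h1L : ∀ i j : Fin m, i < j → L i j = 0) (h2L : ∀ i : Fin m, L i i = 1)
    (h1M : ∀ i j : Fin m, i < j → M i j = 0) (h2M : ∀ i : Fin m, M i i = 1)
    (K : ℕ) (hag : ∀ k l : Fin m, (k : ℕ) ≤ K → L k l = M k l) :
    ∀ k l : Fin m, (k : ℕ) ≤ K → L⁻¹ k l = M⁻¹ k l := by
  intro k l hk
  rw [inv_eq_geomInv L h1L h2L, inv_eq_geomInv M h1M h2M]
  unfold geomInv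
  rw [Matrix.sum_apply, Matrix.sum_apply]
  refine Finset.sum_congr rfl fun t _ => ?_
  refine pow_row_dep _ _ (negN_strict L h1L h2L) (negN_strict M h1M h2M) K ?_ t k l hk
  intro k' l' hk'
  simp [Matrix.neg_apply, Matrix.sub_apply, hag k' l' hk']

lemma inv_gap_dep (L M : Matrix (Fin m) (Fin m) ℝ)
    (h1L : ∀ i j : Fin m, i < j → L i j = 0) (h2L : ∀ i : Fin m, L i i = 1)
    (h1M : ∀ i j : Fin m, i < j → M i j = 0) (h2M : ∀ i : Fin m, M i i = 1)
    (g : ℕ) (hag : ∀ k l : Fin m, (k : ℕ) < (l : ℕ) + g → L k l = M k l) :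
    ∀ i j : Fin m, (i : ℕ) ≤ (j : ℕ) + g → L⁻¹ i j + L i j = M⁻¹ i j + M i j := by
  intro i j hij
  rw [inv_eq_geomInv L h1L h2L, inv_eq_geomInv M h1M h2M]
  unfold geomInv
  rw [Matrix.sum_apply, Matrix.sum_apply]
  have hset : Finset.range (m + 2) = insert 0 (insert 1 (Finset.Ico 2 (m + 2))) := by
    ext t; simp only [Finset.mem_range, Finset.mem_insert, Finset.mem_Ico]; omega
  have hagN : ∀ k l : Fin m, (k : ℕ) < (l : ℕ) + g → (-(L - 1)) k l = (-(M - 1)) k l := by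
    intro k l hkl
    simp [Matrix.neg_apply, Matrix.sub_apply, hag k l hkl]
  have hIco : ∀ t ∈ Finset.Ico 2 (m + 2), ((-(L - 1)) ^ t) i j = ((-(M - 1)) ^ t) i j := by
    intro t ht
    simp only [Finset.mem_Ico] at ht
    obtain ⟨t', rfl⟩ : ∃ t', t = t' + 2 := ⟨t - 2, by omega⟩
    exact pow_gap_dep _ _ (negN_strict L h1L h2L) (negN_strict M h1M h2M) g hagN t' i j hij
  rw [hset, Finset.sum_insert (by simp), Finset.sum_insert (by simp),
      Finset.sum_insert (by simp), Finset.sum_insert (by simp),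
      Finset.sum_congr rfl hIco]
  simp only [pow_zero, pow_one, Matrix.one_apply, Matrix.neg_apply, Matrix.sub_apply]
  by_cases hijeq : i = j <;> simp [hijeq] <;> ring



variable {m : ℕ} (E : Finset (Fin m × Fin m))

lemma loc_diag (x) (i : Fin m) : lowerOfCoords E x i i = 1 := by
  simp [lowerOfCoords]

lemma loc_upper (x) {i j : Fin m} (hij : i < j) : lowerOfCoords E x i j = 0 := by
  simp only [lowerOfCoords, Matrix.of_apply]
  rw [if_neg (ne_of_lt hij), dif_neg (fun h => absurd h.2 (not_lt.mpr (le_of_lt hij)))]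

lemma loc_edge (x) {i j : Fin m} (h : (i, j) ∈ E ∧ j < i) :
    lowerOfCoords E x i j = x ⟨(i, j), h⟩ := by
  simp only [lowerOfCoords, Matrix.of_apply]
  rw [if_neg (by rintro rfl; exact lt_irrefl _ h.2), dif_pos h]

lemma loc_nonedge (x) {i j : Fin m} (hj : j < i) (hne : (i, j) ∉ E) :
    lowerOfCoords E x i j = 0 := by
  simp only [lowerOfCoords, Matrix.of_apply]
  rw [if_neg (by rintro rfl; exact lt_irrefl _ hj), dif_neg (fun h => hne h.1)]

lemma loc_h1 (x) : ∀ i j : Fin m, i < j → lowerOfCoords E x i j = 0 :=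
  fun _ _ h => loc_upper E x h

lemma loc_h2 (x) : ∀ i : Fin m, lowerOfCoords E x i i = 1 :=
  fun i => loc_diag E x i

/-- The free coordinates of the inverse matrix. -/
noncomputable def invCoords (x : {p : Fin m × Fin m // p ∈ E ∧ p.2 < p.1} → ℝ) :
    {p : Fin m × Fin m // p ∈ E ∧ p.2 < p.1} → ℝ :=
  fun q => (lowerOfCoords E x)⁻¹ q.1.1 q.1.2

lemma loc_invCoords
    (hclosed : ∀ L : Matrix (Fin m) (Fin m) ℝ,
      (∀ i j : Fin m, i < j → L i j = 0) →
      (∀ i : Fin m, L i i = 1) →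
      (∀ i j : Fin m, j < i → (i, j) ∉ E → L i j = 0) →
      (∀ i j : Fin m, j < i → (i, j) ∉ E → L⁻¹ i j = 0)) (x) :
    lowerOfCoords E (invCoords E x) = (lowerOfCoords E x)⁻¹ := by
  ext i j
  rcases lt_trichotomy i j with h | h | h
  · rw [loc_upper E _ h, ult_inv_upper _ (loc_h1 E x) (loc_h2 E x) i j h]
  · cases h
    rw [loc_diag, ult_inv_diag _ (loc_h1 E x) (loc_h2 E x)]
  · by_cases he : (i, j) ∈ E
    · exact loc_edge E _ ⟨he, h⟩
    · rw [loc_nonedge E _ h he,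
        hclosed _ (loc_h1 E x) (loc_h2 E x) (fun i j hj hne => loc_nonedge E x hj hne) i j h he]

lemma continuous_loc : Continuous fun x : {p : Fin m × Fin m // p ∈ E ∧ p.2 < p.1} → ℝ =>
    lowerOfCoords E x := by
  refine continuous_matrix fun i j => ?_
  simp only [lowerOfCoords, Matrix.of_apply]
  by_cases h : i = j
  · simp only [h, if_pos rfl]; exact continuous_const
  · simp only [if_neg h]
    by_cases he : (i, j) ∈ E ∧ j < i
    · simp only [dif_pos he]; exact continuous_apply _
    · simp only [dif_neg he]; exact continuous_const

lemma loc_det (x) : (lowerOfCoords E x).det = 1 := by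
  rw [Matrix.det_of_lowerTriangular _ (fun i j (h : OrderDual.toDual j < OrderDual.toDual i) =>
    loc_upper E x h)]
  simp [loc_diag]

lemma continuous_locInv : Continuous fun x : {p : Fin m × Fin m // p ∈ E ∧ p.2 < p.1} → ℝ =>
    (lowerOfCoords E x)⁻¹ := by
  have h : (fun x : {p : Fin m × Fin m // p ∈ E ∧ p.2 < p.1} → ℝ => (lowerOfCoords E x)⁻¹)
      = fun x => (lowerOfCoords E x).adjugate := by
    funext x
    rw [Matrix.inv_def, loc_det, Ring.inverse_one, one_smul]
  rw [h]
  exact (continuous_loc E).matrix_adjugate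

lemma measurable_invCoords : Measurable (invCoords E) := by
  refine measurable_pi_lambda _ fun q => ?_
  exact ((continuous_apply q.1.2).comp
    ((continuous_apply q.1.1).comp (continuous_locInv E))).measurable

theorem shear_mp_aux : ∀ (n : ℕ) (ι : Type) [Fintype ι] [DecidableEq ι],
    Fintype.card ι ≤ n →
    ∀ (r : ι → ℕ) (ε : ι → ℝ), (∀ k, ε k = 1 ∨ ε k = -1) →
    ∀ (f : ι → (ι → ℝ) → ℝ), (∀ k, Measurable (f k)) →
    (∀ (k : ι) (x y : ι → ℝ), (∀ j, r j < r k → x j = y j) → f k x = f k y) →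
    MeasurePreserving (fun (x : ι → ℝ) k => ε k * x k + f k x) volume volume := by
  intro n
  induction n with
  | zero =>
    intro ι _ _ hcard r ε hε f hfm hdep
    have : IsEmpty ι := Fintype.card_eq_zero_iff.mp (Nat.le_zero.mp hcard)
    have hid : (fun (x : ι → ℝ) k => ε k * x k + f k x) = id := by
      funext x k; exact isEmptyElim k
    rw [hid]
    exact MeasurePreserving.id _
  | succ n ih =>
    intro ι _ _ hcard r ε hε f hfm hdep
    by_cases hne : Nonempty ι
    · obtain ⟨k₀, -, hk₀⟩ := Finset.exists_max_image Finset.univ r ⟨Classical.arbitrary ι,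
        Finset.mem_univ _⟩
      have hk₀' : ∀ j : ι, r j ≤ r k₀ := fun j => hk₀ j (Finset.mem_univ j)
      -- the coordinate-extension map
      set ext0 : ({j : ι // j ≠ k₀} → ℝ) → ι → ℝ :=
        fun y j => if h : j = k₀ then 0 else y ⟨j, h⟩ with hext0def
      have hext0 : Measurable ext0 := by
        refine measurable_pi_lambda _ fun j => ?_
        by_cases h : j = k₀
        · simp only [hext0def, dif_pos h]; exact measurable_const
        · simp only [hext0def, dif_neg h]; exact measurable_pi_apply _
      -- the restricted shear map
      set Trest : ({j : ι // j ≠ k₀} → ℝ) → {j : ι // j ≠ k₀} → ℝ :=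
        fun y k => ε k.1 * y k + f k.1 (ext0 y) with hTrestdef
      have hTrest : MeasurePreserving Trest volume volume := by
        refine ih {j : ι // j ≠ k₀} ?_ (fun k => r k.1) (fun k => ε k.1) (fun k => hε k.1)
          (fun k y => f k.1 (ext0 y)) (fun k => (hfm k.1).comp hext0) ?_
        · have h1 : Fintype.card {j : ι // j ≠ k₀} < Fintype.card ι :=
            Fintype.card_subtype_lt (x := k₀) (by simp)
          omega
        · intro k x y hxy
          refine hdep k.1 _ _ fun j hj => ?_
          by_cases hj0 : j = k₀
          · simp only [hext0def, dif_pos hj0]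
          · simp only [hext0def, dif_neg hj0]
            exact hxy ⟨j, hj0⟩ hj
      -- the fiber map
      set g : ({j : ι // j ≠ k₀} → ℝ) → ℝ → ℝ := fun y t => ε k₀ * t + f k₀ (ext0 y) with hgdef
      have hskew : MeasurePreserving
          (fun p : ({j : ι // j ≠ k₀} → ℝ) × ℝ => (Trest p.1, g p.1 p.2))
          (volume.prod volume) (volume.prod volume) := by
        refine MeasurePreserving.skew_product hTrest ?_ (Filter.Eventually.of_forall fun y => ?_)
        · exact (measurable_const.mul measurable_snd).add
            ((hfm k₀).comp (hext0.comp measurable_fst))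
        · rcases hε k₀ with h | h
          · simp only [hgdef, h, one_mul]
            exact (measurePreserving_add_right volume (f k₀ (ext0 y))).map_eq
          · simp only [hgdef, h, neg_one_mul]
            have : (fun t : ℝ => -t + f k₀ (ext0 y))
                = (fun t : ℝ => t + f k₀ (ext0 y)) ∘ Neg.neg := rfl
            rw [this, ← Measure.map_map (by fun_prop) (by fun_prop),
              (Measure.measurePreserving_neg volume).map_eq,
              (measurePreserving_add_right volume (f k₀ (ext0 y))).map_eq]
      -- split and glue
      haveI hU : Unique {j : ι // ¬ j ≠ k₀} :=
        ⟨⟨⟨k₀, fun h => h rfl⟩⟩, fun a => Subtype.ext (not_not.mp a.2)⟩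
      set split : (ι → ℝ) → ({j : ι // j ≠ k₀} → ℝ) × ℝ :=
        fun x => (fun j => x j.1, x k₀) with hsplitdef
      set glue : ({j : ι // j ≠ k₀} → ℝ) × ℝ → ι → ℝ :=
        fun p j => if h : j = k₀ then p.2 else p.1 ⟨j, h⟩ with hgluedef
      have hsplit : MeasurePreserving split volume (volume.prod volume) := by
        have heq : split = (Prod.map (id : ({j : ι // j ≠ k₀} → ℝ) → _)
              (MeasurableEquiv.funUnique {j : ι // ¬ j ≠ k₀} ℝ))
            ∘ (MeasurableEquiv.piEquivPiSubtypeProd (fun _ : ι => ℝ) (fun j => j ≠ k₀)) := by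
          funext x
          refine Prod.ext rfl ?_
          show x k₀ = _
          simp [MeasurableEquiv.funUnique, Equiv.funUnique, MeasurableEquiv.piEquivPiSubtypeProd,
            Equiv.piEquivPiSubtypeProd]
          exact congrArg x (not_not.mp (default : {j : ι // ¬ j ≠ k₀}).2).symm
        rw [heq]
        have hfu := measurePreserving_funUnique (volume : Measure ℝ) {j : ι // ¬ j ≠ k₀}
        rw [Subsingleton.elim (Unique.fintype : Fintype {j : ι // ¬ j ≠ k₀})
          (Subtype.fintype _)] at hfu
        have h2 : MeasurePreserving (Prod.map (id : ({j : ι // j ≠ k₀} → ℝ) → _)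
            (MeasurableEquiv.funUnique {j : ι // ¬ j ≠ k₀} ℝ)) (volume.prod volume)
            (volume.prod volume) :=
          (MeasurePreserving.id _).prod hfu
        exact h2.comp (volume_preserving_piEquivPiSubtypeProd (fun _ : ι => ℝ) (fun j => j ≠ k₀))
      have hglue : MeasurePreserving glue (volume.prod volume) volume := by
        have heq : glue = (MeasurableEquiv.piEquivPiSubtypeProd (fun _ : ι => ℝ)
              (fun j => j ≠ k₀)).symm
            ∘ (Prod.map (id : ({j : ι // j ≠ k₀} → ℝ) → _)
              (MeasurableEquiv.funUnique {j : ι // ¬ j ≠ k₀} ℝ).symm) := by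
          funext p j
          by_cases h : j = k₀
          · simp [hgluedef, dif_pos h, MeasurableEquiv.piEquivPiSubtypeProd,
              Equiv.piEquivPiSubtypeProd, MeasurableEquiv.funUnique, Equiv.funUnique, h]
          · simp [hgluedef, dif_neg h, MeasurableEquiv.piEquivPiSubtypeProd,
              Equiv.piEquivPiSubtypeProd, MeasurableEquiv.funUnique, Equiv.funUnique, h]
        rw [heq]
        have hfu := measurePreserving_funUnique (volume : Measure ℝ) {j : ι // ¬ j ≠ k₀}
        rw [Subsingleton.elim (Unique.fintype : Fintype {j : ι // ¬ j ≠ k₀})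
          (Subtype.fintype _)] at hfu
        exact ((volume_preserving_piEquivPiSubtypeProd (fun _ : ι => ℝ)
          (fun j => j ≠ k₀)).symm).comp
          ((MeasurePreserving.id _).prod (hfu.symm (MeasurableEquiv.funUnique _ ℝ)))
      -- assembling
      have hTeq : (fun (x : ι → ℝ) k => ε k * x k + f k x)
          = glue ∘ (fun p : ({j : ι // j ≠ k₀} → ℝ) × ℝ => (Trest p.1, g p.1 p.2)) ∘ split := by
        funext x j
        by_cases h : j = k₀
        · subst h
          simp only [Function.comp_apply, hgluedef, hsplitdef, dif_pos rfl, hgdef]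
          congr 1
          refine hdep j _ _ fun j' hj' => ?_
          have hj'0 : j' ≠ j := fun h => by rw [h] at hj'; omega
          simp only [hext0def, dif_neg hj'0]
        · simp only [Function.comp_apply, hgluedef, hsplitdef, dif_neg h, hTrestdef]
          congr 1
          refine hdep j _ _ fun j' hj' => ?_
          by_cases hj'0 : j' = k₀
          · exfalso; rw [hj'0] at hj'; have := hk₀' j; omega
          · simp only [hext0def, dif_neg hj'0]
      rw [hTeq]
      exact hglue.comp (hskew.comp hsplit)
    · have : IsEmpty ι := not_nonempty_iff.mp hne
      have hid : (fun (x : ι → ℝ) k => ε k * x k + f k x) = id := by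
        funext x k; exact isEmptyElim k
      rw [hid]
      exact MeasurePreserving.id _




variable {m : ℕ} (E : Finset (Fin m × Fin m)) (U : Matrix (Fin m) (Fin m) ℝ) (α : Fin m → ℝ)

lemma invCoords_mp : MeasurePreserving (invCoords E) volume volume := by
  have hf : ∀ q : {p : Fin m × Fin m // p ∈ E ∧ p.2 < p.1},
      Measurable fun x : {p : Fin m × Fin m // p ∈ E ∧ p.2 < p.1} → ℝ =>
        (lowerOfCoords E x)⁻¹ q.1.1 q.1.2 + x q := by
    intro q
    exact (((continuous_apply q.1.2).comp
      ((continuous_apply q.1.1).comp (continuous_locInv E))).measurable).add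
      (measurable_pi_apply q)
  have hdep : ∀ (q : {p : Fin m × Fin m // p ∈ E ∧ p.2 < p.1})
      (x y : {p : Fin m × Fin m // p ∈ E ∧ p.2 < p.1} → ℝ),
      (∀ j, ((j.1.1 : ℕ) - (j.1.2 : ℕ)) < ((q.1.1 : ℕ) - (q.1.2 : ℕ)) → x j = y j) →
      (lowerOfCoords E x)⁻¹ q.1.1 q.1.2 + x q = (lowerOfCoords E y)⁻¹ q.1.1 q.1.2 + y q := by
    intro q x y hxy
    have hq2 : (q.1.2 : ℕ) < (q.1.1 : ℕ) := q.2.2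
    set g : ℕ := (q.1.1 : ℕ) - (q.1.2 : ℕ) with hgdef
    have hag : ∀ k l : Fin m, (k : ℕ) < (l : ℕ) + g →
        lowerOfCoords E x k l = lowerOfCoords E y k l := by
      intro k l hkl
      rcases lt_trichotomy k l with h | h | h
      · rw [loc_upper E x h, loc_upper E y h]
      · cases h; rw [loc_diag, loc_diag]
      · by_cases he : (k, l) ∈ E
        · rw [loc_edge E x ⟨he, h⟩, loc_edge E y ⟨he, h⟩]
          exact hxy ⟨(k, l), ⟨he, h⟩⟩ (by simp only []; omega)
        · rw [loc_nonedge E x h he, loc_nonedge E y h he]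
    have hmain := inv_gap_dep (lowerOfCoords E x) (lowerOfCoords E y)
      (loc_h1 E x) (loc_h2 E x) (loc_h1 E y) (loc_h2 E y) g hag q.1.1 q.1.2 (by omega)
    have hx : lowerOfCoords E x q.1.1 q.1.2 = x q := by
      rw [loc_edge E x ⟨by rw [Prod.mk.eta]; exact q.2.1, q.2.2⟩]
    have hy : lowerOfCoords E y q.1.1 q.1.2 = y q := by
      rw [loc_edge E y ⟨by rw [Prod.mk.eta]; exact q.2.1, q.2.2⟩]
    rw [← hx, ← hy]
    exact hmain
  have h := shear_mp_aux (Fintype.card {p : Fin m × Fin m // p ∈ E ∧ p.2 < p.1})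
    {p : Fin m × Fin m // p ∈ E ∧ p.2 < p.1} le_rfl
    (fun q => (q.1.1 : ℕ) - (q.1.2 : ℕ)) (fun _ => (-1 : ℝ)) (fun _ => Or.inr rfl)
    (fun q x => (lowerOfCoords E x)⁻¹ q.1.1 q.1.2 + x q) hf hdep
  have heq : (fun (x : {p : Fin m × Fin m // p ∈ E ∧ p.2 < p.1} → ℝ) q =>
      (-1 : ℝ) * x q + ((lowerOfCoords E x)⁻¹ q.1.1 q.1.2 + x q)) = invCoords E := by
    funext x q
    unfold invCoords
    ring
  rw [heq] at h
  exact h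

/-- diagonal quadratic forms of the rows -/
noncomputable def rowQuad (ψ : {p : Fin m × Fin m // p ∈ E ∧ p.2 < p.1} → ℝ) (j : Fin m) : ℝ :=
  (lowerOfCoords E ψ * U * (lowerOfCoords E ψ)ᵀ) j j

/-- the factor of the transformed density attached to vertex `j` -/
noncomputable def hK (j : Fin m) (ψ : {p : Fin m × Fin m // p ∈ E ∧ p.2 < p.1} → ℝ)
    (t : ℝ) : ℝ :=
  if 0 < t then Real.exp (-(t⁻¹ * rowQuad E U ψ j + α j * Real.log t) / 2) else 0

lemma hK_nonneg (j ψ t) : 0 ≤ hK E U α j ψ t := by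
  unfold hK
  split
  · exact (Real.exp_pos _).le
  · exact le_refl 0

lemma rowQuad_rowdep (ψ ψ' : {p : Fin m × Fin m // p ∈ E ∧ p.2 < p.1} → ℝ) (j : Fin m)
    (hrow : ∀ q : {p : Fin m × Fin m // p ∈ E ∧ p.2 < p.1}, q.1.1 = j → ψ q = ψ' q) :
    rowQuad E U ψ j = rowQuad E U ψ' j := by
  have hA : ∀ k, lowerOfCoords E ψ j k = lowerOfCoords E ψ' j k := by
    intro k
    rcases lt_trichotomy j k with h | h | h
    · rw [loc_upper E _ h, loc_upper E _ h]
    · cases h; rw [loc_diag, loc_diag]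
    · by_cases he : (j, k) ∈ E
      · rw [loc_edge E _ ⟨he, h⟩, loc_edge E _ ⟨he, h⟩]
        exact hrow ⟨(j, k), ⟨he, h⟩⟩ rfl
      · rw [loc_nonedge E _ h he, loc_nonedge E _ h he]
  unfold rowQuad
  simp only [Matrix.mul_apply, Matrix.transpose_apply]
  refine Finset.sum_congr rfl fun l _ => ?_
  rw [hA l]
  congr 1
  exact Finset.sum_congr rfl fun k _ => by rw [hA k]

lemma hK_rowdep (j : Fin m) (ψ ψ' : {p : Fin m × Fin m // p ∈ E ∧ p.2 < p.1} → ℝ) (t : ℝ)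
    (hrow : ∀ q : {p : Fin m × Fin m // p ∈ E ∧ p.2 < p.1}, q.1.1 = j → ψ q = ψ' q) :
    hK E U α j ψ t = hK E U α j ψ' t := by
  unfold hK
  rw [rowQuad_rowdep E U ψ ψ' j hrow]

/-- Main kernel transformation: the density in the inverse coordinates factorizes. -/
lemma kernel_transform
    (hclosed : ∀ L : Matrix (Fin m) (Fin m) ℝ,
      (∀ i j : Fin m, i < j → L i j = 0) →
      (∀ i : Fin m, L i i = 1) →
      (∀ i j : Fin m, j < i → (i, j) ∉ E → L i j = 0) →
      (∀ i j : Fin m, j < i → (i, j) ∉ E → L⁻¹ i j = 0))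
    (ψ : {p : Fin m × Fin m // p ∈ E ∧ p.2 < p.1} → ℝ) (d : Fin m → ℝ) :
    covKernel E U α (invCoords E ψ, d) = ∏ j : Fin m, hK E U α j ψ (d j) := by
  unfold covKernel
  by_cases hd : ∀ j : Fin m, 0 < d j
  · rw [if_pos hd]
    set A := lowerOfCoords E ψ with hAdef
    have hdet : IsUnit A.det := ult_isUnit_det A (loc_h1 E ψ) (loc_h2 E ψ)
    have hloc : lowerOfCoords E (invCoords E ψ) = A⁻¹ := loc_invCoords E hclosed ψ
    simp only [hloc]
    have hdiaginv : (Matrix.diagonal d)⁻¹ = Matrix.diagonal (fun j => (d j)⁻¹) := by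
      apply Matrix.inv_eq_right_inv
      rw [Matrix.diagonal_mul_diagonal,
        show (fun j => d j * (d j)⁻¹) = fun _ => (1 : ℝ) from
          funext fun j => mul_inv_cancel₀ (ne_of_gt (hd j)),
        Matrix.diagonal_one]
    have hmat : (A⁻¹ * Matrix.diagonal d * (A⁻¹)ᵀ)⁻¹
        = Aᵀ * (Matrix.diagonal (fun j => (d j)⁻¹) * A) := by
      rw [Matrix.transpose_nonsing_inv, Matrix.mul_inv_rev, Matrix.mul_inv_rev,
        Matrix.nonsing_inv_nonsing_inv _ (by rwa [Matrix.det_transpose]),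
        hdiaginv, Matrix.nonsing_inv_nonsing_inv _ hdet]
    rw [hmat]
    have htr : Matrix.trace (Aᵀ * (Matrix.diagonal (fun j => (d j)⁻¹) * A) * U)
        = ∑ j : Fin m, (d j)⁻¹ * rowQuad E U ψ j := by
      have e1 : Aᵀ * (Matrix.diagonal (fun j => (d j)⁻¹) * A) * U
          = Aᵀ * (Matrix.diagonal (fun j => (d j)⁻¹) * A * U) := by
        rw [mul_assoc]
      rw [e1, Matrix.trace_mul_comm, mul_assoc, mul_assoc]
      unfold rowQuad
      simp only [Matrix.trace, Matrix.diag, Matrix.diagonal_mul, ← hAdef]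
      exact Finset.sum_congr rfl fun j _ => by rw [← mul_assoc, mul_assoc]
    rw [htr]
    have hhk : ∀ j : Fin m, hK E U α j ψ (d j)
        = Real.exp (-((d j)⁻¹ * rowQuad E U ψ j + α j * Real.log (d j)) / 2) := by
      intro j
      unfold hK
      rw [if_pos (hd j)]
    rw [Finset.prod_congr rfl fun j _ => hhk j, ← Real.exp_sum]
    congr 1
    rw [← Finset.sum_div, Finset.sum_neg_distrib, Finset.sum_add_distrib]
  · rw [if_neg hd]
    obtain ⟨j0, hj0⟩ := not_forall.mp hd
    symm
    apply Finset.prod_eq_zero (Finset.mem_univ j0)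
    unfold hK
    rw [if_neg hj0]

lemma lintegral_block_mul {A B C D : Type*} [MeasureSpace A] [MeasureSpace B] [MeasureSpace C]
    [MeasureSpace D] [SigmaFinite (volume : Measure A)] [SigmaFinite (volume : Measure B)]
    [SigmaFinite (volume : Measure C)] [SigmaFinite (volume : Measure D)]
    (f : A × C → ℝ≥0∞) (g : B × D → ℝ≥0∞) (hf : Measurable f) (hg : Measurable g) :
    ∫⁻ p : (A × B) × (C × D), f (p.1.1, p.2.1) * g (p.1.2, p.2.2)
      = (∫⁻ q, f q) * ∫⁻ q, g q := by
  have hmeas : Measurable fun p : (A × B) × (C × D) => f (p.1.1, p.2.1) * g (p.1.2, p.2.2) :=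
    (hf.comp ((measurable_fst.comp measurable_fst).prodMk
        (measurable_fst.comp measurable_snd))).mul
      (hg.comp ((measurable_snd.comp measurable_fst).prodMk
        (measurable_snd.comp measurable_snd)))
  rw [Measure.volume_eq_prod, lintegral_prod _ hmeas.aemeasurable]
  have hinner : ∀ x : A × B, (∫⁻ y : C × D, f (x.1, y.1) * g (x.2, y.2))
      = (∫⁻ c, f (x.1, c)) * ∫⁻ dd, g (x.2, dd) := by
    intro x
    rw [Measure.volume_eq_prod]
    exact lintegral_prod_mul
      ((hf.comp (measurable_const.prodMk measurable_id)).aemeasurable)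
      ((hg.comp (measurable_const.prodMk measurable_id)).aemeasurable)
  rw [lintegral_congr hinner, Measure.volume_eq_prod,
    lintegral_prod_mul hf.lintegral_prod_right'.aemeasurable
      hg.lintegral_prod_right'.aemeasurable]
  congr 1
  · rw [Measure.volume_eq_prod, lintegral_prod _ hf.aemeasurable]
  · rw [Measure.volume_eq_prod, lintegral_prod _ hg.aemeasurable]


lemma continuous_locMat :
    Continuous fun p : ({q : Fin m × Fin m // q ∈ E ∧ q.2 < q.1} → ℝ) × (Fin m → ℝ) =>
      lowerOfCoords E p.1 * Matrix.diagonal p.2 * (lowerOfCoords E p.1)ᵀ := by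
  have h1 : Continuous fun p : ({q : Fin m × Fin m // q ∈ E ∧ q.2 < q.1} → ℝ) × (Fin m → ℝ) =>
      lowerOfCoords E p.1 := (continuous_loc E).comp continuous_fst
  have h2 : Continuous fun p : ({q : Fin m × Fin m // q ∈ E ∧ q.2 < q.1} → ℝ) × (Fin m → ℝ) =>
      Matrix.diagonal p.2 := Continuous.matrix_diagonal continuous_snd
  exact (h1.matrix_mul h2).matrix_mul h1.matrix_transpose

lemma measurable_locMatInv (k l : Fin m) :
    Measurable fun p : ({q : Fin m × Fin m // q ∈ E ∧ q.2 < q.1} → ℝ) × (Fin m → ℝ) =>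
      (lowerOfCoords E p.1 * Matrix.diagonal p.2 * (lowerOfCoords E p.1)ᵀ)⁻¹ k l := by
  have hM := continuous_locMat E
  have heq : (fun p : ({q : Fin m × Fin m // q ∈ E ∧ q.2 < q.1} → ℝ) × (Fin m → ℝ) =>
        (lowerOfCoords E p.1 * Matrix.diagonal p.2 * (lowerOfCoords E p.1)ᵀ)⁻¹ k l)
      = fun p => Ring.inverse ((lowerOfCoords E p.1 * Matrix.diagonal p.2
          * (lowerOfCoords E p.1)ᵀ).det)
        * (lowerOfCoords E p.1 * Matrix.diagonal p.2 * (lowerOfCoords E p.1)ᵀ).adjugate k l := by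
    funext p
    rw [Matrix.inv_def]
    simp [Matrix.smul_apply, smul_eq_mul]
  rw [heq]
  have hdet : Measurable fun p : ({q : Fin m × Fin m // q ∈ E ∧ q.2 < q.1} → ℝ) × (Fin m → ℝ) =>
      (lowerOfCoords E p.1 * Matrix.diagonal p.2 * (lowerOfCoords E p.1)ᵀ).det :=
    hM.matrix_det.measurable
  have hinv : Measurable fun p : ({q : Fin m × Fin m // q ∈ E ∧ q.2 < q.1} → ℝ) × (Fin m → ℝ) =>
      Ring.inverse ((lowerOfCoords E p.1 * Matrix.diagonal p.2 * (lowerOfCoords E p.1)ᵀ).det) := by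
    simp only [Ring.inverse_eq_inv']
    exact hdet.inv
  exact hinv.mul
    (((continuous_apply l).comp ((continuous_apply k).comp hM.matrix_adjugate)).measurable)

lemma measurableSet_pos :
    MeasurableSet {p : ({q : Fin m × Fin m // q ∈ E ∧ q.2 < q.1} → ℝ) × (Fin m → ℝ) |
      ∀ j, 0 < p.2 j} := by
  have heq : {p : ({q : Fin m × Fin m // q ∈ E ∧ q.2 < q.1} → ℝ) × (Fin m → ℝ) |
      ∀ j, 0 < p.2 j} = ⋂ j, {p | 0 < p.2 j} := by
    ext p; simp
  rw [heq]
  exact MeasurableSet.iInter fun j =>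
    measurableSet_lt measurable_const (measurable_snd.eval)

lemma measurable_covKernel : Measurable (covKernel E U α) := by
  unfold covKernel
  refine Measurable.ite (measurableSet_pos E) ?_ measurable_const
  refine Real.measurable_exp.comp ?_
  have htr : Measurable fun p : ({q : Fin m × Fin m // q ∈ E ∧ q.2 < q.1} → ℝ) × (Fin m → ℝ) =>
      Matrix.trace ((lowerOfCoords E p.1 * Matrix.diagonal p.2 * (lowerOfCoords E p.1)ᵀ)⁻¹ * U) := by
    have heq : (fun p : ({q : Fin m × Fin m // q ∈ E ∧ q.2 < q.1} → ℝ) × (Fin m → ℝ) =>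
        Matrix.trace ((lowerOfCoords E p.1 * Matrix.diagonal p.2 * (lowerOfCoords E p.1)ᵀ)⁻¹ * U))
        = fun p => ∑ j : Fin m, ∑ k : Fin m,
          (lowerOfCoords E p.1 * Matrix.diagonal p.2 * (lowerOfCoords E p.1)ᵀ)⁻¹ j k * U k j := by
      funext p
      simp [Matrix.trace, Matrix.diag, Matrix.mul_apply]
    rw [heq]
    exact Finset.measurable_sum _ fun j _ => Finset.measurable_sum _ fun k _ =>
      (measurable_locMatInv E j k).mul_const _
  have hlog : Measurable fun p : ({q : Fin m × Fin m // q ∈ E ∧ q.2 < q.1} → ℝ) × (Fin m → ℝ) =>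
      ∑ j : Fin m, α j * Real.log (p.2 j) :=
    Finset.measurable_sum _ fun j _ => (Real.measurable_log.comp
      ((measurable_pi_apply j).comp measurable_snd)).const_mul _
  exact ((htr.add hlog).neg).div_const 2

lemma measurable_hK (j : Fin m) :
    Measurable fun w : ({q : Fin m × Fin m // q ∈ E ∧ q.2 < q.1} → ℝ) × ℝ =>
      hK E U α j w.1 w.2 := by
  unfold hK
  have hset : MeasurableSet {w : ({q : Fin m × Fin m // q ∈ E ∧ q.2 < q.1} → ℝ) × ℝ | 0 < w.2} :=
    measurableSet_lt measurable_const measurable_snd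
  refine Measurable.ite hset ?_ measurable_const
  refine Real.measurable_exp.comp ?_
  have hq : Measurable fun w : ({q : Fin m × Fin m // q ∈ E ∧ q.2 < q.1} → ℝ) × ℝ =>
      rowQuad E U w.1 j := by
    have : Continuous fun x : {q : Fin m × Fin m // q ∈ E ∧ q.2 < q.1} → ℝ =>
        rowQuad E U x j := by
      unfold rowQuad
      exact (continuous_apply j).comp ((continuous_apply j).comp
        (((continuous_loc E).matrix_mul continuous_const).matrix_mul
          (continuous_loc E).matrix_transpose))
    exact this.measurable.comp measurable_fst
  exact (((measurable_snd.inv.mul hq).add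
    ((Real.measurable_log.comp measurable_snd).const_mul _)).neg).div_const 2

section Merge

variable (i : Fin m)

/-- merge the two groups of `L`-coordinates (rows `< i` and rows `≥ i`) -/
noncomputable def mergeX
    (z : ({q : {p : Fin m × Fin m // p ∈ E ∧ p.2 < p.1} // (q.1.1 : Fin m) < i} → ℝ)
      × ({q : {p : Fin m × Fin m // p ∈ E ∧ p.2 < p.1} // ¬ (q.1.1 : Fin m) < i} → ℝ)) :
    {p : Fin m × Fin m // p ∈ E ∧ p.2 < p.1} → ℝ :=
  fun q => if h : (q.1.1 : Fin m) < i then z.1 ⟨q, h⟩ else z.2 ⟨q, h⟩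

/-- merge the two groups of `D`-coordinates -/
noncomputable def mergeY (z : ({j : Fin m // j < i} → ℝ) × ({j : Fin m // ¬ j < i} → ℝ)) :
    Fin m → ℝ :=
  fun c => if h : c < i then z.1 ⟨c, h⟩ else z.2 ⟨c, h⟩

lemma mergeX_mp : MeasurePreserving (mergeX E i) volume volume := by
  have h := (MeasureTheory.volume_preserving_piEquivPiSubtypeProd
    (fun _ : {p : Fin m × Fin m // p ∈ E ∧ p.2 < p.1} => ℝ)
    (fun q => (q.1.1 : Fin m) < i)).symm
  have heq : mergeX E i = ⇑(MeasurableEquiv.piEquivPiSubtypeProd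
      (fun _ : {p : Fin m × Fin m // p ∈ E ∧ p.2 < p.1} => ℝ)
      (fun q => (q.1.1 : Fin m) < i)).symm := by
    funext z
    funext q
    simp [mergeX, MeasurableEquiv.piEquivPiSubtypeProd, Equiv.piEquivPiSubtypeProd]
  rw [heq]
  exact h

lemma mergeY_mp : MeasurePreserving (mergeY (m := m) i) volume volume := by
  have h := (MeasureTheory.volume_preserving_piEquivPiSubtypeProd
    (fun _ : Fin m => ℝ) (fun j => j < i)).symm
  have heq : mergeY (m := m) i = ⇑(MeasurableEquiv.piEquivPiSubtypeProd
      (fun _ : Fin m => ℝ) (fun j => j < i)).symm := by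
    funext z
    funext c
    simp [mergeY, MeasurableEquiv.piEquivPiSubtypeProd, Equiv.piEquivPiSubtypeProd]
  rw [heq]
  exact h

lemma mergeX_left (z) (q : {p : Fin m × Fin m // p ∈ E ∧ p.2 < p.1}) (hq : (q.1.1 : Fin m) < i) :
    mergeX E i z q = mergeX E i (z.1, 0) q := by
  simp only [mergeX, dif_pos hq]

lemma mergeX_right (z) (q : {p : Fin m × Fin m // p ∈ E ∧ p.2 < p.1})
    (hq : ¬ (q.1.1 : Fin m) < i) :
    mergeX E i z q = mergeX E i (0, z.2) q := by
  simp only [mergeX, dif_neg hq]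

/-- rows `k < i` of the inverse matrix only depend on the first block of coordinates -/
lemma inv_merge_left (z) (k c : Fin m) (hk : k < i) :
    (lowerOfCoords E (mergeX E i z))⁻¹ k c = (lowerOfCoords E (mergeX E i (z.1, 0)))⁻¹ k c := by
  refine inv_row_dep _ _ (loc_h1 E _) (loc_h2 E _) (loc_h1 E _) (loc_h2 E _) (k : ℕ) ?_ k c le_rfl
  intro k' l' hk'
  have hk'i : k' < i := lt_of_le_of_lt (show k' ≤ k from hk') hk
  rcases lt_trichotomy k' l' with h | h | h
  · rw [loc_upper E _ h, loc_upper E _ h]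
  · cases h; rw [loc_diag, loc_diag]
  · by_cases he : (k', l') ∈ E
    · rw [loc_edge E _ ⟨he, h⟩, loc_edge E _ ⟨he, h⟩, mergeX_left E i z ⟨(k', l'), ⟨he, h⟩⟩ hk'i]
    · rw [loc_nonedge E _ h he, loc_nonedge E _ h he]

end Merge

section Factor

variable (i : Fin m)

lemma kernel_factor
    (hclosed : ∀ L : Matrix (Fin m) (Fin m) ℝ,
      (∀ i j : Fin m, i < j → L i j = 0) →
      (∀ i : Fin m, L i i = 1) →
      (∀ i j : Fin m, j < i → (i, j) ∉ E → L i j = 0) →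
      (∀ i j : Fin m, j < i → (i, j) ∉ E → L⁻¹ i j = 0))
    (z1 : ({q : {p : Fin m × Fin m // p ∈ E ∧ p.2 < p.1} // (q.1.1 : Fin m) < i} → ℝ)
      × ({q : {p : Fin m × Fin m // p ∈ E ∧ p.2 < p.1} // ¬ (q.1.1 : Fin m) < i} → ℝ))
    (z2 : ({j : Fin m // j < i} → ℝ) × ({j : Fin m // ¬ j < i} → ℝ)) :
    ENNReal.ofReal (covKernel E U α (invCoords E (mergeX E i z1), mergeY i z2))
      = (∏ j : {j : Fin m // j < i},
          ENNReal.ofReal (hK E U α j.1 (mergeX E i (z1.1, 0)) (z2.1 j)))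
        * ∏ j : {j : Fin m // ¬ j < i},
          ENNReal.ofReal (hK E U α j.1 (mergeX E i (0, z1.2)) (z2.2 j)) := by
  rw [kernel_transform E U α hclosed (mergeX E i z1) (mergeY i z2),
    ENNReal.ofReal_prod_of_nonneg (fun j _ => hK_nonneg E U α j _ _),
    ← Fintype.prod_subtype_mul_prod_subtype (fun j : Fin m => j < i)
      (fun j => ENNReal.ofReal (hK E U α j (mergeX E i z1) (mergeY i z2 j)))]
  congr 1
  · refine Finset.prod_congr rfl fun j _ => ?_
    congr 1
    have h1 : mergeY i z2 j.1 = z2.1 j := by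
      simp only [mergeY, dif_pos j.2]
    rw [h1]
    exact hK_rowdep E U α j.1 _ _ _ (fun q hq => mergeX_left E i z1 q (by rw [hq]; exact j.2))
  · refine Finset.prod_congr rfl fun j _ => ?_
    congr 1
    have h1 : mergeY i z2 j.1 = z2.2 j := by
      simp only [mergeY, dif_neg j.2]
    rw [h1]
    exact hK_rowdep E U α j.1 _ _ _ (fun q hq => mergeX_right E i z1 q (by rw [hq]; exact j.2))

lemma gmat_factor
    (hclosed : ∀ L : Matrix (Fin m) (Fin m) ℝ,
      (∀ i j : Fin m, i < j → L i j = 0) →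
      (∀ i : Fin m, L i i = 1) →
      (∀ i j : Fin m, j < i → (i, j) ∉ E → L i j = 0) →
      (∀ i j : Fin m, j < i → (i, j) ∉ E → L⁻¹ i j = 0))
    (z1 : ({q : {p : Fin m × Fin m // p ∈ E ∧ p.2 < p.1} // (q.1.1 : Fin m) < i} → ℝ)
      × ({q : {p : Fin m × Fin m // p ∈ E ∧ p.2 < p.1} // ¬ (q.1.1 : Fin m) < i} → ℝ))
    (z2 : ({j : Fin m // j < i} → ℝ) × ({j : Fin m // ¬ j < i} → ℝ))
    (k l : Fin m) (hk : k < i) (hl : l < i) :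
    (lowerOfCoords E (invCoords E (mergeX E i z1)) * Matrix.diagonal (mergeY i z2)
        * (lowerOfCoords E (invCoords E (mergeX E i z1)))ᵀ) k l
      = ∑ c : Fin m, (lowerOfCoords E (mergeX E i (z1.1, 0)))⁻¹ k c
          * mergeY i (z2.1, 0) c * (lowerOfCoords E (mergeX E i (z1.1, 0)))⁻¹ l c := by
  rw [loc_invCoords E hclosed]
  have tripleEntry : ∀ (M : Matrix (Fin m) (Fin m) ℝ) (v : Fin m → ℝ) (a b : Fin m),
      (M * Matrix.diagonal v * Mᵀ) a b = ∑ c : Fin m, M a c * v c * M b c := by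
    intro M v a b
    rw [Matrix.mul_apply]
    exact Finset.sum_congr rfl fun c _ => by rw [Matrix.mul_diagonal, Matrix.transpose_apply]
  rw [tripleEntry]
  refine Finset.sum_congr rfl fun c _ => ?_
  by_cases hck : c ≤ k
  · have hci : c < i := lt_of_le_of_lt hck hk
    rw [inv_merge_left E i z1 k c hk, inv_merge_left E i z1 l c hl,
      show mergeY i z2 c = mergeY i (z2.1, 0) c by simp only [mergeY, dif_pos hci]]
  · have hkc : k < c := not_le.mp hck
    rw [ult_inv_upper _ (loc_h1 E _) (loc_h2 E _) k c hkc,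
      ult_inv_upper _ (loc_h1 E _) (loc_h2 E _) k c hkc, zero_mul, zero_mul, zero_mul, zero_mul]

end Factor

section Assembly

variable (i : Fin m)

/-- the full measure-preserving change of variables -/
noncomputable def Xi
    (z : (({q : {p : Fin m × Fin m // p ∈ E ∧ p.2 < p.1} // (q.1.1 : Fin m) < i} → ℝ)
        × ({q : {p : Fin m × Fin m // p ∈ E ∧ p.2 < p.1} // ¬ (q.1.1 : Fin m) < i} → ℝ))
      × (({j : Fin m // j < i} → ℝ) × ({j : Fin m // ¬ j < i} → ℝ))) :
    ({q : Fin m × Fin m // q ∈ E ∧ q.2 < q.1} → ℝ) × (Fin m → ℝ) :=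
  (invCoords E (mergeX E i z.1), mergeY i z.2)

lemma Xi_mp : MeasurePreserving (Xi E i) volume volume := by
  have hΦ : MeasurePreserving
      (Prod.map (invCoords E) (id : (Fin m → ℝ) → (Fin m → ℝ)))
      (volume : Measure (({q : Fin m × Fin m // q ∈ E ∧ q.2 < q.1} → ℝ) × (Fin m → ℝ)))
      volume := by
    rw [Measure.volume_eq_prod]
    exact (invCoords_mp E).prod (MeasurePreserving.id (volume : Measure (Fin m → ℝ)))
  have hmerge : MeasurePreserving
      (Prod.map (mergeX E i) (mergeY i))
      (volume : Measure ((({q : {p : Fin m × Fin m // p ∈ E ∧ p.2 < p.1} //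
            (q.1.1 : Fin m) < i} → ℝ)
          × ({q : {p : Fin m × Fin m // p ∈ E ∧ p.2 < p.1} // ¬ (q.1.1 : Fin m) < i} → ℝ))
        × (({j : Fin m // j < i} → ℝ) × ({j : Fin m // ¬ j < i} → ℝ))))
      volume := by
    rw [Measure.volume_eq_prod, Measure.volume_eq_prod]
    exact (mergeX_mp E i).prod (mergeY_mp i)
  have hcomp := hΦ.comp hmerge
  have hfun : (Prod.map (invCoords E) (id : (Fin m → ℝ) → (Fin m → ℝ)))
      ∘ (Prod.map (mergeX E i) (mergeY i)) = Xi E i := by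
    funext z
    rfl
  rwa [hfun] at hcomp

/-- the first block factor of the transformed density -/
noncomputable def P1
    (w : ({q : {p : Fin m × Fin m // p ∈ E ∧ p.2 < p.1} // (q.1.1 : Fin m) < i} → ℝ)
      × ({j : Fin m // j < i} → ℝ)) : ℝ≥0∞ :=
  ∏ j : {j : Fin m // j < i}, ENNReal.ofReal (hK E U α j.1 (mergeX E i (w.1, 0)) (w.2 j))

/-- the second block factor of the transformed density -/
noncomputable def P2
    (w : ({q : {p : Fin m × Fin m // p ∈ E ∧ p.2 < p.1} // ¬ (q.1.1 : Fin m) < i} → ℝ)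
      × ({j : Fin m // ¬ j < i} → ℝ)) : ℝ≥0∞ :=
  ∏ j : {j : Fin m // ¬ j < i}, ENNReal.ofReal (hK E U α j.1 (mergeX E i (0, w.1)) (w.2 j))

lemma measurable_P1 : Measurable (P1 E U α i) := by
  refine Finset.measurable_prod _ fun j _ => ?_
  refine Measurable.ennreal_ofReal ?_
  have hX : Measurable fun w : ({q : {p : Fin m × Fin m // p ∈ E ∧ p.2 < p.1} //
        (q.1.1 : Fin m) < i} → ℝ) × ({j : Fin m // j < i} → ℝ) =>
      mergeX E i (w.1, 0) :=
    (mergeX_mp E i).measurable.comp (measurable_fst.prodMk measurable_const)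
  exact (measurable_hK E U α j.1).comp (hX.prodMk measurable_snd.eval)

lemma measurable_P2 : Measurable (P2 E U α i) := by
  refine Finset.measurable_prod _ fun j _ => ?_
  refine Measurable.ennreal_ofReal ?_
  have hX : Measurable fun w : ({q : {p : Fin m × Fin m // p ∈ E ∧ p.2 < p.1} //
        ¬ (q.1.1 : Fin m) < i} → ℝ) × ({j : Fin m // ¬ j < i} → ℝ) =>
      mergeX E i (0, w.1) :=
    (mergeX_mp E i).measurable.comp (measurable_const.prodMk measurable_fst)
  exact (measurable_hK E U α j.1).comp (hX.prodMk measurable_snd.eval)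

lemma kernel_factor'
    (hclosed : ∀ L : Matrix (Fin m) (Fin m) ℝ,
      (∀ i j : Fin m, i < j → L i j = 0) →
      (∀ i : Fin m, L i i = 1) →
      (∀ i j : Fin m, j < i → (i, j) ∉ E → L i j = 0) →
      (∀ i j : Fin m, j < i → (i, j) ∉ E → L⁻¹ i j = 0))
    (z : (({q : {p : Fin m × Fin m // p ∈ E ∧ p.2 < p.1} // (q.1.1 : Fin m) < i} → ℝ)
        × ({q : {p : Fin m × Fin m // p ∈ E ∧ p.2 < p.1} // ¬ (q.1.1 : Fin m) < i} → ℝ))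
      × (({j : Fin m // j < i} → ℝ) × ({j : Fin m // ¬ j < i} → ℝ))) :
    ENNReal.ofReal (covKernel E U α (Xi E i z))
      = P1 E U α i (z.1.1, z.2.1) * P2 E U α i (z.1.2, z.2.2) :=
  kernel_factor E U α i hclosed z.1 z.2

/-- master computation: transported factorized integrals -/
lemma master (W : Set (({q : Fin m × Fin m // q ∈ E ∧ q.2 < q.1} → ℝ) × (Fin m → ℝ)))
    (hW : MeasurableSet W)
    (F1 : ({q : {p : Fin m × Fin m // p ∈ E ∧ p.2 < p.1} // (q.1.1 : Fin m) < i} → ℝ)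
      × ({j : Fin m // j < i} → ℝ) → ℝ≥0∞)
    (F2 : ({q : {p : Fin m × Fin m // p ∈ E ∧ p.2 < p.1} // ¬ (q.1.1 : Fin m) < i} → ℝ)
      × ({j : Fin m // ¬ j < i} → ℝ) → ℝ≥0∞)
    (hF1 : Measurable F1) (hF2 : Measurable F2)
    (hpt : ∀ z, (W.indicator fun p => ENNReal.ofReal (covKernel E U α p)) (Xi E i z)
      = F1 (z.1.1, z.2.1) * F2 (z.1.2, z.2.2)) :
    ∫⁻ p in W, ENNReal.ofReal (covKernel E U α p)
      = (∫⁻ w, F1 w) * ∫⁻ w, F2 w := by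
  rw [← lintegral_indicator hW,
    ← (Xi_mp E i).lintegral_comp ((measurable_covKernel E U α).ennreal_ofReal.indicator hW),
    lintegral_congr hpt]
  exact lintegral_block_mul F1 F2 hF1 hF2

end Assembly

end Stmt16

/-- suppose `𝓛_G` is closed under matrix inversion, `U` is symmetric positive
definite and `α_i > |N^≺(i)| + 2` for all `i`. Under `P_{U,α}`, for every `i` the random
variables `D_{ii}` and `((LDLᵀ)_{kl})_{k,l < i}` are independent. -/
theorem stmt_16 {m : ℕ} (hm : 0 < m) (E : Finset (Fin m × Fin m))
    (hsymm : ∀ i j : Fin m, (i, j) ∈ E → (j, i) ∈ E)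
    (hirr : ∀ i : Fin m, (i, i) ∉ E)
    (hclosed : ∀ L : Matrix (Fin m) (Fin m) ℝ,
      (∀ i j : Fin m, i < j → L i j = 0) →
      (∀ i : Fin m, L i i = 1) →
      (∀ i j : Fin m, j < i → (i, j) ∉ E → L i j = 0) →
      (∀ i j : Fin m, j < i → (i, j) ∉ E → L⁻¹ i j = 0))
    (U : Matrix (Fin m) (Fin m) ℝ) (hU : U.PosDef)
    (α : Fin m → ℝ)
    (hα : ∀ i : Fin m,
      ((Finset.univ.filter (fun j : Fin m => (i, j) ∈ E ∧ j < i)).card : ℝ) + 2 < α i)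
    (i : Fin m) :
    ProbabilityTheory.IndepFun
      (fun p : ({q : Fin m × Fin m // q ∈ E ∧ q.2 < q.1} → ℝ) × (Fin m → ℝ) => p.2 i)
      (fun p : ({q : Fin m × Fin m // q ∈ E ∧ q.2 < q.1} → ℝ) × (Fin m → ℝ) =>
        fun k l : {k : Fin m // k < i} =>
          (lowerOfCoords E p.1 * Matrix.diagonal p.2 * (lowerOfCoords E p.1)ᵀ)
            (k : Fin m) (l : Fin m))
      (covPrior E U α) := by
  classical
  rw [ProbabilityTheory.indepFun_iff_measure_inter_preimage_eq_mul]
  intro s t hs ht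
  have hκm : Measurable fun p : ({q : Fin m × Fin m // q ∈ E ∧ q.2 < q.1} → ℝ) × (Fin m → ℝ) =>
      ENNReal.ofReal (covKernel E U α p) :=
    (Stmt16.measurable_covKernel E U α).ennreal_ofReal
  have hfm : Measurable fun p : ({q : Fin m × Fin m // q ∈ E ∧ q.2 < q.1} → ℝ)
      × (Fin m → ℝ) => p.2 i := measurable_snd.eval
  have hgm : Measurable fun p : ({q : Fin m × Fin m // q ∈ E ∧ q.2 < q.1} → ℝ)
      × (Fin m → ℝ) => fun k l : {k : Fin m // k < i} =>
        (lowerOfCoords E p.1 * Matrix.diagonal p.2 * (lowerOfCoords E p.1)ᵀ)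
          (k : Fin m) (l : Fin m) := by
    refine measurable_pi_lambda _ fun k => measurable_pi_lambda _ fun l => ?_
    exact ((continuous_apply (l : Fin m)).comp ((continuous_apply (k : Fin m)).comp
      (Stmt16.continuous_locMat E))).measurable
  have hB : MeasurableSet ((fun p : ({q : Fin m × Fin m // q ∈ E ∧ q.2 < q.1} → ℝ)
      × (Fin m → ℝ) => p.2 i) ⁻¹' s) := hfm hs
  have hC : MeasurableSet ((fun p : ({q : Fin m × Fin m // q ∈ E ∧ q.2 < q.1} → ℝ)
      × (Fin m → ℝ) => fun k l : {k : Fin m // k < i} =>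
        (lowerOfCoords E p.1 * Matrix.diagonal p.2 * (lowerOfCoords E p.1)ᵀ)
          (k : Fin m) (l : Fin m)) ⁻¹' t) := hgm ht
  by_cases hz : (∫⁻ q, ENNReal.ofReal (covKernel E U α q)).toReal = 0
  · have h0 : covPrior E U α = 0 := by
      unfold covPrior
      have hfun : (fun p : ({q : Fin m × Fin m // q ∈ E ∧ q.2 < q.1} → ℝ) × (Fin m → ℝ) =>
          ENNReal.ofReal (covKernel E U α p /
            (∫⁻ q, ENNReal.ofReal (covKernel E U α q)).toReal))
          = fun _ => (0 : ℝ≥0∞) := by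
        funext p
        rw [hz]
        simp
      rw [hfun]
      exact withDensity_zero
    rw [h0]
    simp
  · have hIne : (∫⁻ q, ENNReal.ofReal (covKernel E U α q)) ≠ ⊤ := by
      intro h
      exact hz (by rw [h, ENNReal.toReal_top])
    have hI0 : (∫⁻ q, ENNReal.ofReal (covKernel E U α q)) ≠ 0 := by
      intro h
      exact hz (by rw [h, ENNReal.toReal_zero])
    have hZpos : 0 < (∫⁻ q, ENNReal.ofReal (covKernel E U α q)).toReal :=
      lt_of_le_of_ne ENNReal.toReal_nonneg (Ne.symm hz)
    have hμ : ∀ W : Set (({q : Fin m × Fin m // q ∈ E ∧ q.2 < q.1} → ℝ) × (Fin m → ℝ)),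
        MeasurableSet W →
        covPrior E U α W = (∫⁻ p in W, ENNReal.ofReal (covKernel E U α p))
          * (∫⁻ q, ENNReal.ofReal (covKernel E U α q))⁻¹ := by
      intro W hW
      have hfun : (fun p : ({q : Fin m × Fin m // q ∈ E ∧ q.2 < q.1} → ℝ) × (Fin m → ℝ) =>
          ENNReal.ofReal (covKernel E U α p /
            (∫⁻ q, ENNReal.ofReal (covKernel E U α q)).toReal))
          = fun p => ENNReal.ofReal (covKernel E U α p)
            * (∫⁻ q, ENNReal.ofReal (covKernel E U α q))⁻¹ := by
        funext p
        rw [ENNReal.ofReal_div_of_pos hZpos, ENNReal.ofReal_toReal hIne, div_eq_mul_inv]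
      unfold covPrior
      rw [hfun, withDensity_apply _ hW, lintegral_mul_const _ hκm]
    -- block sets
    set Bb : Set (({q : {p : Fin m × Fin m // p ∈ E ∧ p.2 < p.1} // ¬ (q.1.1 : Fin m) < i} → ℝ)
        × ({j : Fin m // ¬ j < i} → ℝ)) :=
      (fun w : ({q : {p : Fin m × Fin m // p ∈ E ∧ p.2 < p.1} // ¬ (q.1.1 : Fin m) < i} → ℝ)
        × ({j : Fin m // ¬ j < i} → ℝ) => w.2 ⟨i, lt_irrefl i⟩) ⁻¹' s with hBbdef
    have hBb : MeasurableSet Bb := measurable_snd.eval hs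
    set Wfun : (({q : {p : Fin m × Fin m // p ∈ E ∧ p.2 < p.1} // (q.1.1 : Fin m) < i} → ℝ)
        × ({j : Fin m // j < i} → ℝ)) → ({k : Fin m // k < i} → {k : Fin m // k < i} → ℝ) :=
      fun w => fun k l => ∑ c : Fin m,
        (lowerOfCoords E (Stmt16.mergeX E i (w.1, 0)))⁻¹ (k : Fin m) c
          * Stmt16.mergeY i (w.2, 0) c
          * (lowerOfCoords E (Stmt16.mergeX E i (w.1, 0)))⁻¹ (l : Fin m) c with hWdef
    have hWm : Measurable Wfun := by
      refine measurable_pi_lambda _ fun k => measurable_pi_lambda _ fun l => ?_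
      refine Finset.measurable_sum _ fun c _ => ?_
      have hX : Measurable fun w : ({q : {p : Fin m × Fin m // p ∈ E ∧ p.2 < p.1} //
            (q.1.1 : Fin m) < i} → ℝ) × ({j : Fin m // j < i} → ℝ) =>
          Stmt16.mergeX E i (w.1, 0) :=
        (Stmt16.mergeX_mp E i).measurable.comp (measurable_fst.prodMk measurable_const)
      have h1 : Measurable fun w : ({q : {p : Fin m × Fin m // p ∈ E ∧ p.2 < p.1} //
            (q.1.1 : Fin m) < i} → ℝ) × ({j : Fin m // j < i} → ℝ) =>
          (lowerOfCoords E (Stmt16.mergeX E i (w.1, 0)))⁻¹ (k : Fin m) c :=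
        (((continuous_apply c).comp ((continuous_apply (k : Fin m)).comp
          (Stmt16.continuous_locInv E))).measurable).comp hX
      have h2 : Measurable fun w : ({q : {p : Fin m × Fin m // p ∈ E ∧ p.2 < p.1} //
            (q.1.1 : Fin m) < i} → ℝ) × ({j : Fin m // j < i} → ℝ) =>
          (lowerOfCoords E (Stmt16.mergeX E i (w.1, 0)))⁻¹ (l : Fin m) c :=
        (((continuous_apply c).comp ((continuous_apply (l : Fin m)).comp
          (Stmt16.continuous_locInv E))).measurable).comp hX
      have h3 : Measurable fun w : ({q : {p : Fin m × Fin m // p ∈ E ∧ p.2 < p.1} //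
            (q.1.1 : Fin m) < i} → ℝ) × ({j : Fin m // j < i} → ℝ) =>
          Stmt16.mergeY i (w.2, 0) c :=
        (measurable_pi_apply c).comp
          ((Stmt16.mergeY_mp i).measurable.comp (measurable_snd.prodMk measurable_const))
      exact (h1.mul h3).mul h2
    set Cb := Wfun ⁻¹' t with hCbdef
    have hCb : MeasurableSet Cb := hWm ht
    -- membership transfers
    have hmemB : ∀ z, (Stmt16.Xi E i z ∈ (fun p : ({q : Fin m × Fin m // q ∈ E ∧ q.2 < q.1} → ℝ)
        × (Fin m → ℝ) => p.2 i) ⁻¹' s) ↔ ((z.1.2, z.2.2) ∈ Bb) := by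
      intro z
      simp only [Set.mem_preimage, hBbdef]
      have h : (Stmt16.Xi E i z).2 i = z.2.2 ⟨i, lt_irrefl i⟩ := by
        simp only [Stmt16.Xi, Stmt16.mergeY, dif_neg (lt_irrefl i)]
      rw [h]
    have hmemC : ∀ z, (Stmt16.Xi E i z ∈ (fun p : ({q : Fin m × Fin m // q ∈ E ∧ q.2 < q.1} → ℝ)
        × (Fin m → ℝ) => fun k l : {k : Fin m // k < i} =>
          (lowerOfCoords E p.1 * Matrix.diagonal p.2 * (lowerOfCoords E p.1)ᵀ)
            (k : Fin m) (l : Fin m)) ⁻¹' t) ↔ ((z.1.1, z.2.1) ∈ Cb) := by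
      intro z
      simp only [Set.mem_preimage, hCbdef]
      have heqf : (fun k l : {k : Fin m // k < i} =>
          (lowerOfCoords E (Stmt16.Xi E i z).1 * Matrix.diagonal (Stmt16.Xi E i z).2
            * (lowerOfCoords E (Stmt16.Xi E i z).1)ᵀ) (k : Fin m) (l : Fin m))
          = Wfun (z.1.1, z.2.1) := by
        funext k l
        rw [hWdef]
        exact Stmt16.gmat_factor E i hclosed z.1 z.2 (k : Fin m) (l : Fin m) k.2 l.2
      rw [heqf]
    have hkf : ∀ z, ENNReal.ofReal (covKernel E U α (Stmt16.Xi E i z))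
        = Stmt16.P1 E U α i (z.1.1, z.2.1) * Stmt16.P2 E U α i (z.1.2, z.2.2) :=
      fun z => Stmt16.kernel_factor' E U α i hclosed z
    -- the four key integral factorizations
    have keyU : (∫⁻ q, ENNReal.ofReal (covKernel E U α q))
        = (∫⁻ w, Stmt16.P1 E U α i w) * ∫⁻ w, Stmt16.P2 E U α i w := by
      rw [← setLIntegral_univ]
      refine Stmt16.master E U α i Set.univ MeasurableSet.univ _ _
        (Stmt16.measurable_P1 E U α i) (Stmt16.measurable_P2 E U α i) ?_
      intro z
      rw [Set.indicator_univ]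
      exact hkf z
    have keyB : (∫⁻ p in (fun p : ({q : Fin m × Fin m // q ∈ E ∧ q.2 < q.1} → ℝ)
        × (Fin m → ℝ) => p.2 i) ⁻¹' s, ENNReal.ofReal (covKernel E U α p))
        = (∫⁻ w, Stmt16.P1 E U α i w) * ∫⁻ w, Bb.indicator (Stmt16.P2 E U α i) w := by
      refine Stmt16.master E U α i _ hB _ _ (Stmt16.measurable_P1 E U α i)
        ((Stmt16.measurable_P2 E U α i).indicator hBb) ?_
      intro z
      by_cases hzB : Stmt16.Xi E i z ∈ (fun p : ({q : Fin m × Fin m // q ∈ E ∧ q.2 < q.1} → ℝ)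
          × (Fin m → ℝ) => p.2 i) ⁻¹' s
      · rw [Set.indicator_of_mem hzB, Set.indicator_of_mem ((hmemB z).mp hzB)]
        exact hkf z
      · rw [Set.indicator_of_notMem hzB,
          Set.indicator_of_notMem (fun hh => hzB ((hmemB z).mpr hh)), mul_zero]
    have keyC : (∫⁻ p in (fun p : ({q : Fin m × Fin m // q ∈ E ∧ q.2 < q.1} → ℝ)
        × (Fin m → ℝ) => fun k l : {k : Fin m // k < i} =>
          (lowerOfCoords E p.1 * Matrix.diagonal p.2 * (lowerOfCoords E p.1)ᵀ)
            (k : Fin m) (l : Fin m)) ⁻¹' t, ENNReal.ofReal (covKernel E U α p))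
        = (∫⁻ w, Cb.indicator (Stmt16.P1 E U α i) w) * ∫⁻ w, Stmt16.P2 E U α i w := by
      refine Stmt16.master E U α i _ hC _ _ ((Stmt16.measurable_P1 E U α i).indicator hCb)
        (Stmt16.measurable_P2 E U α i) ?_
      intro z
      by_cases hzC : Stmt16.Xi E i z ∈ (fun p : ({q : Fin m × Fin m // q ∈ E ∧ q.2 < q.1} → ℝ)
          × (Fin m → ℝ) => fun k l : {k : Fin m // k < i} =>
            (lowerOfCoords E p.1 * Matrix.diagonal p.2 * (lowerOfCoords E p.1)ᵀ)
              (k : Fin m) (l : Fin m)) ⁻¹' t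
      · rw [Set.indicator_of_mem hzC, Set.indicator_of_mem ((hmemC z).mp hzC)]
        exact hkf z
      · rw [Set.indicator_of_notMem hzC,
          Set.indicator_of_notMem (fun hh => hzC ((hmemC z).mpr hh)), zero_mul]
    have keyBC : (∫⁻ p in ((fun p : ({q : Fin m × Fin m // q ∈ E ∧ q.2 < q.1} → ℝ)
        × (Fin m → ℝ) => p.2 i) ⁻¹' s ∩ (fun p : ({q : Fin m × Fin m // q ∈ E ∧ q.2 < q.1} → ℝ)
        × (Fin m → ℝ) => fun k l : {k : Fin m // k < i} =>
          (lowerOfCoords E p.1 * Matrix.diagonal p.2 * (lowerOfCoords E p.1)ᵀ)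
            (k : Fin m) (l : Fin m)) ⁻¹' t), ENNReal.ofReal (covKernel E U α p))
        = (∫⁻ w, Cb.indicator (Stmt16.P1 E U α i) w)
          * ∫⁻ w, Bb.indicator (Stmt16.P2 E U α i) w := by
      refine Stmt16.master E U α i _ (hB.inter hC) _ _
        ((Stmt16.measurable_P1 E U α i).indicator hCb)
        ((Stmt16.measurable_P2 E U α i).indicator hBb) ?_
      intro z
      by_cases hzB : Stmt16.Xi E i z ∈ (fun p : ({q : Fin m × Fin m // q ∈ E ∧ q.2 < q.1} → ℝ)
          × (Fin m → ℝ) => p.2 i) ⁻¹' s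
      · by_cases hzC : Stmt16.Xi E i z ∈ (fun p : ({q : Fin m × Fin m // q ∈ E ∧ q.2 < q.1} → ℝ)
            × (Fin m → ℝ) => fun k l : {k : Fin m // k < i} =>
              (lowerOfCoords E p.1 * Matrix.diagonal p.2 * (lowerOfCoords E p.1)ᵀ)
                (k : Fin m) (l : Fin m)) ⁻¹' t
        · rw [Set.indicator_of_mem (Set.mem_inter hzB hzC),
            Set.indicator_of_mem ((hmemC z).mp hzC), Set.indicator_of_mem ((hmemB z).mp hzB)]
          exact hkf z
        · rw [Set.indicator_of_notMem (fun hh => hzC hh.2),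
            Set.indicator_of_notMem (fun hh => hzC ((hmemC z).mpr hh)), zero_mul]
      · rw [Set.indicator_of_notMem (fun hh => hzB hh.1),
          Set.indicator_of_notMem (fun hh => hzB ((hmemB z).mpr hh)), mul_zero]
    rw [hμ _ (hB.inter hC), hμ _ hB, hμ _ hC, keyBC, keyB, keyC]
    set IV := (∫⁻ q, ENNReal.ofReal (covKernel E U α q))⁻¹ with hIVdef
    set JP := ∫⁻ w, Stmt16.P1 E U α i w with hJPdef
    set JQ := ∫⁻ w, Stmt16.P2 E U α i w with hJQdef
    set KP := ∫⁻ w, Cb.indicator (Stmt16.P1 E U α i) w with hKPdef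
    set KQ := ∫⁻ w, Bb.indicator (Stmt16.P2 E U α i) w with hKQdef
    have hone : (JP * JQ) * IV = 1 := by
      rw [← keyU, hIVdef]
      exact ENNReal.mul_inv_cancel hI0 hIne
    calc KP * KQ * IV = (KP * KQ) * 1 * IV := by rw [mul_one]
      _ = (KP * KQ) * ((JP * JQ) * IV) * IV := by rw [hone]
      _ = JP * KQ * IV * (KP * JQ * IV) := by ring
end
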